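/- arXiv:1011.5517 — 3 statements merged into one kernel-verified Lean document; each statement's English description precedes it below -/
import Mathlib

section
/- In the setting of the primal-dual forward-backward-forward algorithm — H, G real Hilbert spaces; A : H → 2^H and B : G → 2^G maximally monotone; L : H → G nonzero bounded linear; z ∈ H, r ∈ G with z in the range of x ↦ Ax + L*(B(Lx − r)); absolutely summable error sequences (a_{1,n}), (b_{1,n}), (c_{1,n}) in H and (a_{2,n}), (b_{2,n}), (c_{2,n}) in G; x_0 ∈ H, v_0 ∈ G, ε ∈ (0, 1/(‖L‖+1)), γ_n ∈ [ε, (1−ε)/‖L‖]; iteration y_{1,n} = x_n − γ_n(L*v_n + a_{1,n}), y_{2,n} = v_n + γ_n(L x_n + a_{2,n}), p_{1,n} = J_{γ_n A}(y_{1,n} + γ_n z) + b_{1,n}, p_{2,n} = J_{γ_n B^{-1}}(y_{2,n} − γ_n r) + b_{2,n}, q_{1,n} = p_{1,n} − γ_n(L*p_{2,n} + c_{1,n}), q_{2,n} = p_{2,n} + γ_n(L p_{1,n} + c_{2,n}), x_{n+1} = x_n − y_{1,n} + q_{1,n}, v_{n+1} = v_n − y_{2,n} + q_{2,n} — let x̄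 be the weak limit of (x_n) (a primal solution) and v̄ the weak limit of (v_n) (a dual solution) with z − L*v̄ ∈ Ax̄ and v̄ ∈ B(Lx̄ − r). If B^{-1} is uniformly monotone at v̄, then v_n → v̄ and p_{2,n} → v̄ in norm. -/
open scoped InnerProductSpace
open Filter Topology

/-- Monotonicity of a set-valued operator on a real inner product space. -/
def MonotoneSV {H : Type*} [NormedAddCommGroup H] [InnerProductSpace ℝ H]
    (A : H → Set H) : Prop :=
  ∀ x y u v : H, u ∈ A x → v ∈ A y → 0 ≤ ⟪x - y, u - v⟫_ℝ

/-- Maximal monotonicity of a set-valued operator on a real inner product space. -/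
def MaxMonotone {H : Type*} [NormedAddCommGroup H] [InnerProductSpace ℝ H]
    (A : H → Set H) : Prop :=
  MonotoneSV A ∧ ∀ x u : H, (∀ y v : H, v ∈ A y → (0:ℝ) ≤ ⟪x - y, u - v⟫_ℝ) → u ∈ A x

/-- `J` is the resolvent `(Id + γ A)⁻¹` of `γ A`. -/
def IsResolvent {E : Type*} [AddCommGroup E] [Module ℝ E]
    (γ : ℝ) (A : E → Set E) (J : E → E) : Prop :=
  ∀ w, ∃ u ∈ A (J w), w = J w + γ • u

/-- Weak convergence of a sequence in an inner product space. -/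
def WeakTendsto {H : Type*} [NormedAddCommGroup H] [InnerProductSpace ℝ H]
    (x : ℕ → H) (l : H) : Prop :=
  ∀ w : H, Filter.Tendsto (fun n => ⟪x n, w⟫_ℝ) Filter.atTop (nhds ⟪l, w⟫_ℝ)

/-- `M` is uniformly monotone at `x`: there is an increasing function `φ` on `[0,∞)`
vanishing only at `0` such that `⟪x - y, u - v⟫ ≥ φ (‖x - y‖)` for every `u ∈ M x` and
every `(y, v)` in the graph of `M`. -/
def UnifMonoAt {H : Type*} [NormedAddCommGroup H] [InnerProductSpace ℝ H]
    (M : H → Set H) (x : H) : Prop :=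
  ∃ φ : ℝ → ℝ, (∀ s t : ℝ, 0 ≤ s → s ≤ t → φ s ≤ φ t) ∧ φ 0 = 0 ∧
    (∀ t : ℝ, 0 < t → 0 < φ t) ∧
    ∀ u ∈ M x, ∀ y v, v ∈ M y → φ ‖x - y‖ ≤ ⟪x - y, u - v⟫_ℝ


lemma aux_expand {H : Type*} [NormedAddCommGroup H] [InnerProductSpace ℝ H]
    (a u w : H) (t : ℝ) :
    ‖a - u + t • w‖^2 = ‖a‖^2 + ‖u‖^2 + t^2*‖w‖^2 - 2*⟪a,u⟫_ℝ + 2*t*⟪a,w⟫_ℝ - 2*t*⟪u,w⟫_ℝ := by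
  have h : ∀ z : H, ‖z‖^2 = ⟪z,z⟫_ℝ := fun z => (real_inner_self_eq_norm_sq z).symm
  simp only [h, inner_add_left, inner_add_right, inner_sub_left, inner_sub_right,
    real_inner_smul_left, real_inner_smul_right, real_inner_comm u a, real_inner_comm w a,
    real_inner_comm w u]
  ring

lemma aux_cs (a b c d : ℝ) : a*c + b*d ≤ Real.sqrt (a^2+b^2) * Real.sqrt (c^2+d^2) := by
  rcases le_or_gt (a*c+b*d) 0 with h | h
  · exact h.trans (mul_nonneg (Real.sqrt_nonneg _) (Real.sqrt_nonneg _))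
  · rw [← Real.sqrt_mul (by positivity)]
    refine (Real.le_sqrt h.le (by positivity)).mpr ?_
    nlinarith [sq_nonneg (a*d - b*c)]

lemma aux_l2tri (a b c d : ℝ) :
    Real.sqrt ((a+c)^2+(b+d)^2) ≤ Real.sqrt (a^2+b^2) + Real.sqrt (c^2+d^2) := by
  have h1 := aux_cs a b c d
  have h2 : (a+c)^2+(b+d)^2 ≤ (Real.sqrt (a^2+b^2) + Real.sqrt (c^2+d^2))^2 := by
    have e1 : Real.sqrt (a^2+b^2) ^ 2 = a^2+b^2 := Real.sq_sqrt (by positivity)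
    have e2 : Real.sqrt (c^2+d^2) ^ 2 = c^2+d^2 := Real.sq_sqrt (by positivity)
    nlinarith
  calc Real.sqrt ((a+c)^2+(b+d)^2) ≤ Real.sqrt ((Real.sqrt (a^2+b^2) + Real.sqrt (c^2+d^2))^2) :=
        Real.sqrt_le_sqrt h2
    _ = _ := Real.sqrt_sq (by positivity)

lemma aux_sq_le {a b : ℝ} (ha : 0 ≤ a) (h : a^2 ≤ b^2) (hb : 0 ≤ b) : a ≤ b := by nlinarith

/-- squared-triangle step for the perturbed Fejér recursion -/
lemma aux_sqrt_step {A1 B1 d K s1 s2 S α' β' : ℝ}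
    (hA1 : 0 ≤ A1) (hB1 : 0 ≤ B1) (hdK : 0 ≤ d + K) (hs1 : 0 ≤ s1) (hs2 : 0 ≤ s2)
    (hS : 0 ≤ S) (hα0 : 0 ≤ α') (hβ0 : 0 ≤ β')
    (h1 : A1^2 + B1^2 + S ≤ (d+K)^2)
    (hα : α' ≤ A1 + s1) (hβ : β' ≤ B1 + s2) :
    α'^2 + β'^2 + S ≤ (d + (K + (s1 + s2)))^2 := by
  have hR : Real.sqrt (A1^2 + B1^2) ≤ d + K := by
    refine aux_sq_le (Real.sqrt_nonneg _) ?_ hdK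
    rw [Real.sq_sqrt (by positivity)]
    linarith
  have htri : Real.sqrt ((A1+s1)^2 + (B1+s2)^2)
      ≤ Real.sqrt (A1^2+B1^2) + Real.sqrt (s1^2+s2^2) := aux_l2tri _ _ _ _
  have hsσ : Real.sqrt (s1^2+s2^2) ≤ s1 + s2 := by
    refine aux_sq_le (Real.sqrt_nonneg _) ?_ (by linarith)
    rw [Real.sq_sqrt (by positivity)]
    nlinarith [mul_nonneg hs1 hs2]
  have h2 : Real.sqrt ((A1+s1)^2 + (B1+s2)^2) ≤ (d + K) + (s1 + s2) := by
    have h3 := Real.sqrt_nonneg (A1^2+B1^2)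
    linarith
  have h4 : (A1+s1)^2 + (B1+s2)^2 ≤ ((d+K) + (s1+s2))^2 := by
    have h5 : (A1+s1)^2 + (B1+s2)^2 = Real.sqrt ((A1+s1)^2 + (B1+s2)^2)^2 :=
      (Real.sq_sqrt (by positivity)).symm
    rw [h5]
    exact pow_le_pow_left₀ (Real.sqrt_nonneg _) h2 2
  -- refine: keep S
  have hsq : Real.sqrt ((A1+s1)^2+(B1+s2)^2)^2 = (A1+s1)^2+(B1+s2)^2 :=
    Real.sq_sqrt (by positivity)
  have hQ : (A1+s1)^2 + (B1+s2)^2 + S ≤ ((d+K) + (s1+s2))^2 := by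
    have e1 : (A1+s1)^2 = A1^2 + 2*A1*s1 + s1^2 := by ring
    have e2 : (B1+s2)^2 = B1^2 + 2*B1*s2 + s2^2 := by ring
    have b1 : A1 ≤ d + K := by nlinarith [sq_nonneg B1]
    have b2 : B1 ≤ d + K := by nlinarith [sq_nonneg A1]
    nlinarith [mul_nonneg hs1 hs2, mul_le_mul_of_nonneg_right b1 hs1,
      mul_le_mul_of_nonneg_right b2 hs2]
  have hαβ : α'^2 + β'^2 ≤ (A1+s1)^2 + (B1+s2)^2 := by
    have := pow_le_pow_left₀ hα0 hα 2
    have := pow_le_pow_left₀ hβ0 hβ 2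
    linarith
  linarith

/-- Summable error quasi-Fejér: boundedness and vanishing of the slack. -/
lemma aux_fejer (D U ρ : ℕ → ℝ) (c : ℝ) (hc : 0 < c)
    (hD0 : ∀ n, 0 ≤ D n) (hU0 : ∀ n, 0 ≤ U n) (hρ0 : ∀ n, 0 ≤ ρ n)
    (hρs : Summable ρ)
    (hrec : ∀ n, D (n+1)^2 + c * U n ≤ (D n + ρ n)^2) :
    (∀ n, D n ≤ D 0 + ∑' k, ρ k) ∧ Filter.Tendsto U Filter.atTop (nhds 0) := by
  have hT0 : 0 ≤ ∑' k, ρ k := tsum_nonneg hρ0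
  set T := ∑' k, ρ k with hT
  set C := D 0 + T with hC
  have hstep : ∀ n, D (n+1) ≤ D n + ρ n := by
    intro n
    refine aux_sq_le (hD0 _) ?_ (by linarith [hD0 n, hρ0 n])
    nlinarith [hrec n, mul_nonneg hc.le (hU0 n)]
  have hpart : ∀ n, D n ≤ D 0 + ∑ k ∈ Finset.range n, ρ k := by
    intro n
    induction n with
    | zero => simp
    | succ m ih =>
        rw [Finset.sum_range_succ]
        linarith [hstep m, ih]
  have hDb : ∀ n, D n ≤ C := by
    intro n
    refine (hpart n).trans ?_
    have := Summable.sum_le_tsum (Finset.range n) (fun i _ => hρ0 i) hρs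
    rw [hC]; linarith
  have hC0 : 0 ≤ C := le_trans (hD0 0) (hDb 0)
  have hρle : ∀ n, ρ n ≤ T := fun n => Summable.le_tsum hρs n (fun i _ => hρ0 i)
  set τ : ℕ → ℝ := fun n => 2*C*ρ n + ρ n^2 with hτ
  have hτ0 : ∀ n, 0 ≤ τ n := fun n => by
    simp only [hτ]
    have := hρ0 n
    nlinarith [sq_nonneg (ρ n), hC0]
  have hτs : Summable τ := by
    refine Summable.of_nonneg_of_le hτ0 (fun n => ?_) (hρs.mul_left (2*C + T))
    simp only [hτ]
    nlinarith [hρ0 n, hρle n]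
  have hτT : ∀ n, ∑ k ∈ Finset.range n, τ k ≤ ∑' k, τ k := fun n =>
    Summable.sum_le_tsum _ (fun i _ => hτ0 i) hτs
  have hQ : ∀ n, c * (∑ k ∈ Finset.range n, U k) + D n^2
      ≤ D 0^2 + ∑ k ∈ Finset.range n, τ k := by
    intro n
    induction n with
    | zero => simp
    | succ m ih =>
        rw [Finset.sum_range_succ, Finset.sum_range_succ]
        have h1 := hrec m
        have h2 : (D m + ρ m)^2 ≤ D m^2 + τ m := by
          simp only [hτ]
          nlinarith [hDb m, hρ0 m]
        nlinarith
  have hUs : Summable U := by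
    refine summable_of_sum_range_le hU0 (f := U) (c := (D 0^2 + ∑' k, τ k)/c) (fun n => ?_)
    have h1 := hQ n
    have h2 := hτT n
    have h3 := sq_nonneg (D n)
    rw [le_div_iff₀ hc]
    nlinarith
  exact ⟨hDb, hUs.tendsto_atTop_zero⟩

/-- from φ-bound to convergence -/
lemma aux_unif (φ : ℝ → ℝ) (hmono : ∀ s t : ℝ, 0 ≤ s → s ≤ t → φ s ≤ φ t)
    (hpos : ∀ t : ℝ, 0 < t → 0 < φ t)
    (g W : ℕ → ℝ) (hg0 : ∀ n, 0 ≤ g n) (hb : ∀ n, φ (g n) ≤ W n)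
    (hW : Filter.Tendsto W Filter.atTop (nhds 0)) :
    Filter.Tendsto g Filter.atTop (nhds 0) := by
  rw [Metric.tendsto_atTop]
  intro δ hδ
  have hφδ : 0 < φ δ := hpos δ hδ
  have hev : ∀ᶠ n in Filter.atTop, W n < φ δ := hW.eventually_lt_const hφδ
  obtain ⟨N, hN⟩ := Filter.eventually_atTop.mp hev
  refine ⟨N, fun n hn => ?_⟩
  rw [Real.dist_eq, sub_zero, abs_of_nonneg (hg0 n)]
  by_contra hcon
  push_neg at hcon
  have : φ δ ≤ φ (g n) := hmono δ (g n) hδ.le hcon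
  linarith [hb n, hN n hn]

set_option maxHeartbeats 16000000 in
theorem stmt_15 {H G : Type*} [NormedAddCommGroup H] [InnerProductSpace ℝ H] [CompleteSpace H]
    [NormedAddCommGroup G] [InnerProductSpace ℝ G] [CompleteSpace G]
    (A : H → Set H) (hA : MaxMonotone A)
    (B : G → Set G) (hB : MaxMonotone B)
    (L : H →L[ℝ] G) (hL : L ≠ 0) (z : H) (r : G)
    (hran : ∃ x : H, ∃ u ∈ A x, ∃ w ∈ B (L x - r),
      z = u + ContinuousLinearMap.adjoint L w)
    (a₁ b₁ c₁ : ℕ → H) (a₂ b₂ c₂ : ℕ → G)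
    (ha₁ : Summable fun n => ‖a₁ n‖) (hb₁ : Summable fun n => ‖b₁ n‖)
    (hc₁ : Summable fun n => ‖c₁ n‖)
    (ha₂ : Summable fun n => ‖a₂ n‖) (hb₂ : Summable fun n => ‖b₂ n‖)
    (hc₂ : Summable fun n => ‖c₂ n‖)
    (ε : ℝ) (hε : ε ∈ Set.Ioo (0:ℝ) (1 / (‖L‖ + 1)))
    (γ : ℕ → ℝ) (hγ : ∀ n, γ n ∈ Set.Icc ε ((1 - ε) / ‖L‖))
    (JA : ℕ → H → H) (hJA : ∀ n, IsResolvent (γ n) A (JA n))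
    (JB : ℕ → G → G) (hJB : ∀ n, IsResolvent (γ n) (fun w => {g : G | w ∈ B g}) (JB n))
    (x y₁ p₁ q₁ : ℕ → H) (v y₂ p₂ q₂ : ℕ → G)
    (hy₁ : ∀ n, y₁ n = x n - γ n • (ContinuousLinearMap.adjoint L (v n) + a₁ n))
    (hy₂ : ∀ n, y₂ n = v n + γ n • (L (x n) + a₂ n))
    (hp₁ : ∀ n, p₁ n = JA n (y₁ n + γ n • z) + b₁ n)
    (hp₂ : ∀ n, p₂ n = JB n (y₂ n - γ n • r) + b₂ n)
    (hq₁ : ∀ n, q₁ n = p₁ n - γ n • (ContinuousLinearMap.adjoint L (p₂ n) + c₁ n))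
    (hq₂ : ∀ n, q₂ n = p₂ n + γ n • (L (p₁ n) + c₂ n))
    (hx : ∀ n, x (n + 1) = x n - y₁ n + q₁ n)
    (hv : ∀ n, v (n + 1) = v n - y₂ n + q₂ n)
    (xb : H) (vb : G)
    (hxweak : WeakTendsto x xb) (hvweak : WeakTendsto v vb)
    (hprimal : ∃ u ∈ A xb, ∃ w ∈ B (L xb - r), z = u + ContinuousLinearMap.adjoint L w)
    (hdual : ∃ s : H, z - ContinuousLinearMap.adjoint L vb ∈ A s ∧
      ∃ g : G, vb ∈ B g ∧ -r = -(L s) + g)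
    (hkt₁ : z - ContinuousLinearMap.adjoint L vb ∈ A xb)
    (hkt₂ : vb ∈ B (L xb - r))
    (hunif : UnifMonoAt (fun w => {g : G | w ∈ B g}) vb) :
    Filter.Tendsto v Filter.atTop (nhds vb) ∧
      Filter.Tendsto p₂ Filter.atTop (nhds vb) := by
  set L' := ContinuousLinearMap.adjoint L with hL'
  have hLn : (0:ℝ) < ‖L‖ := norm_pos_iff.mpr hL
  have hL'n : ‖L'‖ = ‖L‖ := LinearIsometryEquiv.norm_map _ L
  have hε0 : (0:ℝ) < ε := hε.1
  have hε1 : ε < 1 := by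
    have h2 := hε.2
    have : 1 / (‖L‖ + 1) ≤ 1 := by
      rw [div_le_one (by linarith)]; linarith
    linarith
  have hγlb : ∀ n, ε ≤ γ n := fun n => (hγ n).1
  have hγpos : ∀ n, 0 < γ n := fun n => lt_of_lt_of_le hε0 (hγlb n)
  have hγL : ∀ n, γ n * ‖L‖ ≤ 1 - ε := fun n => (le_div_iff₀ hLn).mp (hγ n).2
  have hγub : ∀ n, γ n ≤ (1 - ε) / ‖L‖ := fun n => (hγ n).2
  -- exakt resolvent outputs
  set P1 : ℕ → H := fun n => JA n (y₁ n + γ n • z) with hP1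
  set P2 : ℕ → G := fun n => JB n (y₂ n - γ n • r) with hP2
  choose uA hAmem hAeq using fun n => hJA n (y₁ n + γ n • z)
  choose uB hBmem hBeq using fun n => hJB n (y₂ n - γ n • r)
  -- hBmem n : P2 n ∈ B (uB n)
  set u1 : ℕ → H := fun n => x n - P1 n with hu1
  set u2 : ℕ → G := fun n => v n - P2 n with hu2
  -- error vectors
  set ξ1 : ℕ → H := fun n => γ n • a₁ n + b₁ n - γ n • L' (b₂ n) - γ n • c₁ n with hξ1
  set ξ2 : ℕ → G := fun n => -(γ n • a₂ n) + b₂ n + γ n • L (b₁ n) + γ n • c₂ n with hξ2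
  -- update identities
  have hX : ∀ n, x (n+1) = P1 n + γ n • L' (u2 n) + ξ1 n := by
    intro n
    rw [hx n, hq₁ n, hp₁ n, hp₂ n,
      show JA n (y₁ n + γ n • z) = P1 n from rfl,
      show JB n (y₂ n - γ n • r) = P2 n from rfl, hy₁ n]
    simp only [hu1, hu2, hξ1, map_add, map_sub, smul_add, smul_sub]
    abel
  have hV : ∀ n, v (n+1) = P2 n - γ n • L (u1 n) + ξ2 n := by
    intro n
    rw [hv n, hq₂ n, hp₂ n, hp₁ n,
      show JA n (y₁ n + γ n • z) = P1 n from rfl,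
      show JB n (y₂ n - γ n • r) = P2 n from rfl, hy₂ n]
    simp only [hu1, hu2, hξ2, map_add, map_sub, smul_add, smul_sub]
    abel
  -- resolvent relations rearranged
  have hA_id : ∀ n, γ n • ((z - L' vb) - uA n)
      = γ n • L' (v n) - γ n • L' vb + γ n • a₁ n - u1 n := by
    intro n
    have huA : γ n • uA n = (y₁ n + γ n • z) - P1 n := by
      rw [hAeq n]; abel
    rw [smul_sub, huA, hy₁ n]
    simp only [hu1, smul_add, smul_sub]
    abel
  have hB_id : ∀ n, γ n • ((L xb - r) - uB n)
      = -(γ n • L (x n)) + γ n • L xb - γ n • a₂ n - u2 n := by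
    intro n
    have huB : γ n • uB n = (y₂ n - γ n • r) - P2 n := by
      rw [hBeq n]; abel
    rw [smul_sub, huB, hy₂ n]
    simp only [hu2, smul_add, smul_sub]
    abel
  -- the key pairing identity
  have E1 : ∀ n, γ n * ⟪xb - P1 n, (z - L' vb) - uA n⟫_ℝ
      + γ n * ⟪vb - P2 n, (L xb - r) - uB n⟫_ℝ
      = γ n * ⟪L (u1 n), v n - vb⟫_ℝ - γ n * ⟪L (x n - xb), u2 n⟫_ℝ
        + γ n * ⟪xb - P1 n, a₁ n⟫_ℝ - γ n * ⟪vb - P2 n, a₂ n⟫_ℝ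
        - ‖u1 n‖^2 + ⟪x n - xb, u1 n⟫_ℝ - ‖u2 n‖^2 + ⟪v n - vb, u2 n⟫_ℝ := by
    intro n
    rw [← real_inner_smul_right, ← real_inner_smul_right, hA_id n, hB_id n]
    have hxbP1 : xb - P1 n = u1 n - (x n - xb) := by simp only [hu1]; abel
    have hvbP2 : vb - P2 n = u2 n - (v n - vb) := by simp only [hu2]; abel
    rw [hxbP1, hvbP2]
    simp only [inner_sub_left, inner_sub_right, inner_add_right, inner_neg_right,
      real_inner_smul_right, map_sub, hL', ContinuousLinearMap.adjoint_inner_right,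
      real_inner_self_eq_norm_sq]
    have c1 : ∀ a : G, ⟪a, L (x n)⟫_ℝ = ⟪L (x n), a⟫_ℝ := fun a => real_inner_comm _ a
    have c2 : ∀ a : G, ⟪a, L xb⟫_ℝ = ⟪L xb, a⟫_ℝ := fun a => real_inner_comm _ a
    simp only [c1, c2, map_sub]
    ring
  -- monotonicity
  have hMA : ∀ n, 0 ≤ ⟪xb - P1 n, (z - L' vb) - uA n⟫_ℝ :=
    fun n => hA.1 xb (P1 n) (z - L' vb) (uA n) hkt₁ (hAmem n)
  have hMB : ∀ n, 0 ≤ ⟪vb - P2 n, (L xb - r) - uB n⟫_ℝ := by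
    intro n
    have h := hB.1 (L xb - r) (uB n) vb (P2 n) hkt₂ (hBmem n)
    rwa [real_inner_comm] at h
  have star : ∀ n, ‖u1 n‖^2 + ‖u2 n‖^2 - γ n * ⟪L (u1 n), v n - vb⟫_ℝ
      + γ n * ⟪L (x n - xb), u2 n⟫_ℝ - γ n * ⟪xb - P1 n, a₁ n⟫_ℝ
      + γ n * ⟪vb - P2 n, a₂ n⟫_ℝ
      ≤ ⟪x n - xb, u1 n⟫_ℝ + ⟪v n - vb, u2 n⟫_ℝ := by
    intro n
    have h : 0 ≤ γ n * ⟪xb - P1 n, (z - L' vb) - uA n⟫_ℝ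
        + γ n * ⟪vb - P2 n, (L xb - r) - uB n⟫_ℝ :=
      add_nonneg (mul_nonneg (hγpos n).le (hMA n)) (mul_nonneg (hγpos n).le (hMB n))
    rw [E1 n] at h
    linarith
  -- expansions
  have EX1 : ∀ n, ‖x (n+1) - ξ1 n - xb‖^2
      = ‖x n - xb‖^2 + ‖u1 n‖^2 + (γ n)^2 * ‖L' (u2 n)‖^2
        - 2*⟪x n - xb, u1 n⟫_ℝ + 2*(γ n)*⟪L (x n - xb), u2 n⟫_ℝ
        - 2*(γ n)*⟪L (u1 n), u2 n⟫_ℝ := by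
    intro n
    have hid : x (n+1) - ξ1 n - xb = (x n - xb) - u1 n + γ n • L' (u2 n) := by
      rw [hX n]; simp only [hu1]; abel
    rw [hid, aux_expand]
    simp only [hL', ContinuousLinearMap.adjoint_inner_right]
  have EX2 : ∀ n, ‖v (n+1) - ξ2 n - vb‖^2
      = ‖v n - vb‖^2 + ‖u2 n‖^2 + (γ n)^2 * ‖L (u1 n)‖^2
        - 2*⟪v n - vb, u2 n⟫_ℝ - 2*(γ n)*⟪L (u1 n), v n - vb⟫_ℝ
        + 2*(γ n)*⟪L (u1 n), u2 n⟫_ℝ := by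
    intro n
    have hid : v (n+1) - ξ2 n - vb = (v n - vb) - u2 n + (-(γ n)) • L (u1 n) := by
      rw [hV n]; simp only [hu2, neg_smul]; abel
    rw [hid, aux_expand,
      real_inner_comm (v n - vb) (L (u1 n)), real_inner_comm (u2 n) (L (u1 n))]
    ring
  have hLu1 : ∀ n, ‖L (u1 n)‖ ≤ ‖L‖ * ‖u1 n‖ := fun n => L.le_opNorm _
  have hLu2 : ∀ n, ‖L' (u2 n)‖ ≤ ‖L‖ * ‖u2 n‖ := fun n => by
    have := L'.le_opNorm (u2 n); rwa [hL'n] at this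
  -- key decrease inequality
  have KEY : ∀ n, ‖x (n+1) - ξ1 n - xb‖^2 + ‖v (n+1) - ξ2 n - vb‖^2
      ≤ ‖x n - xb‖^2 + ‖v n - vb‖^2 - (ε*(2-ε)) * (‖u1 n‖^2 + ‖u2 n‖^2)
        + 2*(γ n)*⟪xb - P1 n, a₁ n⟫_ℝ - 2*(γ n)*⟪vb - P2 n, a₂ n⟫_ℝ := by
    intro n
    have e1 := EX1 n; have e2 := EX2 n; have st := star n
    have hb1 : (γ n)^2 * ‖L (u1 n)‖^2 ≤ (1-ε)^2 * ‖u1 n‖^2 := by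
      have h : γ n * ‖L (u1 n)‖ ≤ (1-ε) * ‖u1 n‖ :=
        calc γ n * ‖L (u1 n)‖ ≤ γ n * (‖L‖ * ‖u1 n‖) :=
              mul_le_mul_of_nonneg_left (hLu1 n) (hγpos n).le
          _ = (γ n * ‖L‖) * ‖u1 n‖ := by ring
          _ ≤ (1-ε) * ‖u1 n‖ := mul_le_mul_of_nonneg_right (hγL n) (norm_nonneg _)
      calc (γ n)^2 * ‖L (u1 n)‖^2 = (γ n * ‖L (u1 n)‖)^2 := by ring
        _ ≤ ((1-ε) * ‖u1 n‖)^2 := pow_le_pow_left₀ (mul_nonneg (hγpos n).le (norm_nonneg _)) h 2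
        _ = (1-ε)^2 * ‖u1 n‖^2 := by ring
    have hb2 : (γ n)^2 * ‖L' (u2 n)‖^2 ≤ (1-ε)^2 * ‖u2 n‖^2 := by
      have h : γ n * ‖L' (u2 n)‖ ≤ (1-ε) * ‖u2 n‖ :=
        calc γ n * ‖L' (u2 n)‖ ≤ γ n * (‖L‖ * ‖u2 n‖) :=
              mul_le_mul_of_nonneg_left (hLu2 n) (hγpos n).le
          _ = (γ n * ‖L‖) * ‖u2 n‖ := by ring
          _ ≤ (1-ε) * ‖u2 n‖ := mul_le_mul_of_nonneg_right (hγL n) (norm_nonneg _)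
      calc (γ n)^2 * ‖L' (u2 n)‖^2 = (γ n * ‖L' (u2 n)‖)^2 := by ring
        _ ≤ ((1-ε) * ‖u2 n‖)^2 := pow_le_pow_left₀ (mul_nonneg (hγpos n).le (norm_nonneg _)) h 2
        _ = (1-ε)^2 * ‖u2 n‖^2 := by ring
    rw [e1, e2]
    linarith [st, hb1, hb2]
  -- scalar machinery
  set Γ : ℝ := (1-ε)/‖L‖ with hΓdef
  set η : ℕ → ℝ := fun n => Γ * (‖a₁ n‖ + ‖a₂ n‖) with hηdef
  set K : ℕ → ℝ := fun n => η n / ε with hKdef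
  have hΓ0 : 0 ≤ Γ := div_nonneg (by linarith) hLn.le
  have hη0 : ∀ n, 0 ≤ η n := fun n => mul_nonneg hΓ0 (by positivity)
  have hK0 : ∀ n, 0 ≤ K n := fun n => div_nonneg (hη0 n) hε0.le
  have hηK : ∀ n, η n = ε * K n := by
    intro n; simp only [hKdef]; field_simp
  have hγa : ∀ n, γ n * ‖a₁ n‖ + γ n * ‖a₂ n‖ ≤ η n := by
    intro n
    have h1 : γ n * ‖a₁ n‖ ≤ Γ * ‖a₁ n‖ := mul_le_mul_of_nonneg_right (hγub n) (norm_nonneg _)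
    have h2 : γ n * ‖a₂ n‖ ≤ Γ * ‖a₂ n‖ := mul_le_mul_of_nonneg_right (hγub n) (norm_nonneg _)
    simp only [hηdef]; nlinarith
  set D : ℕ → ℝ := fun n => Real.sqrt (‖x n - xb‖^2 + ‖v n - vb‖^2) with hDdef
  have hD0 : ∀ n, 0 ≤ D n := fun n => Real.sqrt_nonneg _
  have hDsq : ∀ n, D n^2 = ‖x n - xb‖^2 + ‖v n - vb‖^2 := fun n => Real.sq_sqrt (by positivity)
  have hαD : ∀ n, ‖x n - xb‖ ≤ D n := by
    intro n
    refine aux_sq_le (norm_nonneg _) ?_ (hD0 n)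
    rw [hDsq n]; nlinarith [sq_nonneg ‖v n - vb‖]
  have hβD : ∀ n, ‖v n - vb‖ ≤ D n := by
    intro n
    refine aux_sq_le (norm_nonneg _) ?_ (hD0 n)
    rw [hDsq n]; nlinarith [sq_nonneg ‖x n - xb‖]
  have hbP1 : ∀ n, ‖xb - P1 n‖ ≤ ‖u1 n‖ + ‖x n - xb‖ := by
    intro n
    have h : xb - P1 n = u1 n - (x n - xb) := by simp only [hu1]; abel
    rw [h]; exact norm_sub_le _ _
  have hbP2 : ∀ n, ‖vb - P2 n‖ ≤ ‖u2 n‖ + ‖v n - vb‖ := by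
    intro n
    have h : vb - P2 n = u2 n - (v n - vb) := by simp only [hu2]; abel
    rw [h]; exact norm_sub_le _ _
  have hEb : ∀ n, 2*(γ n)*⟪xb - P1 n, a₁ n⟫_ℝ - 2*(γ n)*⟪vb - P2 n, a₂ n⟫_ℝ
      ≤ 2*(γ n)*(‖u1 n‖ + ‖x n - xb‖)*‖a₁ n‖ + 2*(γ n)*(‖u2 n‖ + ‖v n - vb‖)*‖a₂ n‖ := by
    intro n
    have h1 : ⟪xb - P1 n, a₁ n⟫_ℝ ≤ (‖u1 n‖ + ‖x n - xb‖)*‖a₁ n‖ :=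
      (real_inner_le_norm _ _).trans (mul_le_mul_of_nonneg_right (hbP1 n) (norm_nonneg _))
    have h2 : -⟪vb - P2 n, a₂ n⟫_ℝ ≤ (‖u2 n‖ + ‖v n - vb‖)*‖a₂ n‖ := by
      calc -⟪vb - P2 n, a₂ n⟫_ℝ = ⟪vb - P2 n, -(a₂ n)⟫_ℝ := by rw [inner_neg_right]
        _ ≤ ‖vb - P2 n‖ * ‖-(a₂ n)‖ := real_inner_le_norm _ _
        _ = ‖vb - P2 n‖ * ‖a₂ n‖ := by rw [norm_neg]
        _ ≤ (‖u2 n‖ + ‖v n - vb‖)*‖a₂ n‖ := mul_le_mul_of_nonneg_right (hbP2 n) (norm_nonneg _)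
    nlinarith [hγpos n]
  have habs : ∀ n, 2*(γ n)*‖u1 n‖*‖a₁ n‖ + 2*(γ n)*‖u2 n‖*‖a₂ n‖
      ≤ ε * (‖u1 n‖^2 + ‖u2 n‖^2) + ε * (K n)^2 := by
    intro n
    have key : ε * (2*(γ n)*‖u1 n‖*‖a₁ n‖ + 2*(γ n)*‖u2 n‖*‖a₂ n‖)
        ≤ ε * (ε * (‖u1 n‖^2 + ‖u2 n‖^2) + ε * (K n)^2) := by
      have h1 : (γ n * ‖a₁ n‖)^2 + (γ n * ‖a₂ n‖)^2 ≤ (η n)^2 := by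
        have h := hγa n
        have p1 : 0 ≤ γ n * ‖a₁ n‖ := mul_nonneg (hγpos n).le (norm_nonneg _)
        have p2 : 0 ≤ γ n * ‖a₂ n‖ := mul_nonneg (hγpos n).le (norm_nonneg _)
        nlinarith
      have h2 := sq_nonneg (ε*‖u1 n‖ - γ n * ‖a₁ n‖)
      have h3 := sq_nonneg (ε*‖u2 n‖ - γ n * ‖a₂ n‖)
      have h4 : (η n)^2 = ε^2 * (K n)^2 := by rw [hηK n]; ring
      nlinarith
    exact le_of_mul_le_mul_left (by linarith [key]) hε0
  have step1 : ∀ n, ‖x (n+1) - ξ1 n - xb‖^2 + ‖v (n+1) - ξ2 n - vb‖^2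
      + (ε*(1-ε)) * (‖u1 n‖^2 + ‖u2 n‖^2) ≤ (D n + K n)^2 := by
    intro n
    have k := KEY n
    have eb := hEb n
    have ab := habs n
    have hαa : 2*(γ n)*‖x n - xb‖*‖a₁ n‖ + 2*(γ n)*‖v n - vb‖*‖a₂ n‖ ≤ 2*(D n)*(η n) := by
      have h1 := mul_le_mul_of_nonneg_right (hαD n)
        (mul_nonneg (hγpos n).le (norm_nonneg (a₁ n)))
      have h2 := mul_le_mul_of_nonneg_right (hβD n)
        (mul_nonneg (hγpos n).le (norm_nonneg (a₂ n)))
      have h3 := mul_le_mul_of_nonneg_left (hγa n) (by linarith [hD0 n] : (0:ℝ) ≤ 2*D n)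
      nlinarith
    have hund : 2*(D n)*(η n) ≤ 2*(D n)*(K n) := by
      have hηleK : η n ≤ K n := by
        rw [hηK n]; nlinarith [hK0 n]
      have := mul_le_mul_of_nonneg_left hηleK (by linarith [hD0 n] : (0:ℝ) ≤ 2*D n)
      linarith
    have hKK : ε*(K n)^2 ≤ (K n)^2 := by nlinarith [sq_nonneg (K n)]
    have hd := hDsq n
    nlinarith [k, eb, ab, hαa, hund, hKK, hd]
  set σ' : ℕ → ℝ := fun n => ‖ξ1 n‖ + ‖ξ2 n‖ with hσdef
  set ρ : ℕ → ℝ := fun n => K n + σ' n with hρdef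
  have hρ0 : ∀ n, 0 ≤ ρ n := fun n => by
    simp only [hρdef, hσdef]
    have := hK0 n
    positivity
  have CORE : ∀ n, D (n+1)^2 + (ε*(1-ε)) * (‖u1 n‖^2 + ‖u2 n‖^2) ≤ (D n + ρ n)^2 := by
    intro n
    rw [hDsq (n+1)]
    simp only [hρdef, hσdef]
    refine aux_sqrt_step (norm_nonneg _) (norm_nonneg _)
      (add_nonneg (hD0 n) (hK0 n)) (norm_nonneg (ξ1 n)) (norm_nonneg (ξ2 n))
      (mul_nonneg (mul_nonneg hε0.le (by linarith)) (by positivity))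
      (norm_nonneg _) (norm_nonneg _) (step1 n) ?_ ?_
    · have h : x (n+1) - xb = (x (n+1) - ξ1 n - xb) + ξ1 n := by abel
      rw [h]; exact norm_add_le _ _
    · have h : v (n+1) - vb = (v (n+1) - ξ2 n - vb) + ξ2 n := by abel
      rw [h]; exact norm_add_le _ _
  -- summability of the error sequence
  have hγ1 : ∀ n (w : G), ‖γ n • L' w‖ ≤ ‖w‖ := by
    intro n w
    rw [norm_smul, Real.norm_eq_abs, abs_of_pos (hγpos n)]
    calc γ n * ‖L' w‖ ≤ γ n * (‖L‖ * ‖w‖) := by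
          have h := L'.le_opNorm w
          rw [hL'n] at h
          exact mul_le_mul_of_nonneg_left h (hγpos n).le
      _ = (γ n * ‖L‖) * ‖w‖ := by ring
      _ ≤ 1 * ‖w‖ := mul_le_mul_of_nonneg_right (by linarith [hγL n]) (norm_nonneg _)
      _ = ‖w‖ := one_mul _
  have hγ2 : ∀ n (w : H), ‖γ n • L w‖ ≤ ‖w‖ := by
    intro n w
    rw [norm_smul, Real.norm_eq_abs, abs_of_pos (hγpos n)]
    calc γ n * ‖L w‖ ≤ γ n * (‖L‖ * ‖w‖) :=
          mul_le_mul_of_nonneg_left (L.le_opNorm w) (hγpos n).le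
      _ = (γ n * ‖L‖) * ‖w‖ := by ring
      _ ≤ 1 * ‖w‖ := mul_le_mul_of_nonneg_right (by linarith [hγL n]) (norm_nonneg _)
      _ = ‖w‖ := one_mul _
  have hsm : ∀ n (w : H), ‖γ n • w‖ ≤ Γ * ‖w‖ := by
    intro n w
    rw [norm_smul, Real.norm_eq_abs, abs_of_pos (hγpos n)]
    exact mul_le_mul_of_nonneg_right (hγub n) (norm_nonneg _)
  have hsm' : ∀ n (w : G), ‖γ n • w‖ ≤ Γ * ‖w‖ := by
    intro n w
    rw [norm_smul, Real.norm_eq_abs, abs_of_pos (hγpos n)]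
    exact mul_le_mul_of_nonneg_right (hγub n) (norm_nonneg _)
  have hξ1b : ∀ n, ‖ξ1 n‖ ≤ Γ*‖a₁ n‖ + ‖b₁ n‖ + ‖b₂ n‖ + Γ*‖c₁ n‖ := by
    intro n
    simp only [hξ1]
    calc ‖γ n • a₁ n + b₁ n - γ n • L' (b₂ n) - γ n • c₁ n‖
        ≤ ‖γ n • a₁ n + b₁ n - γ n • L' (b₂ n)‖ + ‖γ n • c₁ n‖ := norm_sub_le _ _
      _ ≤ (‖γ n • a₁ n + b₁ n‖ + ‖γ n • L' (b₂ n)‖) + ‖γ n • c₁ n‖ := by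
          have := norm_sub_le (γ n • a₁ n + b₁ n) (γ n • L' (b₂ n))
          linarith
      _ ≤ ((‖γ n • a₁ n‖ + ‖b₁ n‖) + ‖γ n • L' (b₂ n)‖) + ‖γ n • c₁ n‖ := by
          have := norm_add_le (γ n • a₁ n) (b₁ n)
          linarith
      _ ≤ Γ*‖a₁ n‖ + ‖b₁ n‖ + ‖b₂ n‖ + Γ*‖c₁ n‖ := by
          have h1 := hsm n (a₁ n)
          have h2 := hγ1 n (b₂ n)
          have h3 := hsm n (c₁ n)
          linarith
  have hξ2b : ∀ n, ‖ξ2 n‖ ≤ Γ*‖a₂ n‖ + ‖b₂ n‖ + ‖b₁ n‖ + Γ*‖c₂ n‖ := by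
    intro n
    simp only [hξ2]
    calc ‖-(γ n • a₂ n) + b₂ n + γ n • L (b₁ n) + γ n • c₂ n‖
        ≤ ‖-(γ n • a₂ n) + b₂ n + γ n • L (b₁ n)‖ + ‖γ n • c₂ n‖ := norm_add_le _ _
      _ ≤ (‖-(γ n • a₂ n) + b₂ n‖ + ‖γ n • L (b₁ n)‖) + ‖γ n • c₂ n‖ := by
          have := norm_add_le (-(γ n • a₂ n) + b₂ n) (γ n • L (b₁ n))
          linarith
      _ ≤ ((‖-(γ n • a₂ n)‖ + ‖b₂ n‖) + ‖γ n • L (b₁ n)‖) + ‖γ n • c₂ n‖ := by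
          have := norm_add_le (-(γ n • a₂ n)) (b₂ n)
          linarith
      _ ≤ Γ*‖a₂ n‖ + ‖b₂ n‖ + ‖b₁ n‖ + Γ*‖c₂ n‖ := by
          have h1 := hsm' n (a₂ n)
          have h2 := hγ2 n (b₁ n)
          have h3 := hsm' n (c₂ n)
          rw [norm_neg]
          linarith
  have hρs : Summable ρ := by
    have hg : Summable (fun n => (Γ/ε)*(‖a₁ n‖+‖a₂ n‖)
        + (Γ*‖a₁ n‖ + ‖b₁ n‖ + ‖b₂ n‖ + Γ*‖c₁ n‖)
        + (Γ*‖a₂ n‖ + ‖b₂ n‖ + ‖b₁ n‖ + Γ*‖c₂ n‖)) := by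
      apply Summable.add
      apply Summable.add
      · exact (ha₁.add ha₂).mul_left _
      · exact (((ha₁.mul_left Γ).add hb₁).add hb₂).add (hc₁.mul_left Γ)
      · exact (((ha₂.mul_left Γ).add hb₂).add hb₁).add (hc₂.mul_left Γ)
    refine Summable.of_nonneg_of_le hρ0 (fun n => ?_) hg
    have hKval : K n = (Γ/ε)*(‖a₁ n‖+‖a₂ n‖) := by
      simp only [hKdef, hηdef]; ring
    simp only [hρdef, hσdef]
    rw [hKval]
    linarith [hξ1b n, hξ2b n]
  obtain ⟨hDb, hUt⟩ := aux_fejer D (fun n => ‖u1 n‖^2 + ‖u2 n‖^2) ρ (ε*(1-ε))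
    (mul_pos hε0 (by linarith)) hD0 (fun n => by positivity) hρ0 hρs CORE
  set C : ℝ := D 0 + ∑' k, ρ k with hCdef
  have hu1t : Tendsto (fun n => ‖u1 n‖) atTop (nhds 0) := by
    have hs : Tendsto (fun n => Real.sqrt (‖u1 n‖^2 + ‖u2 n‖^2)) atTop (nhds 0) := by
      have h := (Real.continuous_sqrt.tendsto 0).comp hUt
      simpa [Function.comp_def] using h
    refine squeeze_zero (fun n => norm_nonneg _) (fun n => ?_) hs
    refine aux_sq_le (norm_nonneg _) ?_ (Real.sqrt_nonneg _)
    rw [Real.sq_sqrt (by positivity)]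
    nlinarith [sq_nonneg ‖u2 n‖]
  have hu2t : Tendsto (fun n => ‖u2 n‖) atTop (nhds 0) := by
    have hs : Tendsto (fun n => Real.sqrt (‖u1 n‖^2 + ‖u2 n‖^2)) atTop (nhds 0) := by
      have h := (Real.continuous_sqrt.tendsto 0).comp hUt
      simpa [Function.comp_def] using h
    refine squeeze_zero (fun n => norm_nonneg _) (fun n => ?_) hs
    refine aux_sq_le (norm_nonneg _) ?_ (Real.sqrt_nonneg _)
    rw [Real.sq_sqrt (by positivity)]
    nlinarith [sq_nonneg ‖u1 n‖]
  have hαC : ∀ n, ‖x n - xb‖ ≤ C := fun n => (hαD n).trans (hDb n)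
  have hβC : ∀ n, ‖v n - vb‖ ≤ C := fun n => (hβD n).trans (hDb n)
  have hC0 : 0 ≤ C := (norm_nonneg (x 0 - xb)).trans (hαC 0)
  have ha₁0 : Tendsto (fun n => ‖a₁ n‖) atTop (nhds 0) := ha₁.tendsto_atTop_zero
  have ha₂0 : Tendsto (fun n => ‖a₂ n‖) atTop (nhds 0) := ha₂.tendsto_atTop_zero
  have hb₂0 : Tendsto (fun n => ‖b₂ n‖) atTop (nhds 0) := hb₂.tendsto_atTop_zero
  -- stage 3 : uniform monotonicity
  obtain ⟨φ, hφmono, hφzero, hφpos, hφkey⟩ := hunif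
  have hφapp : ∀ n, φ ‖vb - P2 n‖ ≤ ⟪vb - P2 n, (L xb - r) - uB n⟫_ℝ := fun n =>
    hφkey (L xb - r) hkt₂ (P2 n) (uB n) (hBmem n)
  have hφ0 : ∀ n, 0 ≤ φ ‖vb - P2 n‖ := fun n => by
    rw [← hφzero]; exact hφmono 0 _ le_rfl (norm_nonneg _)
  set W : ℕ → ℝ := fun n => (Γ*‖L‖*C + C) * (‖u1 n‖ + ‖u2 n‖)
    + Γ*((‖u1 n‖ + C)*‖a₁ n‖ + (‖u2 n‖ + C)*‖a₂ n‖) with hWdef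
  have hφW : ∀ n, φ ‖vb - P2 n‖ ≤ (1/ε) * W n := by
    intro n
    have hγφ : γ n * φ ‖vb - P2 n‖
        ≤ γ n * ⟪xb - P1 n, (z - L' vb) - uA n⟫_ℝ
          + γ n * ⟪vb - P2 n, (L xb - r) - uB n⟫_ℝ := by
      have h1 := mul_le_mul_of_nonneg_left (hφapp n) (hγpos n).le
      have h2 := mul_nonneg (hγpos n).le (hMA n)
      linarith
    rw [E1 n] at hγφ
    have t1 : γ n * ⟪L (u1 n), v n - vb⟫_ℝ ≤ Γ*(‖L‖*C*‖u1 n‖) := by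
      have i1 : ⟪L (u1 n), v n - vb⟫_ℝ ≤ ‖L‖*C*‖u1 n‖ := by
        calc ⟪L (u1 n), v n - vb⟫_ℝ ≤ ‖L (u1 n)‖*‖v n - vb‖ := real_inner_le_norm _ _
          _ ≤ (‖L‖*‖u1 n‖)*‖v n - vb‖ :=
              mul_le_mul_of_nonneg_right (hLu1 n) (norm_nonneg _)
          _ ≤ (‖L‖*‖u1 n‖)*C := mul_le_mul_of_nonneg_left (hβC n) (by positivity)
          _ = ‖L‖*C*‖u1 n‖ := by ring
      calc γ n * ⟪L (u1 n), v n - vb⟫_ℝ ≤ γ n * (‖L‖*C*‖u1 n‖) :=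
            mul_le_mul_of_nonneg_left i1 (hγpos n).le
        _ ≤ Γ*(‖L‖*C*‖u1 n‖) := mul_le_mul_of_nonneg_right (hγub n) (by positivity)
    have t2 : -(γ n * ⟪L (x n - xb), u2 n⟫_ℝ) ≤ Γ*(‖L‖*C*‖u2 n‖) := by
      have i2 : -⟪L (x n - xb), u2 n⟫_ℝ ≤ ‖L‖*C*‖u2 n‖ := by
        calc -⟪L (x n - xb), u2 n⟫_ℝ = ⟪L (x n - xb), -(u2 n)⟫_ℝ := by rw [inner_neg_right]
          _ ≤ ‖L (x n - xb)‖*‖-(u2 n)‖ := real_inner_le_norm _ _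
          _ = ‖L (x n - xb)‖*‖u2 n‖ := by rw [norm_neg]
          _ ≤ (‖L‖*‖x n - xb‖)*‖u2 n‖ :=
              mul_le_mul_of_nonneg_right (L.le_opNorm _) (norm_nonneg _)
          _ ≤ (‖L‖*C)*‖u2 n‖ := by
              have := hαC n
              have h := mul_le_mul_of_nonneg_right
                (mul_le_mul_of_nonneg_left (hαC n) hLn.le) (norm_nonneg (u2 n))
              linarith
          _ = ‖L‖*C*‖u2 n‖ := by ring
      calc -(γ n * ⟪L (x n - xb), u2 n⟫_ℝ) = γ n * (-⟪L (x n - xb), u2 n⟫_ℝ) := by ring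
        _ ≤ γ n * (‖L‖*C*‖u2 n‖) := mul_le_mul_of_nonneg_left i2 (hγpos n).le
        _ ≤ Γ*(‖L‖*C*‖u2 n‖) := mul_le_mul_of_nonneg_right (hγub n) (by positivity)
    have t3 : γ n * ⟪xb - P1 n, a₁ n⟫_ℝ ≤ Γ*((‖u1 n‖ + C)*‖a₁ n‖) := by
      have i3 : ⟪xb - P1 n, a₁ n⟫_ℝ ≤ (‖u1 n‖ + C)*‖a₁ n‖ := by
        calc ⟪xb - P1 n, a₁ n⟫_ℝ ≤ ‖xb - P1 n‖*‖a₁ n‖ := real_inner_le_norm _ _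
          _ ≤ (‖u1 n‖ + C)*‖a₁ n‖ := by
              have h := hbP1 n
              have := hαC n
              have := mul_le_mul_of_nonneg_right
                (show ‖xb - P1 n‖ ≤ ‖u1 n‖ + C by linarith) (norm_nonneg (a₁ n))
              linarith
      calc γ n * ⟪xb - P1 n, a₁ n⟫_ℝ ≤ γ n * ((‖u1 n‖ + C)*‖a₁ n‖) :=
            mul_le_mul_of_nonneg_left i3 (hγpos n).le
        _ ≤ Γ*((‖u1 n‖ + C)*‖a₁ n‖) := by
            refine mul_le_mul_of_nonneg_right (hγub n) ?_
            have := norm_nonneg (u1 n)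
            positivity
    have t4 : -(γ n * ⟪vb - P2 n, a₂ n⟫_ℝ) ≤ Γ*((‖u2 n‖ + C)*‖a₂ n‖) := by
      have i4 : -⟪vb - P2 n, a₂ n⟫_ℝ ≤ (‖u2 n‖ + C)*‖a₂ n‖ := by
        calc -⟪vb - P2 n, a₂ n⟫_ℝ = ⟪vb - P2 n, -(a₂ n)⟫_ℝ := by rw [inner_neg_right]
          _ ≤ ‖vb - P2 n‖*‖-(a₂ n)‖ := real_inner_le_norm _ _
          _ = ‖vb - P2 n‖*‖a₂ n‖ := by rw [norm_neg]
          _ ≤ (‖u2 n‖ + C)*‖a₂ n‖ := by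
              have h := hbP2 n
              have := hβC n
              have := mul_le_mul_of_nonneg_right
                (show ‖vb - P2 n‖ ≤ ‖u2 n‖ + C by linarith) (norm_nonneg (a₂ n))
              linarith
      calc -(γ n * ⟪vb - P2 n, a₂ n⟫_ℝ) = γ n * (-⟪vb - P2 n, a₂ n⟫_ℝ) := by ring
        _ ≤ γ n * ((‖u2 n‖ + C)*‖a₂ n‖) := mul_le_mul_of_nonneg_left i4 (hγpos n).le
        _ ≤ Γ*((‖u2 n‖ + C)*‖a₂ n‖) := by
            refine mul_le_mul_of_nonneg_right (hγub n) ?_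
            have := norm_nonneg (u2 n)
            positivity
    have t5 : ⟪x n - xb, u1 n⟫_ℝ ≤ C*‖u1 n‖ := by
      calc ⟪x n - xb, u1 n⟫_ℝ ≤ ‖x n - xb‖*‖u1 n‖ := real_inner_le_norm _ _
        _ ≤ C*‖u1 n‖ := mul_le_mul_of_nonneg_right (hαC n) (norm_nonneg _)
    have t6 : ⟪v n - vb, u2 n⟫_ℝ ≤ C*‖u2 n‖ := by
      calc ⟪v n - vb, u2 n⟫_ℝ ≤ ‖v n - vb‖*‖u2 n‖ := real_inner_le_norm _ _
        _ ≤ C*‖u2 n‖ := mul_le_mul_of_nonneg_right (hβC n) (norm_nonneg _)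
    have hWb : γ n * φ ‖vb - P2 n‖ ≤ W n := by
      simp only [hWdef]
      linarith [hγφ, t1, t2, t3, t4, t5, t6, sq_nonneg ‖u1 n‖, sq_nonneg ‖u2 n‖]
    have hεφ : ε * φ ‖vb - P2 n‖ ≤ γ n * φ ‖vb - P2 n‖ :=
      mul_le_mul_of_nonneg_right (hγlb n) (hφ0 n)
    have hfin : ε * φ ‖vb - P2 n‖ ≤ W n := le_trans hεφ hWb
    rw [one_div, ← div_eq_inv_mul]
    exact (le_div_iff₀ hε0).mpr (by linarith [hfin])
  have hWt : Tendsto W atTop (nhds 0) := by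
    have w1 : Tendsto (fun n => (Γ*‖L‖*C + C) * (‖u1 n‖ + ‖u2 n‖)) atTop (nhds 0) := by
      have := (hu1t.add hu2t).const_mul (Γ*‖L‖*C + C)
      simpa using this
    have w2 : Tendsto (fun n => (‖u1 n‖ + C)*‖a₁ n‖) atTop (nhds 0) := by
      have := (hu1t.add_const C).mul ha₁0
      simpa using this
    have w3 : Tendsto (fun n => (‖u2 n‖ + C)*‖a₂ n‖) atTop (nhds 0) := by
      have := (hu2t.add_const C).mul ha₂0
      simpa using this
    have := w1.add ((w2.add w3).const_mul Γ)
    simpa [hWdef, mul_add] using this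
  have hP2t : Tendsto (fun n => ‖vb - P2 n‖) atTop (nhds 0) := by
    refine aux_unif φ hφmono hφpos _ (fun n => (1/ε) * W n)
      (fun n => norm_nonneg _) hφW ?_
    have := hWt.const_mul (1/ε)
    simpa using this
  constructor
  · rw [tendsto_iff_norm_sub_tendsto_zero]
    refine squeeze_zero (fun n => norm_nonneg _) (fun n => ?_)
      (by simpa using hu2t.add hP2t)
    have h : v n - vb = u2 n - (vb - P2 n) := by simp only [hu2]; abel
    rw [h]
    exact norm_sub_le _ _
  · rw [tendsto_iff_norm_sub_tendsto_zero]
    refine squeeze_zero (fun n => norm_nonneg _) (fun n => ?_)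
      (by simpa using hP2t.add hb₂0)
    have h : p₂ n - vb = -(vb - P2 n) + b₂ n := by
      rw [hp₂ n, show JB n (y₂ n - γ n • r) = P2 n from rfl]; abel
    rw [h]
    calc ‖-(vb - P2 n) + b₂ n‖ ≤ ‖-(vb - P2 n)‖ + ‖b₂ n‖ := norm_add_le _ _
      _ = ‖vb - P2 n‖ + ‖b₂ n‖ := by rw [norm_neg]
end

section
/- Let H be a real Hilbert space and let A₁ : H → 2^H and A₂ : H → 2^H be maximally monotone operators with zer(A₁+A₂) ≠ ∅. Let (b_{1,n}) and (b_{2,n}) be absolutely summable sequences in H, let x_0, v_0 ∈ H, let ε ∈ (0, 1/2), let (γ_n) be a sequence in [ε, 1−ε], and define for every n: p_{1,n} = J_{γ_n A₁}(x_n − γ_n v_n) + b_{1,n}; p_{2,n} = J_{γ_n A₂^{-1}}(v_n + γ_n x_n) + b_{2,n}; x_{n+1} = p_{1,n} + γ_n(v_n − p_{2,n}); v_{n+1} = p_{2,n} + γ_n(p_{1,n} − x_n). Then there exist x̄ ∈ zer(A₁+A₂) and v̄ ∈ zer(−A₁^{-1}∘(−Id) + A₂^{-1}) with −v̄ ∈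 A₁x̄ and v̄ ∈ A₂x̄, such that x_n converges weakly to x̄ and v_n converges weakly to v̄. -/
open scoped InnerProductSpace
open Filter Topology

section Aux



open scoped InnerProductSpace
open Filter Topology

lemma exists_weak_limit {E : Type*} [NormedAddCommGroup E] [InnerProductSpace ℝ E] [CompleteSpace E]
    (z : ℕ → E) (C : ℝ) (hC : ∀ n, ‖z n‖ ≤ C) (U : Ultrafilter ℕ) :
    ∃ l : E, ∀ w : E, Tendsto (fun n => ⟪z n, w⟫_ℝ) (U : Filter ℕ) (𝓝 ⟪l, w⟫_ℝ) := by
  set φ : ℕ → WeakDual ℝ E :=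
    fun n => StrongDual.toWeakDual (InnerProductSpace.toDual ℝ E (z n)) with hφ
  have hmem : ∀ n, φ n ∈ WeakDual.toStrongDual ⁻¹' Metric.closedBall 0 C := by
    intro n
    simp only [Set.mem_preimage, Metric.mem_closedBall, dist_zero_right, hφ]
    have : ‖(InnerProductSpace.toDual ℝ E) (z n)‖ = ‖z n‖ :=
      (InnerProductSpace.toDual ℝ E).norm_map (z n)
    calc ‖WeakDual.toStrongDual (StrongDual.toWeakDual (InnerProductSpace.toDual ℝ E (z n)))‖
        = ‖(InnerProductSpace.toDual ℝ E) (z n)‖ := rfl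
      _ ≤ C := this ▸ hC n
  have hcpt : IsCompact (WeakDual.toStrongDual ⁻¹' Metric.closedBall (0 : StrongDual ℝ E) C) :=
    WeakDual.isCompact_closedBall (𝕜 := ℝ) 0 C
  have hle : (U.map φ : Filter (WeakDual ℝ E)) ≤
      Filter.principal (WeakDual.toStrongDual ⁻¹' Metric.closedBall 0 C) := by
    rw [Filter.le_principal_iff]
    exact Filter.mem_map.mpr (Filter.Eventually.of_forall hmem)
  obtain ⟨ψ, hψmem, hψ⟩ := hcpt.ultrafilter_le_nhds (U.map φ) hle
  refine ⟨(InnerProductSpace.toDual ℝ E).symm (WeakDual.toStrongDual ψ), ?_⟩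
  intro w
  have hev : Tendsto (fun χ : WeakDual ℝ E => χ w) (𝓝 ψ) (𝓝 (ψ w)) :=
    (WeakDual.eval_continuous w).continuousAt
  have h1 : Tendsto (fun n => (φ n) w) (U : Filter ℕ) (𝓝 (ψ w)) :=
    hev.comp hψ
  have h2 : ∀ n, (φ n) w = ⟪z n, w⟫_ℝ := fun n => InnerProductSpace.toDual_apply_apply
  have h3 : ⟪(InnerProductSpace.toDual ℝ E).symm (WeakDual.toStrongDual ψ), w⟫_ℝ = ψ w := by
    rw [← InnerProductSpace.toDual_apply_apply (𝕜 := ℝ)]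
    simp
  rw [h3]
  simpa only [h2] using h1


lemma quasi_fejer_tendsto (a c : ℕ → ℝ) (ha : ∀ n, 0 ≤ a n) (hc : ∀ n, 0 ≤ c n)
    (hcs : Summable c) (hrec : ∀ n, a (n + 1) ≤ a n + c n) :
    (∀ n, a n ≤ a 0 + ∑' k, c k) ∧ ∃ L, Tendsto a atTop (𝓝 L) := by
  set s : ℕ → ℝ := fun n => ∑ k ∈ Finset.range n, c k with hs
  have hsle : ∀ n, s n ≤ ∑' k, c k := fun n =>
    Summable.sum_le_tsum (Finset.range n) (fun k _ => hc k) hcs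
  have hanti : Antitone (fun n => a n - s n) := by
    apply antitone_nat_of_succ_le
    intro n
    have : s (n + 1) = s n + c n := Finset.sum_range_succ c n
    have h := hrec n
    simp only [this]
    linarith
  have hbdd : ∀ n, -(∑' k, c k) ≤ a n - s n := fun n => by
    have := ha n; have := hsle n; linarith
  have hbound : ∀ n, a n ≤ a 0 + ∑' k, c k := by
    intro n
    have h1 : a n - s n ≤ a 0 - s 0 := hanti (Nat.zero_le n)
    have h2 : s 0 = 0 := by simp [hs]
    have := hsle n
    linarith
  refine ⟨hbound, ?_⟩
  have hconv1 : ∃ L1, Tendsto (fun n => a n - s n) atTop (𝓝 L1) := by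
    refine ⟨⨅ n, a n - s n, ?_⟩
    exact tendsto_atTop_ciInf hanti ⟨-(∑' k, c k), fun y ⟨n, hn⟩ => hn ▸ hbdd n⟩
  obtain ⟨L1, hL1⟩ := hconv1
  have hconv2 : Tendsto s atTop (𝓝 (∑' k, c k)) := hcs.hasSum.tendsto_sum_nat
  exact ⟨L1 + ∑' k, c k, by simpa using hL1.add hconv2⟩

lemma gap_tendsto_zero (a e c : ℕ → ℝ) (ha : ∀ n, 0 ≤ a n) (he : ∀ n, 0 ≤ e n)
    (hc : ∀ n, 0 ≤ c n) (hcs : Summable c)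
    (hrec : ∀ n, a (n + 1) ≤ a n - e n + c n) :
    Tendsto e atTop (𝓝 0) := by
  have hpart : ∀ n, ∑ k ∈ Finset.range n, e k ≤ a 0 - a n + ∑ k ∈ Finset.range n, c k := by
    intro n
    induction n with
    | zero => simp
    | succ n ih =>
      rw [Finset.sum_range_succ, Finset.sum_range_succ]
      have := hrec n
      linarith
  have hsum : Summable e := by
    apply summable_of_sum_range_le he
    intro n
    have h1 := hpart n
    have h2 : ∑ k ∈ Finset.range n, c k ≤ ∑' k, c k :=
      Summable.sum_le_tsum (Finset.range n) (fun k _ => hc k) hcs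
    have := ha n
    calc ∑ k ∈ Finset.range n, e k ≤ a 0 - a n + ∑ k ∈ Finset.range n, c k := h1
      _ ≤ a 0 + ∑' k, c k := by linarith
  exact hsum.tendsto_atTop_zero

lemma core_ineq {E : Type*} [NormedAddCommGroup E] [InnerProductSpace ℝ E]
    (a b p q : E) (γ : ℝ)
    (h₁ : 0 ≤ ⟪p, a⟫_ℝ - γ * ⟪p, b⟫_ℝ - γ * ⟪p, q⟫_ℝ)
    (h₂ : 0 ≤ ⟪b, q⟫_ℝ + γ * ⟪a, q⟫_ℝ + γ * ⟪p, q⟫_ℝ) :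
    ‖p + γ • b‖ ^ 2 + ‖q - γ • a‖ ^ 2
      ≤ ‖a + p‖ ^ 2 + ‖b + q‖ ^ 2 - (1 - γ ^ 2) * (‖a‖ ^ 2 + ‖b‖ ^ 2) := by
  have e1 : ‖p + γ • b‖ ^ 2 = ‖p‖ ^ 2 + 2 * (γ * ⟪p, b⟫_ℝ) + γ ^ 2 * ‖b‖ ^ 2 := by
    rw [@norm_add_sq_real, real_inner_smul_right, norm_smul]
    simp [mul_pow, sq_abs]
  have e2 : ‖q - γ • a‖ ^ 2 = ‖q‖ ^ 2 - 2 * (γ * ⟪q, a⟫_ℝ) + γ ^ 2 * ‖a‖ ^ 2 := by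
    rw [@norm_sub_sq_real, real_inner_smul_right, norm_smul]
    simp [mul_pow, sq_abs]
  have e3 : ‖a + p‖ ^ 2 = ‖a‖ ^ 2 + 2 * ⟪a, p⟫_ℝ + ‖p‖ ^ 2 := norm_add_sq_real a p
  have e4 : ‖b + q‖ ^ 2 = ‖b‖ ^ 2 + 2 * ⟪b, q⟫_ℝ + ‖q‖ ^ 2 := norm_add_sq_real b q
  have s1 : ⟪a, p⟫_ℝ = ⟪p, a⟫_ℝ := real_inner_comm p a
  have s2 : ⟪a, q⟫_ℝ = ⟪q, a⟫_ℝ := real_inner_comm q a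
  have s2' : γ * ⟪q, a⟫_ℝ = γ * ⟪a, q⟫_ℝ := by rw [s2]
  have e5 : (1 - γ ^ 2) * (‖a‖ ^ 2 + ‖b‖ ^ 2)
      = ‖a‖ ^ 2 + ‖b‖ ^ 2 - γ ^ 2 * ‖a‖ ^ 2 - γ ^ 2 * ‖b‖ ^ 2 := by ring
  rw [e1, e2, e3, e4, e5]
  linarith [h₁, h₂, s1, s2']


lemma le_of_sq_le_sq' {s t : ℝ} (hs : 0 ≤ s) (ht : 0 ≤ t) (h : s ^ 2 ≤ t ^ 2) : s ≤ t := by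
  have := Real.sqrt_le_sqrt h
  rwa [Real.sqrt_sq hs, Real.sqrt_sq ht] at this

lemma tendsto_zero_of_sq {f : ℕ → ℝ} (hf : ∀ n, 0 ≤ f n)
    (h : Tendsto (fun n => f n ^ 2) atTop (𝓝 0)) : Tendsto f atTop (𝓝 0) := by
  have h2 : Tendsto (fun n => Real.sqrt (f n ^ 2)) atTop (𝓝 (Real.sqrt 0)) :=
    (Real.continuous_sqrt.tendsto 0).comp h
  have h3 : (fun n => Real.sqrt (f n ^ 2)) = f := funext fun n => by
    rw [Real.sqrt_sq (hf n)]
  rwa [h3, Real.sqrt_zero] at h2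

end Aux

set_option maxHeartbeats 2000000 in
theorem stmt_16 {H : Type*} [NormedAddCommGroup H] [InnerProductSpace ℝ H] [CompleteSpace H]
    (A₁ A₂ : H → Set H) (hA₁ : MaxMonotone A₁) (hA₂ : MaxMonotone A₂)
    (hzer : ∃ w : H, ∃ u ∈ A₁ w, ∃ s ∈ A₂ w, u + s = 0)
    (b₁ b₂ : ℕ → H)
    (hb₁ : Summable fun n => ‖b₁ n‖) (hb₂ : Summable fun n => ‖b₂ n‖)
    (ε : ℝ) (hε : ε ∈ Set.Ioo (0:ℝ) (1 / 2))
    (γ : ℕ → ℝ) (hγ : ∀ n, γ n ∈ Set.Icc ε (1 - ε))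
    (J₁ : ℕ → H → H) (hJ₁ : ∀ n, IsResolvent (γ n) A₁ (J₁ n))
    (J₂ : ℕ → H → H) (hJ₂ : ∀ n, IsResolvent (γ n) (fun w => {g : H | w ∈ A₂ g}) (J₂ n))
    (x v p₁ p₂ : ℕ → H)
    (hp₁ : ∀ n, p₁ n = J₁ n (x n - γ n • v n) + b₁ n)
    (hp₂ : ∀ n, p₂ n = J₂ n (v n + γ n • x n) + b₂ n)
    (hx : ∀ n, x (n + 1) = p₁ n + γ n • (v n - p₂ n))
    (hv : ∀ n, v (n + 1) = p₂ n + γ n • (p₁ n - x n)) :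
    ∃ (xb vb : H),
      (∃ u ∈ A₁ xb, ∃ s ∈ A₂ xb, u + s = 0) ∧
      (∃ s t : H, -vb ∈ A₁ s ∧ vb ∈ A₂ t ∧ -s + t = 0) ∧
      -vb ∈ A₁ xb ∧ vb ∈ A₂ xb ∧
      WeakTendsto x xb ∧ WeakTendsto v vb := by
  obtain ⟨hε0, hε2⟩ := hε
  have hγpos : ∀ n, 0 < γ n := fun n => lt_of_lt_of_le hε0 (hγ n).1
  have hγ1 : ∀ n, γ n ≤ 1 := fun n => le_trans (hγ n).2 (by linarith)
  -- exact resolvent points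
  have hPick₁ : ∀ n, ∃ u ∈ A₁ (J₁ n (x n - γ n • v n)),
      x n - γ n • v n = J₁ n (x n - γ n • v n) + γ n • u := fun n => hJ₁ n _
  choose u₁ hu₁mem hu₁eq using hPick₁
  have hPick₂ : ∀ n, ∃ u, J₂ n (v n + γ n • x n) ∈ A₂ u ∧
      v n + γ n • x n = J₂ n (v n + γ n • x n) + γ n • u := by
    intro n; obtain ⟨u, hu, he⟩ := hJ₂ n (v n + γ n • x n); exact ⟨u, hu, he⟩
  choose u₂ hu₂mem hu₂eq using hPick₂
  set q₁ : ℕ → H := fun n => J₁ n (x n - γ n • v n) with hq₁def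
  set q₂ : ℕ → H := fun n => J₂ n (v n + γ n • x n) with hq₂def
  have hu₁' : ∀ n, u₁ n = (γ n)⁻¹ • (x n - q₁ n) - v n := by
    intro n
    have hne : γ n ≠ 0 := (hγpos n).ne'
    apply smul_right_injective H hne
    show γ n • u₁ n = γ n • ((γ n)⁻¹ • (x n - q₁ n) - v n)
    have h2 : γ n • u₁ n = x n - γ n • v n - q₁ n := by
      rw [hu₁eq n]; abel
    rw [h2, smul_sub, smul_smul, mul_inv_cancel₀ hne, one_smul]
    abel
  have hu₂' : ∀ n, u₂ n = (γ n)⁻¹ • (v n - q₂ n) + x n := by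
    intro n
    have hne : γ n ≠ 0 := (hγpos n).ne'
    apply smul_right_injective H hne
    show γ n • u₂ n = γ n • ((γ n)⁻¹ • (v n - q₂ n) + x n)
    have h2 : γ n • u₂ n = v n + γ n • x n - q₂ n := by
      rw [hu₂eq n]; abel
    rw [h2, smul_add, smul_smul, mul_inv_cancel₀ hne, one_smul]
    abel
  -- product space and embedding
  let emb : H → H → WithLp 2 (H × H) := fun a b => (WithLp.equiv 2 (H × H)).symm (a, b)
  have embsub : ∀ a b c d : H, emb a b - emb c d = emb (a - c) (b - d) := by
    intro a b c d
    rfl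
  have embnorm : ∀ a b : H, ‖emb a b‖ ^ 2 = ‖a‖ ^ 2 + ‖b‖ ^ 2 := by
    intro a b
    rw [WithLp.prod_norm_sq_eq_of_L2]
    simp [emb]
  have embinner : ∀ a b c d : H, ⟪emb a b, emb c d⟫_ℝ = ⟪a, c⟫_ℝ + ⟪b, d⟫_ℝ := by
    intro a b c d
    rw [WithLp.prod_inner_apply]
    simp [emb]
  set z : ℕ → WithLp 2 (H × H) := fun n => emb (x n) (v n) with hzdef
  -- key one-step Fejér inequality
  have key : ∀ X V, -V ∈ A₁ X → V ∈ A₂ X → ∀ n,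
      ‖emb (q₁ n + γ n • (v n - q₂ n)) (q₂ n + γ n • (q₁ n - x n)) - emb X V‖ ^ 2
        ≤ ‖z n - emb X V‖ ^ 2 - ε * (‖x n - q₁ n‖ ^ 2 + ‖v n - q₂ n‖ ^ 2) := by
    intro X V h1 h2 n
    have hγn := hγpos n
    have hne : γ n ≠ 0 := hγn.ne'
    have m₁ : (0:ℝ) ≤ ⟪q₁ n - X, u₁ n - -V⟫_ℝ := hA₁.1 _ _ _ _ (hu₁mem n) h1
    have m₂ : (0:ℝ) ≤ ⟪u₂ n - X, q₂ n - V⟫_ℝ := hA₂.1 _ _ _ _ (hu₂mem n) h2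
    -- abbreviations
    have hrw₁ : u₁ n - -V = (γ n)⁻¹ • (x n - q₁ n) - (v n - q₂ n) - (q₂ n - V) := by
      rw [hu₁' n]; abel
    have hrw₂ : u₂ n - X = (γ n)⁻¹ • (v n - q₂ n) + (x n - q₁ n) + (q₁ n - X) := by
      rw [hu₂' n]; abel
    have hin₁ : ⟪q₁ n - X, u₁ n - -V⟫_ℝ
        = (γ n)⁻¹ * ⟪q₁ n - X, x n - q₁ n⟫_ℝ - ⟪q₁ n - X, v n - q₂ n⟫_ℝ
          - ⟪q₁ n - X, q₂ n - V⟫_ℝ := by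
      rw [hrw₁, inner_sub_right, inner_sub_right, real_inner_smul_right]
    have hin₂ : ⟪u₂ n - X, q₂ n - V⟫_ℝ
        = (γ n)⁻¹ * ⟪v n - q₂ n, q₂ n - V⟫_ℝ + ⟪x n - q₁ n, q₂ n - V⟫_ℝ
          + ⟪q₁ n - X, q₂ n - V⟫_ℝ := by
      rw [hrw₂, inner_add_left, inner_add_left, real_inner_smul_left]
    have hcore := core_ineq (x n - q₁ n) (v n - q₂ n) (q₁ n - X) (q₂ n - V) (γ n)
      (by
        have hm := m₁
        rw [hin₁] at hm
        have h0 := mul_nonneg hγn.le hm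
        have hexp : γ n * ((γ n)⁻¹ * ⟪q₁ n - X, x n - q₁ n⟫_ℝ - ⟪q₁ n - X, v n - q₂ n⟫_ℝ
            - ⟪q₁ n - X, q₂ n - V⟫_ℝ)
            = ⟪q₁ n - X, x n - q₁ n⟫_ℝ - γ n * ⟪q₁ n - X, v n - q₂ n⟫_ℝ
              - γ n * ⟪q₁ n - X, q₂ n - V⟫_ℝ := by
          rw [mul_sub, mul_sub, ← mul_assoc, mul_inv_cancel₀ hne, one_mul]
        rw [hexp] at h0
        exact h0)
      (by
        have hm := m₂
        rw [hin₂] at hm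
        have h0 := mul_nonneg hγn.le hm
        have hexp : γ n * ((γ n)⁻¹ * ⟪v n - q₂ n, q₂ n - V⟫_ℝ + ⟪x n - q₁ n, q₂ n - V⟫_ℝ
            + ⟪q₁ n - X, q₂ n - V⟫_ℝ)
            = ⟪v n - q₂ n, q₂ n - V⟫_ℝ + γ n * ⟪x n - q₁ n, q₂ n - V⟫_ℝ
              + γ n * ⟪q₁ n - X, q₂ n - V⟫_ℝ := by
          rw [mul_add, mul_add, ← mul_assoc, mul_inv_cancel₀ hne, one_mul]
        rw [hexp] at h0
        exact h0)
    -- convert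
    have c1 : emb (q₁ n + γ n • (v n - q₂ n)) (q₂ n + γ n • (q₁ n - x n)) - emb X V
        = emb ((q₁ n - X) + γ n • (v n - q₂ n)) ((q₂ n - V) - γ n • (x n - q₁ n)) := by
      rw [embsub]
      congr 1 <;> module
    have c2 : z n - emb X V = emb ((x n - q₁ n) + (q₁ n - X)) ((v n - q₂ n) + (q₂ n - V)) := by
      simp only [hzdef]
      rw [embsub]
      congr 1 <;> module
    rw [c1, c2, embnorm, embnorm]
    have hγsq : ε ≤ 1 - γ n ^ 2 := by nlinarith [(hγ n).1, (hγ n).2]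
    nlinarith [hcore, sq_nonneg ‖x n - q₁ n‖, sq_nonneg ‖v n - q₂ n‖,
      norm_nonneg (x n - q₁ n), norm_nonneg (v n - q₂ n)]
  
  -- product-space helpers
  have embadd : ∀ a b c d : H, emb a b + emb c d = emb (a + c) (b + d) := by
    intro a b c d
    rfl
  have embnorm_le : ∀ a b : H, ‖emb a b‖ ≤ ‖a‖ + ‖b‖ := by
    intro a b
    refine le_of_sq_le_sq' (norm_nonneg _) (by positivity) ?_
    rw [embnorm]
    nlinarith [norm_nonneg a, norm_nonneg b]
  -- recursion in the product space
  have hzrec : ∀ n, z (n + 1)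
      = emb (q₁ n + γ n • (v n - q₂ n)) (q₂ n + γ n • (q₁ n - x n))
        + emb (b₁ n - γ n • b₂ n) (b₂ n + γ n • b₁ n) := by
    intro n
    have hx' : x (n + 1) = (q₁ n + γ n • (v n - q₂ n)) + (b₁ n - γ n • b₂ n) := by
      rw [hx n, hp₁ n, hp₂ n]; module
    have hv' : v (n + 1) = (q₂ n + γ n • (q₁ n - x n)) + (b₂ n + γ n • b₁ n) := by
      rw [hv n, hp₁ n, hp₂ n]; module
    simp only [hzdef]
    rw [hx', hv', embadd]
  -- summable error bound
  set c : ℕ → ℝ := fun n => 2 * (‖b₁ n‖ + ‖b₂ n‖) with hcdef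
  have hcnonneg : ∀ n, 0 ≤ c n := fun n => by positivity
  have hcsum : Summable c := ((hb₁.add hb₂).mul_left 2)
  set C₀ : ℝ := ∑' k, c k with hC₀def
  have hC₀nonneg : 0 ≤ C₀ := tsum_nonneg hcnonneg
  have hcleC₀ : ∀ n, c n ≤ C₀ := fun n => Summable.le_tsum hcsum n (fun m _ => hcnonneg m)
  have herr : ∀ n, ‖emb (b₁ n - γ n • b₂ n) (b₂ n + γ n • b₁ n)‖ ≤ c n := by
    intro n
    have hg : ∀ w : H, ‖γ n • w‖ ≤ ‖w‖ := by
      intro w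
      rw [norm_smul, Real.norm_eq_abs, abs_of_pos (hγpos n)]
      nlinarith [norm_nonneg w, hγ1 n, (hγpos n).le]
    have h1 : ‖b₁ n - γ n • b₂ n‖ ≤ ‖b₁ n‖ + ‖b₂ n‖ :=
      le_trans (norm_sub_le _ _) (by have := hg (b₂ n); linarith)
    have h2 : ‖b₂ n + γ n • b₁ n‖ ≤ ‖b₂ n‖ + ‖b₁ n‖ :=
      le_trans (norm_add_le _ _) (by have := hg (b₁ n); linarith)
    calc ‖emb (b₁ n - γ n • b₂ n) (b₂ n + γ n • b₁ n)‖
        ≤ ‖b₁ n - γ n • b₂ n‖ + ‖b₂ n + γ n • b₁ n‖ := embnorm_le _ _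
      _ ≤ c n := by rw [hcdef]; dsimp only; linarith
  -- the two step estimates, for any Kuhn-Tucker point
  have step2 : ∀ X V, -V ∈ A₁ X → V ∈ A₂ X → ∀ n,
      ‖emb (q₁ n + γ n • (v n - q₂ n)) (q₂ n + γ n • (q₁ n - x n)) - emb X V‖
        ≤ ‖z n - emb X V‖ ∧
      ‖z (n + 1) - emb X V‖
        ≤ ‖emb (q₁ n + γ n • (v n - q₂ n)) (q₂ n + γ n • (q₁ n - x n)) - emb X V‖ + c n := by
    intro X V h1 h2 n
    constructor
    · refine le_of_sq_le_sq' (norm_nonneg _) (norm_nonneg _) ?_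
      have hk := key X V h1 h2 n
      have hd0 : 0 ≤ ε * (‖x n - q₁ n‖ ^ 2 + ‖v n - q₂ n‖ ^ 2) := by positivity
      linarith
    · have htri : z (n + 1) - emb X V
          = (emb (q₁ n + γ n • (v n - q₂ n)) (q₂ n + γ n • (q₁ n - x n)) - emb X V)
            + emb (b₁ n - γ n • b₂ n) (b₂ n + γ n • b₁ n) := by
        rw [hzrec n]; abel
      calc ‖z (n + 1) - emb X V‖
          ≤ ‖emb (q₁ n + γ n • (v n - q₂ n)) (q₂ n + γ n • (q₁ n - x n)) - emb X V‖
            + ‖emb (b₁ n - γ n • b₂ n) (b₂ n + γ n • b₁ n)‖ := by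
            rw [htri]; exact norm_add_le _ _
        _ ≤ _ := add_le_add_right (herr n) _
  -- quasi-Fejér bounds
  have fej : ∀ X V, -V ∈ A₁ X → V ∈ A₂ X →
      (∀ n, ‖z n - emb X V‖ ≤ ‖z 0 - emb X V‖ + C₀) ∧
      ∃ L, Tendsto (fun n => ‖z n - emb X V‖) atTop (𝓝 L) := by
    intro X V h1 h2
    have hrec : ∀ n, ‖z (n + 1) - emb X V‖ ≤ ‖z n - emb X V‖ + c n := by
      intro n
      obtain ⟨s1, s2⟩ := step2 X V h1 h2 n
      linarith
    exact quasi_fejer_tendsto _ c (fun n => norm_nonneg _) hcnonneg hcsum hrec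
  -- a specific Kuhn-Tucker point
  obtain ⟨w0, u0, hu0, s0, hs0, hus0⟩ := hzer
  have hw0 : -s0 ∈ A₁ w0 := by
    have h : u0 = -s0 := eq_neg_of_add_eq_zero_left hus0
    rwa [h] at hu0
  obtain ⟨hbnd0, L0, hL0⟩ := fej w0 s0 hw0 hs0
  set R : ℝ := ‖z 0 - emb w0 s0‖ + C₀ with hRdef
  have hRnonneg : 0 ≤ R := by positivity
  set Cz : ℝ := ‖emb w0 s0‖ + R with hCzdef
  have hCz : ∀ n, ‖z n‖ ≤ Cz := by
    intro n
    calc ‖z n‖ = ‖emb w0 s0 + (z n - emb w0 s0)‖ := by rw [add_sub_cancel]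
      _ ≤ ‖emb w0 s0‖ + ‖z n - emb w0 s0‖ := norm_add_le _ _
      _ ≤ Cz := by rw [hCzdef]; have := hbnd0 n; linarith
  have hxbnd : ∀ n, ‖x n‖ ≤ Cz := by
    intro n
    refine le_of_sq_le_sq' (norm_nonneg _) (le_trans (norm_nonneg _) (hCz n)) ?_
    have h1 : ‖z n‖ ^ 2 = ‖x n‖ ^ 2 + ‖v n‖ ^ 2 := by simp only [hzdef]; exact embnorm _ _
    nlinarith [norm_nonneg (z n), hCz n, sq_nonneg ‖v n‖]
  have hvbnd : ∀ n, ‖v n‖ ≤ Cz := by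
    intro n
    refine le_of_sq_le_sq' (norm_nonneg _) (le_trans (norm_nonneg _) (hCz n)) ?_
    have h1 : ‖z n‖ ^ 2 = ‖x n‖ ^ 2 + ‖v n‖ ^ 2 := by simp only [hzdef]; exact embnorm _ _
    nlinarith [norm_nonneg (z n), hCz n, sq_nonneg ‖x n‖]
  -- vanishing of the gap d n
  set d : ℕ → ℝ := fun n => ‖x n - q₁ n‖ ^ 2 + ‖v n - q₂ n‖ ^ 2 with hddef
  have hdnonneg : ∀ n, 0 ≤ d n := fun n => by positivity
  have hed : Tendsto (fun n => ε * d n) atTop (𝓝 0) := by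
    apply gap_tendsto_zero (fun n => ‖z n - emb w0 s0‖ ^ 2) _ (fun n => (2 * R + C₀) * c n)
      (fun n => sq_nonneg _) (fun n => by positivity) (fun n => by positivity)
      (hcsum.mul_left _)
    intro n
    obtain ⟨s1, s2⟩ := step2 w0 s0 hw0 hs0 n
    have hk := key w0 s0 hw0 hs0 n
    have hTR : ‖emb (q₁ n + γ n • (v n - q₂ n)) (q₂ n + γ n • (q₁ n - x n)) - emb w0 s0‖ ≤ R :=
      le_trans s1 (hbnd0 n)
    have hsq : ‖z (n + 1) - emb w0 s0‖ ^ 2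
        ≤ (‖emb (q₁ n + γ n • (v n - q₂ n)) (q₂ n + γ n • (q₁ n - x n)) - emb w0 s0‖ + c n) ^ 2 :=
      pow_le_pow_left₀ (norm_nonneg _) s2 2
    have h2Tc : ‖emb (q₁ n + γ n • (v n - q₂ n)) (q₂ n + γ n • (q₁ n - x n)) - emb w0 s0‖ * c n
        ≤ R * c n := mul_le_mul_of_nonneg_right hTR (hcnonneg n)
    have hc2 : c n * c n ≤ C₀ * c n := mul_le_mul_of_nonneg_right (hcleC₀ n) (hcnonneg n)
    have hdn : d n = ‖x n - q₁ n‖ ^ 2 + ‖v n - q₂ n‖ ^ 2 := rfl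
    nlinarith [hk, hdn]
  have hdz : Tendsto d atTop (𝓝 0) := by
    have h := hed.const_mul ε⁻¹
    simp only [mul_zero] at h
    have heq : (fun n => ε⁻¹ * (ε * d n)) = d := funext fun n => by
      rw [← mul_assoc, inv_mul_cancel₀ hε0.ne', one_mul]
    rwa [heq] at h
  have hxq : Tendsto (fun n => ‖x n - q₁ n‖) atTop (𝓝 0) := by
    apply tendsto_zero_of_sq (fun n => norm_nonneg _)
    exact squeeze_zero (fun n => sq_nonneg _) (fun n => le_add_of_nonneg_right (sq_nonneg _)) hdz
  have hvq : Tendsto (fun n => ‖v n - q₂ n‖) atTop (𝓝 0) := by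
    apply tendsto_zero_of_sq (fun n => norm_nonneg _)
    exact squeeze_zero (fun n => sq_nonneg _) (fun n => le_add_of_nonneg_left (sq_nonneg _)) hdz
  
  -- strong null sequences α = u₁ + q₂ and β = u₂ - q₁
  have hα : Tendsto (fun n => ‖u₁ n + q₂ n‖) atTop (𝓝 0) := by
    have heq : ∀ n, u₁ n + q₂ n = (γ n)⁻¹ • (x n - q₁ n) - (v n - q₂ n) := fun n => by
      rw [hu₁' n]; abel
    have hbound : ∀ n, ‖u₁ n + q₂ n‖ ≤ ε⁻¹ * ‖x n - q₁ n‖ + ‖v n - q₂ n‖ := by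
      intro n
      rw [heq n]
      refine (norm_sub_le _ _).trans ?_
      have h1 : ‖(γ n)⁻¹ • (x n - q₁ n)‖ = (γ n)⁻¹ * ‖x n - q₁ n‖ := by
        rw [norm_smul, Real.norm_eq_abs, abs_of_pos (inv_pos.mpr (hγpos n))]
      have h2 : (γ n)⁻¹ ≤ ε⁻¹ := by
        apply inv_anti₀ hε0 (hγ n).1
      have h3 := mul_le_mul_of_nonneg_right h2 (norm_nonneg (x n - q₁ n))
      rw [h1]
      linarith
    apply squeeze_zero (fun n => norm_nonneg _) hbound
    have := (hxq.const_mul ε⁻¹).add hvq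
    simpa using this
  have hβ : Tendsto (fun n => ‖u₂ n - q₁ n‖) atTop (𝓝 0) := by
    have heq : ∀ n, u₂ n - q₁ n = (γ n)⁻¹ • (v n - q₂ n) + (x n - q₁ n) := fun n => by
      rw [hu₂' n]; abel
    have hbound : ∀ n, ‖u₂ n - q₁ n‖ ≤ ε⁻¹ * ‖v n - q₂ n‖ + ‖x n - q₁ n‖ := by
      intro n
      rw [heq n]
      refine (norm_add_le _ _).trans ?_
      have h1 : ‖(γ n)⁻¹ • (v n - q₂ n)‖ = (γ n)⁻¹ * ‖v n - q₂ n‖ := by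
        rw [norm_smul, Real.norm_eq_abs, abs_of_pos (inv_pos.mpr (hγpos n))]
      have h2 : (γ n)⁻¹ ≤ ε⁻¹ := by
        apply inv_anti₀ hε0 (hγ n).1
      have h3 := mul_le_mul_of_nonneg_right h2 (norm_nonneg (v n - q₂ n))
      rw [h1]
      linarith
    apply squeeze_zero (fun n => norm_nonneg _) hbound
    have := (hvq.const_mul ε⁻¹).add hxq
    simpa using this
  -- every weak cluster point along an ultrafilter is a Kuhn-Tucker point
  have limKT : ∀ U : Ultrafilter ℕ, (U : Filter ℕ) ≤ atTop →
      ∃ xs vs : H, (-vs ∈ A₁ xs ∧ vs ∈ A₂ xs) ∧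
        ∀ w : WithLp 2 (H × H),
          Tendsto (fun n => ⟪z n, w⟫_ℝ) (U : Filter ℕ) (𝓝 ⟪emb xs vs, w⟫_ℝ) := by
    intro U hU
    obtain ⟨l, hl⟩ := exists_weak_limit z Cz hCz U
    set xs := (WithLp.equiv 2 (H × H) l).1 with hxsdef
    set vs := (WithLp.equiv 2 (H × H) l).2 with hvsdef
    have hle : emb xs vs = l := by
      simp only [emb, hxsdef, hvsdef]
      exact (WithLp.equiv 2 (H × H)).symm_apply_apply l
    have hxw : ∀ w : H, Tendsto (fun n => ⟪x n, w⟫_ℝ) (U : Filter ℕ) (𝓝 ⟪xs, w⟫_ℝ) := by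
      intro w
      have h0 := hl (emb w 0)
      have h1 : ∀ n, ⟪z n, emb w 0⟫_ℝ = ⟪x n, w⟫_ℝ := fun n => by
        simp only [hzdef]; rw [embinner]; simp
      have h2 : ⟪l, emb w 0⟫_ℝ = ⟪xs, w⟫_ℝ := by
        rw [← hle, embinner]; simp
      rw [h2] at h0
      exact h0.congr h1
    have hvw : ∀ w : H, Tendsto (fun n => ⟪v n, w⟫_ℝ) (U : Filter ℕ) (𝓝 ⟪vs, w⟫_ℝ) := by
      intro w
      have h0 := hl (emb 0 w)
      have h1 : ∀ n, ⟪z n, emb 0 w⟫_ℝ = ⟪v n, w⟫_ℝ := fun n => by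
        simp only [hzdef]; rw [embinner]; simp
      have h2 : ⟪l, emb 0 w⟫_ℝ = ⟪vs, w⟫_ℝ := by
        rw [← hle, embinner]; simp
      rw [h2] at h0
      exact h0.congr h1
    have hq1w : ∀ w : H, Tendsto (fun n => ⟪q₁ n, w⟫_ℝ) (U : Filter ℕ) (𝓝 ⟪xs, w⟫_ℝ) := by
      intro w
      have h0 : Tendsto (fun n => ⟪x n - q₁ n, w⟫_ℝ) atTop (𝓝 0) :=
        squeeze_zero_norm (fun n => norm_inner_le_norm _ _)
          (by simpa using hxq.mul_const ‖w‖)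
      have h3 := (hxw w).sub (h0.mono_left hU)
      have heq : ∀ n, ⟪x n, w⟫_ℝ - ⟪x n - q₁ n, w⟫_ℝ = ⟪q₁ n, w⟫_ℝ := fun n => by
        rw [inner_sub_left]; ring
      simpa using h3.congr heq
    have hq2w : ∀ w : H, Tendsto (fun n => ⟪q₂ n, w⟫_ℝ) (U : Filter ℕ) (𝓝 ⟪vs, w⟫_ℝ) := by
      intro w
      have h0 : Tendsto (fun n => ⟪v n - q₂ n, w⟫_ℝ) atTop (𝓝 0) :=
        squeeze_zero_norm (fun n => norm_inner_le_norm _ _)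
          (by simpa using hvq.mul_const ‖w‖)
      have h3 := (hvw w).sub (h0.mono_left hU)
      have heq : ∀ n, ⟪v n, w⟫_ℝ - ⟪v n - q₂ n, w⟫_ℝ = ⟪q₂ n, w⟫_ℝ := fun n => by
        rw [inner_sub_left]; ring
      simpa using h3.congr heq
    have hu1w : ∀ w : H, Tendsto (fun n => ⟪u₁ n, w⟫_ℝ) (U : Filter ℕ) (𝓝 (-⟪vs, w⟫_ℝ)) := by
      intro w
      have h0 : Tendsto (fun n => ⟪u₁ n + q₂ n, w⟫_ℝ) atTop (𝓝 0) :=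
        squeeze_zero_norm (fun n => norm_inner_le_norm _ _)
          (by simpa using hα.mul_const ‖w‖)
      have h3 := (h0.mono_left hU).sub (hq2w w)
      have heq : ∀ n, ⟪u₁ n + q₂ n, w⟫_ℝ - ⟪q₂ n, w⟫_ℝ = ⟪u₁ n, w⟫_ℝ := fun n => by
        rw [inner_add_left]; ring
      simpa [zero_sub] using h3.congr heq
    have hu2w : ∀ w : H, Tendsto (fun n => ⟪u₂ n, w⟫_ℝ) (U : Filter ℕ) (𝓝 ⟪xs, w⟫_ℝ) := by
      intro w
      have h0 : Tendsto (fun n => ⟪u₂ n - q₁ n, w⟫_ℝ) atTop (𝓝 0) :=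
        squeeze_zero_norm (fun n => norm_inner_le_norm _ _)
          (by simpa using hβ.mul_const ‖w‖)
      have h3 := (h0.mono_left hU).add (hq1w w)
      have heq : ∀ n, ⟪u₂ n - q₁ n, w⟫_ℝ + ⟪q₁ n, w⟫_ℝ = ⟪u₂ n, w⟫_ℝ := fun n => by
        rw [inner_sub_left]; ring
      simpa using h3.congr heq
    have hcross1 : Tendsto (fun n => ⟪q₁ n, u₁ n + q₂ n⟫_ℝ) (U : Filter ℕ) (𝓝 0) := by
      have hb : ∀ n, ‖⟪q₁ n, u₁ n + q₂ n⟫_ℝ‖ ≤ (Cz + ‖x n - q₁ n‖) * ‖u₁ n + q₂ n‖ := by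
        intro n
        refine (norm_inner_le_norm _ _).trans ?_
        have hq : ‖q₁ n‖ ≤ Cz + ‖x n - q₁ n‖ := by
          have h5 : ‖q₁ n‖ ≤ ‖x n‖ + ‖x n - q₁ n‖ := by
            calc ‖q₁ n‖ = ‖x n - (x n - q₁ n)‖ := by rw [sub_sub_cancel]
              _ ≤ ‖x n‖ + ‖x n - q₁ n‖ := norm_sub_le _ _
          linarith [hxbnd n]
        exact mul_le_mul_of_nonneg_right hq (norm_nonneg _)
      have hg : Tendsto (fun n => (Cz + ‖x n - q₁ n‖) * ‖u₁ n + q₂ n‖) atTop (𝓝 0) := by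
        have := ((tendsto_const_nhds (x := Cz) (f := atTop)).add hxq).mul hα
        simpa using this
      exact (squeeze_zero_norm hb hg).mono_left hU
    have hcross2 : Tendsto (fun n => ⟪u₂ n - q₁ n, q₂ n⟫_ℝ) (U : Filter ℕ) (𝓝 0) := by
      have hb : ∀ n, ‖⟪u₂ n - q₁ n, q₂ n⟫_ℝ‖ ≤ ‖u₂ n - q₁ n‖ * (Cz + ‖v n - q₂ n‖) := by
        intro n
        refine (norm_inner_le_norm _ _).trans ?_
        have hq : ‖q₂ n‖ ≤ Cz + ‖v n - q₂ n‖ := by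
          have h5 : ‖q₂ n‖ ≤ ‖v n‖ + ‖v n - q₂ n‖ := by
            calc ‖q₂ n‖ = ‖v n - (v n - q₂ n)‖ := by rw [sub_sub_cancel]
              _ ≤ ‖v n‖ + ‖v n - q₂ n‖ := norm_sub_le _ _
          linarith [hvbnd n]
        exact mul_le_mul_of_nonneg_left hq (norm_nonneg _)
      have hg : Tendsto (fun n => ‖u₂ n - q₁ n‖ * (Cz + ‖v n - q₂ n‖)) atTop (𝓝 0) := by
        have := hβ.mul ((tendsto_const_nhds (x := Cz) (f := atTop)).add hvq)
        simpa using this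
      exact (squeeze_zero_norm hb hg).mono_left hU
    -- the limiting variational inequality
    have hKTineq : ∀ y r : H, r ∈ A₁ y → ∀ y' r' : H, y' ∈ A₂ r' →
        0 ≤ ⟪xs - y, -vs - r⟫_ℝ + ⟪xs - r', vs - y'⟫_ℝ := by
      intro y r hr y' r' hy'
      have hS : ∀ n, 0 ≤ ⟪q₁ n - y, u₁ n - r⟫_ℝ + ⟪u₂ n - r', q₂ n - y'⟫_ℝ := fun n =>
        add_nonneg (hA₁.1 _ _ _ _ (hu₁mem n) hr) (hA₂.1 _ _ _ _ (hu₂mem n) hy')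
      have hexp : ∀ n, ⟪q₁ n - y, u₁ n - r⟫_ℝ + ⟪u₂ n - r', q₂ n - y'⟫_ℝ
          = ⟪q₁ n, u₁ n + q₂ n⟫_ℝ + ⟪u₂ n - q₁ n, q₂ n⟫_ℝ
            - ⟪q₁ n, r⟫_ℝ - ⟪u₁ n, y⟫_ℝ + ⟪y, r⟫_ℝ
            - ⟪u₂ n, y'⟫_ℝ - ⟪q₂ n, r'⟫_ℝ + ⟪r', y'⟫_ℝ := by
        intro n
        simp only [inner_sub_left, inner_sub_right, inner_add_left, inner_add_right]
        rw [real_inner_comm y (u₁ n), real_inner_comm r' (q₂ n)]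
        ring
      have hT0 : Tendsto (fun n =>
          ⟪q₁ n, u₁ n + q₂ n⟫_ℝ + ⟪u₂ n - q₁ n, q₂ n⟫_ℝ
            - ⟪q₁ n, r⟫_ℝ - ⟪u₁ n, y⟫_ℝ + ⟪y, r⟫_ℝ
            - ⟪u₂ n, y'⟫_ℝ - ⟪q₂ n, r'⟫_ℝ + ⟪r', y'⟫_ℝ) (U : Filter ℕ)
          (𝓝 (0 + 0 - ⟪xs, r⟫_ℝ - -⟪vs, y⟫_ℝ + ⟪y, r⟫_ℝ
            - ⟪xs, y'⟫_ℝ - ⟪vs, r'⟫_ℝ + ⟪r', y'⟫_ℝ)) := by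
        exact ((((((hcross1.add hcross2).sub (hq1w r)).sub (hu1w y)).add
          tendsto_const_nhds).sub (hu2w y')).sub (hq2w r')).add tendsto_const_nhds
      have hT : Tendsto (fun n => ⟪q₁ n - y, u₁ n - r⟫_ℝ + ⟪u₂ n - r', q₂ n - y'⟫_ℝ)
          (U : Filter ℕ)
          (𝓝 (0 + 0 - ⟪xs, r⟫_ℝ - -⟪vs, y⟫_ℝ + ⟪y, r⟫_ℝ
            - ⟪xs, y'⟫_ℝ - ⟪vs, r'⟫_ℝ + ⟪r', y'⟫_ℝ)) :=
        hT0.congr (fun n => (hexp n).symm)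
      have hge := ge_of_tendsto' hT hS
      have hval : ⟪xs - y, -vs - r⟫_ℝ + ⟪xs - r', vs - y'⟫_ℝ
          = 0 + 0 - ⟪xs, r⟫_ℝ - -⟪vs, y⟫_ℝ + ⟪y, r⟫_ℝ
            - ⟪xs, y'⟫_ℝ - ⟪vs, r'⟫_ℝ + ⟪r', y'⟫_ℝ := by
        have e1 : ⟪y, vs⟫_ℝ = ⟪vs, y⟫_ℝ := real_inner_comm vs y
        have e2 : ⟪r', vs⟫_ℝ = ⟪vs, r'⟫_ℝ := real_inner_comm vs r'
        simp only [inner_sub_left, inner_sub_right, inner_neg_right]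
        rw [e1, e2]
        ring
      rw [hval]
      exact hge
    -- extract the two memberships
    have hA1mem : ∀ y r : H, r ∈ A₁ y → 0 ≤ ⟪xs - y, -vs - r⟫_ℝ := by
      by_contra hcon
      push_neg at hcon
      obtain ⟨y, r, hr, hneg⟩ := hcon
      have hvs : vs ∈ A₂ xs := by
        apply hA₂.2
        intro y'' v'' hv''
        have hk := hKTineq y r hr v'' y'' hv''
        linarith
      have hk := hKTineq y r hr vs xs hvs
      simp only [sub_self, inner_zero_left] at hk
      linarith
    have hxsA₁ : -vs ∈ A₁ xs := hA₁.2 xs (-vs) hA1mem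
    have hvsA₂ : vs ∈ A₂ xs := by
      apply hA₂.2
      intro y'' v'' hv''
      have hk := hKTineq xs (-vs) hxsA₁ v'' y'' hv''
      simp only [sub_self, inner_zero_left] at hk
      linarith
    refine ⟨xs, vs, ⟨hxsA₁, hvsA₂⟩, ?_⟩
    intro w
    have h0 := hl w
    rwa [← hle] at h0
  -- pick a distinguished cluster point
  obtain ⟨U₀, hU₀⟩ := Ultrafilter.exists_le (atTop : Filter ℕ)
  obtain ⟨xb, vb, ⟨hxbA, hvbA⟩, hlim₀⟩ := limKT U₀ hU₀
  -- uniqueness of the weak cluster point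
  have huniq : ∀ (U : Ultrafilter ℕ), (U : Filter ℕ) ≤ atTop →
      ∀ xs vs : H, (-vs ∈ A₁ xs ∧ vs ∈ A₂ xs) →
      (∀ w, Tendsto (fun n => ⟪z n, w⟫_ℝ) (U : Filter ℕ) (𝓝 ⟪emb xs vs, w⟫_ℝ)) →
      emb xs vs = emb xb vb := by
    intro U hU xs vs hKT hconv
    obtain ⟨h1, h2⟩ := hKT
    obtain ⟨_, L1, hL1⟩ := fej xb vb hxbA hvbA
    obtain ⟨_, L2, hL2⟩ := fej xs vs h1 h2
    have hφ : ∀ n, ‖z n - emb xb vb‖ ^ 2 - ‖z n - emb xs vs‖ ^ 2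
        = ‖emb xb vb‖ ^ 2 - ‖emb xs vs‖ ^ 2 - 2 * ⟪z n, emb xb vb - emb xs vs⟫_ℝ := by
      intro n
      have e1 : ‖z n - emb xb vb‖ ^ 2
          = ‖z n‖ ^ 2 - 2 * ⟪z n, emb xb vb⟫_ℝ + ‖emb xb vb‖ ^ 2 := norm_sub_sq_real _ _
      have e2 : ‖z n - emb xs vs‖ ^ 2
          = ‖z n‖ ^ 2 - 2 * ⟪z n, emb xs vs⟫_ℝ + ‖emb xs vs‖ ^ 2 := norm_sub_sq_real _ _
      rw [e1, e2, inner_sub_right]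
      ring
    have hφlim : Tendsto (fun n => ‖z n - emb xb vb‖ ^ 2 - ‖z n - emb xs vs‖ ^ 2) atTop
        (𝓝 (L1 ^ 2 - L2 ^ 2)) := (hL1.pow 2).sub (hL2.pow 2)
    have hinlim : Tendsto (fun n => ⟪z n, emb xb vb - emb xs vs⟫_ℝ) atTop
        (𝓝 ((‖emb xb vb‖ ^ 2 - ‖emb xs vs‖ ^ 2 - (L1 ^ 2 - L2 ^ 2)) / 2)) := by
      have h3 : Tendsto (fun n => (‖emb xb vb‖ ^ 2 - ‖emb xs vs‖ ^ 2
          - (‖z n - emb xb vb‖ ^ 2 - ‖z n - emb xs vs‖ ^ 2)) / 2) atTop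
          (𝓝 ((‖emb xb vb‖ ^ 2 - ‖emb xs vs‖ ^ 2 - (L1 ^ 2 - L2 ^ 2)) / 2)) :=
        (tendsto_const_nhds.sub hφlim).div_const 2
      refine h3.congr fun n => ?_
      rw [hφ n]
      ring
    have hc1 : ⟪emb xb vb, emb xb vb - emb xs vs⟫_ℝ
        = (‖emb xb vb‖ ^ 2 - ‖emb xs vs‖ ^ 2 - (L1 ^ 2 - L2 ^ 2)) / 2 :=
      tendsto_nhds_unique (hlim₀ (emb xb vb - emb xs vs)) (hinlim.mono_left hU₀)
    have hc2 : ⟪emb xs vs, emb xb vb - emb xs vs⟫_ℝ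
        = (‖emb xb vb‖ ^ 2 - ‖emb xs vs‖ ^ 2 - (L1 ^ 2 - L2 ^ 2)) / 2 :=
      tendsto_nhds_unique (hconv (emb xb vb - emb xs vs)) (hinlim.mono_left hU)
    have hzero : ⟪emb xb vb - emb xs vs, emb xb vb - emb xs vs⟫_ℝ = 0 := by
      rw [inner_sub_left, hc1, hc2]
      ring
    have := inner_self_eq_zero.mp hzero
    exact (sub_eq_zero.mp this).symm ▸ rfl
  -- the whole sequence converges weakly
  have hzw : ∀ w, Tendsto (fun n => ⟪z n, w⟫_ℝ) atTop (𝓝 ⟪emb xb vb, w⟫_ℝ) := by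
    intro w
    rw [tendsto_iff_ultrafilter]
    intro U hU
    obtain ⟨xs, vs, hKT, hconv⟩ := limKT U hU
    have heq := huniq U hU xs vs hKT hconv
    have h0 := hconv w
    rwa [heq] at h0
  refine ⟨xb, vb, ⟨-vb, hxbA, vb, hvbA, neg_add_cancel vb⟩,
    ⟨xb, xb, hxbA, hvbA, neg_add_cancel xb⟩, hxbA, hvbA, ?_, ?_⟩
  · intro w
    have h0 := hzw (emb w 0)
    have h1 : ∀ n, ⟪z n, emb w 0⟫_ℝ = ⟪x n, w⟫_ℝ := fun n => by
      simp only [hzdef]; rw [embinner]; simp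
    have h2 : ⟪emb xb vb, emb w 0⟫_ℝ = ⟪xb, w⟫_ℝ := by rw [embinner]; simp
    rw [h2] at h0
    exact h0.congr h1
  · intro w
    have h0 := hzw (emb 0 w)
    have h1 : ∀ n, ⟪z n, emb 0 w⟫_ℝ = ⟪v n, w⟫_ℝ := fun n => by
      simp only [hzdef]; rw [embinner]; simp
    have h2 : ⟪emb xb vb, emb 0 w⟫_ℝ = ⟪vb, w⟫_ℝ := by rw [embinner]; simp
    rw [h2] at h0
    exact h0.congr h1
end

section
/- Let H and G be real Hilbert spaces, let f : H → (−∞,∞] and g : G → (−∞,∞] be proper lower semicontinuous convex functions, let L : H → G be a nonzero bounded linear operator, let z ∈ H, r ∈ G, and suppose z belongs to the range of x ↦ ∂f(x) + L*(∂g(Lx − r)). Consider the primal problem minimize over x ∈ H of f(x) + g(Lx − r) − ⟨x, z⟩ and the dual problem minimize over v ∈ G of f*(z − L*v) + g*(v) + ⟨v, r⟩. Let (a_{1,n}), (b_{1,n}), (c_{1,n}) be absolutely summable sequences in H and (a_{2,n}), (b_{2,n}), (c_{2,n}) absolutely summable sequences in G, let x_0 ∈ H, v_0 ∈ G, ε ∈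 (0, 1/(‖L‖+1)), let (γ_n) be a sequence in [ε, (1−ε)/‖L‖], and define for every n: y_{1,n} = x_n − γ_n(L*v_n + a_{1,n}); y_{2,n} = v_n + γ_n(L x_n + a_{2,n}); p_{1,n} = prox_{γ_n f}(y_{1,n} + γ_n z) + b_{1,n}; p_{2,n} = prox_{γ_n g*}(y_{2,n} − γ_n r) + b_{2,n}; q_{1,n} = p_{1,n} − γ_n(L*p_{2,n} + c_{1,n}); q_{2,n} = p_{2,n} + γ_n(L p_{1,n} + c_{2,n}); x_{n+1} = x_n − y_{1,n} + q_{1,n}; v_{n+1} = v_n − y_{2,n} + q_{2,n}. Then there exist a solution x̄ of the primal problem and a solution v̄ of the dual problem with z − L*v̄ ∈ ∂f(x̄) and v̄ ∈ ∂g(Lx̄ − r), such that x_n ⇀ x̄, p_{1,n} ⇀ x̄, v_n ⇀ v̄, and p_{2,n} ⇀ v̄ (weak convergence); moreover x_n − p_{1,n} → 0 and v_n − p_{2,n} → 0 in norm. -/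
open scoped InnerProductSpace
open Filter Topology

/-- A function `f : H → (−∞,∞]` (no value `⊥`, somewhere finite) is proper. -/
def ProperFn {H : Type*} (f : H → EReal) : Prop :=
  (∀ x, f x ≠ ⊥) ∧ ∃ x, f x ≠ ⊤

/-- Convexity of an extended-real-valued function. -/
def ConvexFn {H : Type*} [AddCommGroup H] [Module ℝ H] (f : H → EReal) : Prop :=
  ∀ x y : H, ∀ t : ℝ, t ∈ Set.Icc (0:ℝ) 1 →
    f (t • x + (1 - t) • y) ≤ (t : EReal) * f x + ((1 - t) : EReal) * f y

/-- The Fenchel conjugate `f*(u) = sup_x (⟪x,u⟫ − f x)`. -/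
noncomputable def conjFn {H : Type*} [NormedAddCommGroup H] [InnerProductSpace ℝ H]
    (f : H → EReal) (u : H) : EReal :=
  ⨆ x : H, ((⟪x, u⟫_ℝ : EReal) - f x)

/-- The convex subdifferential `∂f(x) = {u | ∀ y, ⟪y − x, u⟫ + f x ≤ f y}`. -/
def subdiff {H : Type*} [NormedAddCommGroup H] [InnerProductSpace ℝ H]
    (f : H → EReal) (x : H) : Set H :=
  {u : H | ∀ y : H, (⟪y - x, u⟫_ℝ : EReal) + f x ≤ f y}

section Helpers
variable {E : Type*} [NormedAddCommGroup E] [InnerProductSpace ℝ E]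

/-- Monotonicity of a set-valued operator. -/
def MonoOp (A : E → Set E) : Prop :=
  ∀ ⦃x u x' u'⦄, u ∈ A x → u' ∈ A x' → 0 ≤ ⟪x - x', u - u'⟫_ℝ

lemma subdiff_finite {φ : E → EReal} (hbot : ∀ x, φ x ≠ ⊥) {x₁ : E} (h₁ : φ x₁ ≠ ⊤)
    {x u : E} (hu : u ∈ subdiff φ x) : ∃ a : ℝ, φ x = (a : EReal) := by
  have h := hu x₁
  by_cases htop : φ x = ⊤
  · rw [htop, EReal.coe_add_top] at h
    exact absurd (top_le_iff.mp h) h₁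
  · exact ⟨(φ x).toReal, (EReal.coe_toReal htop (hbot x)).symm⟩

lemma subdiff_real {φ : E → EReal} {x u : E} (hu : u ∈ subdiff φ x) {a b : ℝ} {y : E}
    (hx : φ x = (a : EReal)) (hy : φ y = (b : EReal)) : ⟪y - x, u⟫_ℝ + a ≤ b := by
  have h := hu y
  rw [hx, hy, ← EReal.coe_add] at h
  exact EReal.coe_le_coe_iff.mp h

lemma subdiff_mono {φ : E → EReal} (hbot : ∀ x, φ x ≠ ⊥) {x₁ : E} (h₁ : φ x₁ ≠ ⊤) :
    MonoOp (subdiff φ) := by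
  intro x u x' u' hu hu'
  obtain ⟨a, ha⟩ := subdiff_finite hbot h₁ hu
  obtain ⟨a', ha'⟩ := subdiff_finite hbot h₁ hu'
  have h1 : ⟪x' - x, u⟫_ℝ + a ≤ a' := subdiff_real hu ha ha'
  have h2 : ⟪x - x', u'⟫_ℝ + a' ≤ a := subdiff_real hu' ha' ha
  have e1 : ⟪x' - x, u⟫_ℝ = -⟪x - x', u⟫_ℝ := by rw [← inner_neg_left, neg_sub]
  have e2 : ⟪x - x', u - u'⟫_ℝ = ⟪x - x', u⟫_ℝ - ⟪x - x', u'⟫_ℝ := inner_sub_right _ _ _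
  linarith

lemma resolvent_nonexpansive {A : E → Set E} (hA : MonoOp A) {γ : ℝ} (hγ : 0 < γ)
    {J : E → E} (hJ : IsResolvent γ A J) (w w' : E) : ‖J w - J w'‖ ≤ ‖w - w'‖ := by
  obtain ⟨u, hu, hw⟩ := hJ w
  obtain ⟨u', hu', hw'⟩ := hJ w'
  have hmono := hA hu hu'
  have hdiff : w - w' = (J w - J w') + γ • (u - u') := by
    conv_lhs => rw [hw, hw']
    rw [smul_sub]; abel
  have h1 : ⟪J w - J w', w - w'⟫_ℝ = ‖J w - J w'‖ ^ 2 + γ * ⟪J w - J w', u - u'⟫_ℝ := by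
    rw [hdiff, inner_add_right, inner_smul_right, real_inner_self_eq_norm_sq]
  have h2 : ⟪J w - J w', w - w'⟫_ℝ ≤ ‖J w - J w'‖ * ‖w - w'‖ := real_inner_le_norm _ _
  have h3 : ‖J w - J w'‖ ^ 2 ≤ ‖J w - J w'‖ * ‖w - w'‖ := by nlinarith
  rcases eq_or_lt_of_le (norm_nonneg (J w - J w')) with h0 | h0
  · rw [← h0]; exact norm_nonneg _
  · nlinarith

lemma minty_sum [CompleteSpace E] {A : E → Set E} (hA : MonoOp A) {γ : ℝ} (hγ : 0 < γ)
    {J : E → E} (hJ : IsResolvent γ A J) (B : E →L[ℝ] E) {β : ℝ} (hβ : 0 ≤ β)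
    (hBle : ∀ q : E, ‖B q‖ ≤ β * ‖q‖) (hcontr : γ * β < 1) (p : E)
    (hp : ∀ s w, w ∈ A s → 0 ≤ ⟪p - s, -(w + B s)⟫_ℝ) : ∃ w ∈ A p, w + B p = 0 := by
  set Φ : E → E := fun S => J (p - γ • B S) with hΦ
  have hlip : LipschitzWith ⟨γ * β, by positivity⟩ Φ := by
    apply LipschitzWith.of_dist_le_mul
    intro S S'
    have h1 : ‖Φ S - Φ S'‖ ≤ ‖(p - γ • B S) - (p - γ • B S')‖ :=
      resolvent_nonexpansive hA hγ hJ _ _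
    have h2 : (p - γ • B S) - (p - γ • B S') = γ • (B S' - B S) := by
      rw [smul_sub]; abel
    rw [dist_eq_norm, dist_eq_norm]
    calc ‖Φ S - Φ S'‖ ≤ ‖γ • (B S' - B S)‖ := by rw [← h2]; exact h1
      _ = γ * ‖B (S' - S)‖ := by rw [norm_smul, Real.norm_of_nonneg hγ.le, map_sub]
      _ ≤ γ * (β * ‖S' - S‖) := by
          exact mul_le_mul_of_nonneg_left (hBle _) hγ.le
      _ = γ * β * ‖S - S'‖ := by rw [norm_sub_rev]; ring
  have hcon : ContractingWith ⟨γ * β, by positivity⟩ Φ := ⟨by exact_mod_cast hcontr, hlip⟩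
  obtain ⟨S, hS, -⟩ := hcon.exists_fixedPoint p (edist_ne_top _ _)
  obtain ⟨u, hu, hSu⟩ := hJ (p - γ • B S)
  have hfix : J (p - γ • B S) = S := hS
  rw [hfix] at hSu hu
  -- p - γ • B S = S + γ • u, so p - S = γ • (u + B S)
  have hp2 : p = S + γ • u + γ • (B S) := sub_eq_iff_eq_add.mp hSu
  have hpS : p - S = γ • (u + B S) := by
    rw [hp2, smul_add]; abel
  have h0 := hp S u hu
  rw [hpS, inner_smul_left, RCLike.conj_to_real] at h0
  have hn : ⟪u + B S, -(u + B S)⟫_ℝ = -‖u + B S‖ ^ 2 := by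
    rw [inner_neg_right, real_inner_self_eq_norm_sq]
  rw [hn] at h0
  have huz : u + B S = 0 := by
    have h4 : ‖u + B S‖ ^ 2 ≤ 0 := by nlinarith
    have := norm_nonneg (u + B S)
    have h5 : ‖u + B S‖ = 0 := by nlinarith
    exact norm_eq_zero.mp h5
  have hpSe : p = S := by
    rw [huz, smul_zero] at hpS
    exact sub_eq_zero.mp hpS
  exact ⟨u, hpSe ▸ hu, hpSe ▸ huz⟩

end Helpers

section Helpers2
variable {E : Type*} [NormedAddCommGroup E] [InnerProductSpace ℝ E]

lemma tseng_step {A : E → Set E} (hA : MonoOp A) {B : E →L[ℝ] E}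
    (hskew : ∀ q : E, ⟪q, B q⟫_ℝ = 0) {β γ : ℝ} (hB : ∀ q : E, ‖B q‖ ≤ β * ‖q‖)
    (hγ : 0 < γ) {X Xb P U W : E} (hU : U ∈ A P) (hXP : X - P = γ • (B X + U))
    (hW : W ∈ A Xb) (hWB : W + B Xb = 0) :
    ‖(P + γ • (B X - B P)) - Xb‖ ^ 2 ≤
      ‖X - Xb‖ ^ 2 - ‖X - P‖ ^ 2 + (γ * β) ^ 2 * ‖X - P‖ ^ 2 := by
  set D := P - Xb with hD
  set Ee := B X - B P with hEe
  have hIde : (P + γ • (B X - B P)) - Xb = D + γ • Ee := by rw [hD, hEe]; abel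
  have h1 : ‖D + γ • Ee‖ ^ 2 = ‖D‖ ^ 2 + 2 * (γ * ⟪D, Ee⟫_ℝ) + γ ^ 2 * ‖Ee‖ ^ 2 := by
    rw [norm_add_sq_real, inner_smul_right, norm_smul, Real.norm_of_nonneg hγ.le, mul_pow]
  have h2 : ‖X - Xb‖ ^ 2 = ‖D‖ ^ 2 + 2 * ⟪D, X - P⟫_ℝ + ‖X - P‖ ^ 2 := by
    have : X - Xb = D + (X - P) := by rw [hD]; abel
    rw [this, norm_add_sq_real]
  -- key cross term
  have hWneg : W = -(B Xb) := eq_neg_of_add_eq_zero_left hWB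
  have hBD : W + B P = B D := by
    have h3 : B D = B P - B Xb := by rw [hD, map_sub]
    rw [h3, hWneg]; abel
  have hkey : ⟪D, X - P⟫_ℝ - γ * ⟪D, Ee⟫_ℝ = γ * ⟪D, U - W⟫_ℝ := by
    have e1 : (X - P) - γ • Ee = γ • (U + B P) := by
      rw [hXP, hEe]; module
    have e2 : ⟪D, (X - P) - γ • Ee⟫_ℝ = ⟪D, X - P⟫_ℝ - γ * ⟪D, Ee⟫_ℝ := by
      rw [inner_sub_right, inner_smul_right]
    have e3 : (U + B P : E) = (U - W) + B D := by rw [← hBD]; abel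
    have e4 : ⟪D, B D⟫_ℝ = 0 := hskew D
    rw [← e2, e1, inner_smul_right, e3, inner_add_right, e4, add_zero]
  have hmono : 0 ≤ ⟪P - Xb, U - W⟫_ℝ := hA hU hW
  have hEbound : ‖Ee‖ ≤ β * ‖X - P‖ := by
    rw [hEe, ← map_sub]; exact hB _
  have hEbound2 : ‖Ee‖ ^ 2 ≤ β ^ 2 * ‖X - P‖ ^ 2 := by
    have h0 : (0:ℝ) ≤ β * ‖X - P‖ := le_trans (norm_nonneg _) hEbound
    nlinarith [norm_nonneg Ee]
  have hcross : γ * ⟪D, Ee⟫_ℝ ≤ ⟪D, X - P⟫_ℝ := by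
    have := mul_nonneg hγ.le hmono
    rw [hD] at hkey ⊢
    linarith
  rw [hIde, h1]
  nlinarith [sq_nonneg γ]

lemma ultrafilter_weak_limit [CompleteSpace E] (X : ℕ → E) (R : ℝ)
    (hR : ∀ n, ‖X n‖ ≤ R) (V : Ultrafilter ℕ) :
    ∃ p : E, ‖p‖ ≤ R ∧ ∀ y : E, Tendsto (fun n => ⟪X n, y⟫_ℝ) ↑V (𝓝 ⟪p, y⟫_ℝ) := by
  have hR0 : 0 ≤ R := le_trans (norm_nonneg (X 0)) (hR 0)
  have hbound : ∀ (y : E) (n : ℕ), |⟪X n, y⟫_ℝ| ≤ R * ‖y‖ := fun y n =>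
    le_trans (abs_real_inner_le_norm _ _) (mul_le_mul_of_nonneg_right (hR n) (norm_nonneg y))
  have hlim : ∀ y : E, ∃ c : ℝ, Tendsto (fun n => ⟪X n, y⟫_ℝ) ↑V (𝓝 c) := by
    intro y
    have hmem : ↑(V.map fun n => ⟪X n, y⟫_ℝ) ≤ 𝓟 (Set.Icc (-(R * ‖y‖)) (R * ‖y‖)) := by
      rw [le_principal_iff, Ultrafilter.coe_map, Filter.mem_map]
      exact Filter.univ_mem' (fun n => abs_le.mp (hbound y n))
    obtain ⟨c, -, hc⟩ := isCompact_Icc.ultrafilter_le_nhds _ hmem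
    exact ⟨c, hc⟩
  choose c hc using hlim
  have hadd : ∀ y y', c (y + y') = c y + c y' := by
    intro y y'
    have h1 : Tendsto (fun n => ⟪X n, y + y'⟫_ℝ) ↑V (𝓝 (c y + c y')) := by
      have := (hc y).add (hc y')
      simpa [inner_add_right] using this
    exact tendsto_nhds_unique (hc (y + y')) h1
  have hsmul : ∀ (t : ℝ) (y : E), c (t • y) = t * c y := by
    intro t y
    have h1 : Tendsto (fun n => ⟪X n, t • y⟫_ℝ) ↑V (𝓝 (t * c y)) := by
      have := (hc y).const_mul t
      simpa [inner_smul_right] using this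
    exact tendsto_nhds_unique (hc (t • y)) h1
  have hcb : ∀ y, |c y| ≤ R * ‖y‖ := by
    intro y
    have hclosed : ∀ᶠ n in (↑V : Filter ℕ), (fun n => ⟪X n, y⟫_ℝ) n ∈
        Set.Icc (-(R * ‖y‖)) (R * ‖y‖) :=
      Filter.Eventually.of_forall (fun n => abs_le.mp (hbound y n))
    have := (isClosed_Icc (a := -(R * ‖y‖)) (b := R * ‖y‖)).mem_of_tendsto (hc y) hclosed
    exact abs_le.mpr this
  let lm : E →ₗ[ℝ] ℝ :=
    { toFun := c, map_add' := hadd, map_smul' := hsmul }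
  let lmc : E →L[ℝ] ℝ := LinearMap.mkContinuous lm R (fun y => by
    rw [Real.norm_eq_abs]; exact hcb y)
  refine ⟨(InnerProductSpace.toDual ℝ E).symm lmc, ?_, ?_⟩
  · rw [show ‖(InnerProductSpace.toDual ℝ E).symm lmc‖ = ‖lmc‖ from
      LinearIsometryEquiv.norm_map _ lmc]
    exact lm.mkContinuous_norm_le hR0 _
  · intro y
    have : ⟪(InnerProductSpace.toDual ℝ E).symm lmc, y⟫_ℝ = lmc y := by
      rw [← InnerProductSpace.toDual_apply_apply, LinearIsometryEquiv.apply_symm_apply]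
    rw [this]
    exact hc y

lemma seq_converges {a e : ℕ → ℝ} (ha : ∀ n, 0 ≤ a n) (he : ∀ n, 0 ≤ e n)
    (hrec : ∀ n, a (n + 1) ≤ a n + e n) (hsum : Summable e) :
    ∃ l, Tendsto a atTop (𝓝 l) := by
  set b : ℕ → ℝ := fun n => a n - ∑ k ∈ Finset.range n, e k with hb
  have hanti : Antitone b := antitone_nat_of_succ_le (fun n => by
    have := hrec n
    simp only [hb, Finset.sum_range_succ]
    linarith)
  have hbdd : ∀ n, -(∑' k, e k) ≤ b n := by
    intro n
    have h1 : ∑ k ∈ Finset.range n, e k ≤ ∑' k, e k := Summable.sum_le_tsum _ (fun k _ => he k) hsum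
    have := ha n
    simp only [hb]
    linarith
  have hconv : ∃ lb, Tendsto b atTop (𝓝 lb) := by
    refine ⟨⨅ n, b n, ?_⟩
    exact tendsto_atTop_ciInf hanti ⟨-(∑' k, e k), fun x ⟨n, hn⟩ => hn ▸ hbdd n⟩
  obtain ⟨lb, hlb⟩ := hconv
  have hsums : Tendsto (fun n => ∑ k ∈ Finset.range n, e k) atTop (𝓝 (∑' k, e k)) :=
    hsum.hasSum.tendsto_sum_nat
  refine ⟨lb + ∑' k, e k, ?_⟩
  have : a = fun n => b n + ∑ k ∈ Finset.range n, e k := by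
    funext n; simp [hb]
  rw [this]
  exact hlb.add hsums

lemma seq_sq_to_zero {d : ℕ → ℝ} {C : ℝ} (hd : ∀ n, 0 ≤ d n)
    (hC : ∀ n, ∑ k ∈ Finset.range n, d k ≤ C) : Tendsto d atTop (𝓝 0) :=
  (summable_of_sum_range_le hd hC).tendsto_atTop_zero

end Helpers2

lemma ereal_tricho (x : EReal) : x = ⊥ ∨ x = ⊤ ∨ ∃ a : ℝ, x = (a : EReal) := by
  by_cases h1 : x = ⊥
  · exact Or.inl h1
  by_cases h2 : x = ⊤
  · exact Or.inr (Or.inl h2)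
  · exact Or.inr (Or.inr ⟨x.toReal, (EReal.coe_toReal h2 h1).symm⟩)

lemma ereal_lift {w : EReal} (hb : w ≠ ⊥) {s : ℝ} (h : w ≤ (s : EReal)) :
    ∃ α : ℝ, w = (α : EReal) ∧ α ≤ s := by
  rcases ereal_tricho w with h1 | h1 | ⟨α, h1⟩
  · exact absurd h1 hb
  · exact absurd (top_le_iff.mp (h1 ▸ h)) (EReal.coe_ne_top s)
  · exact ⟨α, h1, EReal.coe_le_coe_iff.mp (h1 ▸ h)⟩

section Conj
variable {E : Type*} [NormedAddCommGroup E] [InnerProductSpace ℝ E]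

lemma le_conjFn (φ : E → EReal) (x v : E) :
    (⟪x, v⟫_ℝ : EReal) - φ x ≤ conjFn φ v := le_iSup (fun x => (⟪x, v⟫_ℝ : EReal) - φ x) x

lemma conjFn_le {φ : E → EReal} (hbot : ∀ x, φ x ≠ ⊥) {v : E} {d : ℝ}
    (h : ∀ x, ((⟪x, v⟫_ℝ - d : ℝ) : EReal) ≤ φ x) : conjFn φ v ≤ (d : EReal) := by
  apply iSup_le
  intro x
  rcases ereal_tricho (φ x) with h1 | h1 | ⟨β, h1⟩
  · exact absurd h1 (hbot x)
  · rw [h1, EReal.sub_top]; exact bot_le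
  · rw [h1, ← EReal.coe_sub, EReal.coe_le_coe_iff]
    have := EReal.coe_le_coe_iff.mp (h1 ▸ h x)
    linarith

lemma conjFn_ne_bot {φ : E → EReal} {x₀ : E} {α : ℝ} (h₀ : φ x₀ = (α : EReal)) (v : E) :
    conjFn φ v ≠ ⊥ := by
  have h := le_conjFn φ x₀ v
  rw [h₀, ← EReal.coe_sub] at h
  intro hb
  rw [hb, le_bot_iff] at h
  exact EReal.coe_ne_bot _ h

lemma sub_conjFn_le {φ : E → EReal} (hbot : ∀ x, φ x ≠ ⊥) {v : E} {δ : ℝ}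
    (hδ : conjFn φ v = (δ : EReal)) (y : E) : ((⟪y, v⟫_ℝ - δ : ℝ) : EReal) ≤ φ y := by
  have h := le_conjFn φ y v
  rw [hδ] at h
  rcases ereal_tricho (φ y) with h1 | h1 | ⟨β, h1⟩
  · exact absurd h1 (hbot y)
  · rw [h1]; exact le_top
  · rw [h1, EReal.coe_le_coe_iff]
    rw [h1, ← EReal.coe_sub, EReal.coe_le_coe_iff] at h
    linarith

/-- The epigraph of a convex lsc function is closed and convex; separation of a point
strictly below the epigraph. -/
lemma epi_separation [CompleteSpace E] {φ : E → EReal} (hp : ProperFn φ)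
    (hlsc : LowerSemicontinuous φ) (hcvx : ConvexFn φ) {w : E} {m : ℝ}
    (hm : (m : EReal) < φ w) :
    ∃ (w' : E) (cc u : ℝ), 0 ≤ cc ∧ ⟪w, w'⟫_ℝ + cc * m < u ∧
      ∀ (x : E) (t : ℝ), φ x ≤ (t : EReal) → u < ⟪x, w'⟫_ℝ + cc * t := by
  set epi : Set (E × ℝ) := {p : E × ℝ | φ p.1 ≤ (p.2 : EReal)} with hepi
  have hconv : Convex ℝ epi := by
    rintro ⟨x, s⟩ hx ⟨y, t⟩ hy a b ha hb hab
    simp only [hepi, Set.mem_setOf_eq] at hx hy ⊢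
    show φ (a • x + b • y) ≤ ((a • s + b • t : ℝ) : EReal)
    rw [smul_eq_mul, smul_eq_mul]
    rcases eq_or_lt_of_le ha with ha0 | ha0
    · have hb1 : b = 1 := by linarith
      rw [← ha0, hb1, zero_smul, one_smul, zero_add, zero_mul, one_mul, zero_add]
      exact hy
    rcases eq_or_lt_of_le hb with hb0 | hb0
    · have ha1 : a = 1 := by linarith
      rw [← hb0, ha1, zero_smul, one_smul, add_zero, zero_mul, one_mul, add_zero]
      exact hx
    obtain ⟨α, hα, hαs⟩ := ereal_lift (hp.1 x) hx
    obtain ⟨β, hβ, hβt⟩ := ereal_lift (hp.1 y) hy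
    have hb' : b = 1 - a := by linarith
    have hc := hcvx x y a ⟨ha, by linarith⟩
    rw [hα, hβ] at hc
    norm_cast at hc
    calc φ (a • x + b • y) = φ (a • x + (1 - a) • y) := by rw [hb']
      _ ≤ ((a * α + (1 - a) * β : ℝ) : EReal) := hc
      _ ≤ ((a * s + b * t : ℝ) : EReal) := by
          rw [EReal.coe_le_coe_iff, hb']
          have h5 := mul_le_mul_of_nonneg_left hαs ha
          have h6 := mul_le_mul_of_nonneg_left hβt (by linarith : (0:ℝ) ≤ 1 - a)
          linarith
  have hclosed : IsClosed epi := by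
    rw [← isOpen_compl_iff, isOpen_iff_mem_nhds]
    rintro ⟨x, t⟩ h
    simp only [hepi, Set.mem_compl_iff, Set.mem_setOf_eq, not_le] at h
    obtain ⟨cr, hcr1, hcr2⟩ := EReal.exists_between_coe_real h
    have h1 : {x' : E | (cr : EReal) < φ x'} ∈ 𝓝 x := hlsc x cr hcr2
    have h2 : Set.Iio cr ∈ 𝓝 t := Iio_mem_nhds (EReal.coe_lt_coe_iff.mp hcr1)
    apply Filter.mem_of_superset (prod_mem_nhds h1 h2)
    rintro ⟨x', t'⟩ ⟨hx', ht'⟩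
    simp only [Set.mem_compl_iff, hepi, Set.mem_setOf_eq, not_le]
    exact lt_trans (EReal.coe_lt_coe_iff.mpr ht') hx'
  have hwm : ((w, m) : E × ℝ) ∉ epi := by
    simp only [hepi, Set.mem_setOf_eq, not_le]
    exact hm
  obtain ⟨ψ, u, hψ1, hψ2⟩ := geometric_hahn_banach_point_closed hconv hclosed hwm
  set w' : E := (InnerProductSpace.toDual ℝ E).symm (ψ.comp (ContinuousLinearMap.inl ℝ E ℝ))
  set cc : ℝ := ψ (0, 1) with hcc
  have hdecomp : ∀ (x : E) (t : ℝ), ψ (x, t) = ⟪x, w'⟫_ℝ + cc * t := by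
    intro x t
    have h1 : ((x, t) : E × ℝ) = (x, 0) + t • (0, 1) := by
      simp [Prod.ext_iff]
    rw [h1, map_add, map_smul]
    have h2 : ψ (x, 0) = ⟪x, w'⟫_ℝ := by
      have e1 : ψ (x, 0) = (ψ.comp (ContinuousLinearMap.inl ℝ E ℝ)) x := by
        simp [ContinuousLinearMap.inl]
      have e2 : ⟪w', x⟫_ℝ = (ψ.comp (ContinuousLinearMap.inl ℝ E ℝ)) x :=
        InnerProductSpace.toDual_symm_apply
      rw [e1, ← e2, real_inner_comm]
    rw [h2]
    simp [hcc, smul_eq_mul]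
    ring
  obtain ⟨x₀, hx₀⟩ := hp.2
  set α : ℝ := (φ x₀).toReal with hαdef
  have hα : φ x₀ = (α : EReal) := (EReal.coe_toReal hx₀ (hp.1 x₀)).symm
  have hccnn : 0 ≤ cc := by
    by_contra hneg
    push_neg at hneg
    obtain ⟨n, hn⟩ := exists_nat_gt ((⟪x₀, w'⟫_ℝ + cc * α - u) / (-cc))
    have hmem : ((x₀, α + n) : E × ℝ) ∈ epi := by
      simp only [hepi, Set.mem_setOf_eq, hα, EReal.coe_le_coe_iff]
      linarith [Nat.cast_nonneg (α := ℝ) n]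
    have hu2 := hψ2 _ hmem
    rw [hdecomp] at hu2
    rw [div_lt_iff₀ (by linarith : (0:ℝ) < -cc)] at hn
    nlinarith [hn, hu2]
  refine ⟨w', cc, u, hccnn, ?_, ?_⟩
  · have := hψ1
    rw [hdecomp] at this
    exact this
  · intro x t hxt
    have hmem : ((x, t) : E × ℝ) ∈ epi := hxt
    have := hψ2 _ hmem
    rw [hdecomp] at this
    exact this

lemma affine_minorant [CompleteSpace E] {φ : E → EReal} (hp : ProperFn φ)
    (hlsc : LowerSemicontinuous φ) (hcvx : ConvexFn φ) :
    ∃ (v : E) (d : ℝ), ∀ x, ((⟪x, v⟫_ℝ - d : ℝ) : EReal) ≤ φ x := by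
  obtain ⟨x₀, hx₀⟩ := hp.2
  set α := (φ x₀).toReal with hαdef
  have hα : φ x₀ = (α : EReal) := (EReal.coe_toReal hx₀ (hp.1 x₀)).symm
  have hm : ((α - 1 : ℝ) : EReal) < φ x₀ := by
    rw [hα, EReal.coe_lt_coe_iff]; linarith
  obtain ⟨w', cc, u, hcc, hs1, hs2⟩ := epi_separation hp hlsc hcvx hm
  have hccpos : 0 < cc := by
    have h1 := hs2 x₀ α (le_of_eq hα)
    rcases eq_or_lt_of_le hcc with h | h
    · rw [← h] at hs1 h1; simp at hs1 h1; linarith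
    · exact h
  refine ⟨-(cc⁻¹ • w'), -(u / cc), fun x => ?_⟩
  rcases ereal_tricho (φ x) with h1 | h1 | ⟨β, h1⟩
  · exact absurd h1 (hp.1 x)
  · rw [h1]; exact le_top
  · rw [h1, EReal.coe_le_coe_iff]
    have h2 := hs2 x β (le_of_eq h1)
    have h3 : ⟪x, -(cc⁻¹ • w')⟫_ℝ = -(cc⁻¹ * ⟪x, w'⟫_ℝ) := by
      rw [inner_neg_right, real_inner_smul_right]
    rw [h3]
    have h5 : (u - ⟪x, w'⟫_ℝ) / cc < β := by
      rw [div_lt_iff₀ hccpos]; nlinarith [h2]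
    have h6 : -(cc⁻¹ * ⟪x, w'⟫_ℝ) - -(u / cc) = (u - ⟪x, w'⟫_ℝ) / cc := by
      field_simp
      ring
    linarith [h6 ▸ h5]

end Conj

section Conj2
variable {E : Type*} [NormedAddCommGroup E] [InnerProductSpace ℝ E]

/-- Easy direction: a subgradient of `φ` at `w` yields Fenchel equality and
`w ∈ ∂φ*(v)`. -/
lemma subdiff_conj_flip {φ : E → EReal} {w v : E} {β : ℝ} (hβ : φ w = (β : EReal))
    (hv : v ∈ subdiff φ w) :
    conjFn φ v = ((⟪w, v⟫_ℝ - β : ℝ) : EReal) ∧ w ∈ subdiff (conjFn φ) v := by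
  have hle : conjFn φ v ≤ ((⟪w, v⟫_ℝ - β : ℝ) : EReal) := by
    apply iSup_le
    intro x
    have hx := hv x
    rw [hβ] at hx
    rcases ereal_tricho (φ x) with h1 | h1 | ⟨t, h1⟩
    · rw [h1, le_bot_iff, ← EReal.coe_add] at hx
      exact absurd hx (EReal.coe_ne_bot _)
    · rw [h1, EReal.sub_top]; exact bot_le
    · rw [h1, ← EReal.coe_sub, EReal.coe_le_coe_iff]
      rw [h1, ← EReal.coe_add, EReal.coe_le_coe_iff] at hx
      have e1 : ⟪x - w, v⟫_ℝ = ⟪x, v⟫_ℝ - ⟪w, v⟫_ℝ := inner_sub_left _ _ _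
      linarith
  have hge : ((⟪w, v⟫_ℝ - β : ℝ) : EReal) ≤ conjFn φ v := by
    have := le_conjFn φ w v
    rw [hβ, ← EReal.coe_sub] at this
    exact this
  have heq := le_antisymm hle hge
  refine ⟨heq, fun y => ?_⟩
  have h1 : ((⟪w, y⟫_ℝ - β : ℝ) : EReal) ≤ conjFn φ y := by
    have := le_conjFn φ w y
    rw [hβ, ← EReal.coe_sub] at this
    exact this
  rw [heq, ← EReal.coe_add]
  refine le_trans (le_of_eq ?_) h1
  rw [EReal.coe_eq_coe_iff]
  have e1 : ⟪y - v, w⟫_ℝ = ⟪y, w⟫_ℝ - ⟪v, w⟫_ℝ := inner_sub_left _ _ _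
  rw [e1, real_inner_comm y w, real_inner_comm v w]
  ring

/-- Hard direction (Fenchel–Moreau at a point): `w ∈ ∂φ*(v)` yields `v ∈ ∂φ(w)`. -/
lemma mem_subdiff_of_conj [CompleteSpace E] {φ : E → EReal} (hp : ProperFn φ)
    (hlsc : LowerSemicontinuous φ) (hcvx : ConvexFn φ) {v w : E}
    (hw : w ∈ subdiff (conjFn φ) v) : v ∈ subdiff φ w := by
  obtain ⟨x₀, hx₀⟩ := hp.2
  set α : ℝ := (φ x₀).toReal with hαdef
  have hα : φ x₀ = (α : EReal) := (EReal.coe_toReal hx₀ (hp.1 x₀)).symm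
  have hnbot : ∀ u : E, conjFn φ u ≠ ⊥ := conjFn_ne_bot hα
  obtain ⟨u₀, d₀, hmin⟩ := affine_minorant hp hlsc hcvx
  have hcu₀ : conjFn φ u₀ ≤ (d₀ : EReal) := conjFn_le hp.1 hmin
  have hδ : ∃ δ : ℝ, conjFn φ v = (δ : EReal) :=
    subdiff_finite hnbot (fun h => absurd (top_le_iff.mp (h ▸ hcu₀)) (EReal.coe_ne_top d₀)) hw
  obtain ⟨δ, hδ⟩ := hδ
  set m' : ℝ := ⟪w, v⟫_ℝ - δ with hm'
  -- biconjugate-type bound : every conjugate term at w is at most m'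
  have hterm : ∀ (u : E) (σ : ℝ), conjFn φ u = (σ : EReal) → ⟪u, w⟫_ℝ - σ ≤ m' := by
    intro u σ hσ
    have h1 := hw u
    rw [hδ, hσ, ← EReal.coe_add, EReal.coe_le_coe_iff] at h1
    have e1 : ⟪u - v, w⟫_ℝ = ⟪u, w⟫_ℝ - ⟪v, w⟫_ℝ := inner_sub_left _ _ _
    have e2 : ⟪v, w⟫_ℝ = ⟪w, v⟫_ℝ := real_inner_comm _ _
    simp only [hm']
    linarith
  -- main claim : φ w ≤ m'
  have hmain : φ w ≤ ((m' : ℝ) : EReal) := by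
    by_contra hcon
    push_neg at hcon
    obtain ⟨w', cc, u, hcc0, hs1, hs2⟩ := epi_separation hp hlsc hcvx hcon
    rcases eq_or_lt_of_le hcc0 with hcc | hccpos
    · -- vertical separation : cc = 0
      have hs1' : ⟪w, w'⟫_ℝ < u := by rw [← hcc] at hs1; simpa using hs1
      have hs2' : ∀ (x : E) (t : ℝ), φ x ≤ (t : EReal) → u < ⟪x, w'⟫_ℝ := by
        intro x t hxt
        have := hs2 x t hxt
        rw [← hcc] at this; simpa using this
      set q : ℝ := u - ⟪w, w'⟫_ℝ with hq
      have hqpos : 0 < q := by rw [hq]; linarith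
      set lam : ℝ := (max 0 (m' - (⟪w, u₀⟫_ℝ - d₀)) + 1) / q with hlam
      have hlampos : 0 < lam := by
        apply div_pos _ hqpos
        have := le_max_left (0:ℝ) (m' - (⟪w, u₀⟫_ℝ - d₀))
        linarith
      have hlamq : m' - (⟪w, u₀⟫_ℝ - d₀) < lam * q := by
        rw [hlam, div_mul_cancel₀ _ (ne_of_gt hqpos)]
        have := le_max_right (0:ℝ) (m' - (⟪w, u₀⟫_ℝ - d₀))
        linarith
      set u₁ : E := u₀ - lam • w' with hu₁
      have hmin1 : ∀ x, ((⟪x, u₁⟫_ℝ - (d₀ - lam * u) : ℝ) : EReal) ≤ φ x := by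
        intro x
        rcases ereal_tricho (φ x) with h1 | h1 | ⟨t, h1⟩
        · exact absurd h1 (hp.1 x)
        · rw [h1]; exact le_top
        · rw [h1, EReal.coe_le_coe_iff]
          have h2 := EReal.coe_le_coe_iff.mp (h1 ▸ hmin x)
          have h3 := hs2' x t (le_of_eq h1)
          have e1 : ⟪x, u₁⟫_ℝ = ⟪x, u₀⟫_ℝ - lam * ⟪x, w'⟫_ℝ := by
            rw [hu₁, inner_sub_right, real_inner_smul_right]
          rw [e1]
          nlinarith
      have hcu₁ : conjFn φ u₁ ≤ ((d₀ - lam * u : ℝ) : EReal) := conjFn_le hp.1 hmin1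
      obtain ⟨σ₁, hσ₁, hσ₁le⟩ := ereal_lift (hnbot u₁) hcu₁
      have h4 := hterm u₁ σ₁ hσ₁
      have e2 : ⟪u₁, w⟫_ℝ = ⟪w, u₀⟫_ℝ - lam * ⟪w, w'⟫_ℝ := by
        rw [hu₁, inner_sub_left, real_inner_smul_left, real_inner_comm u₀ w,
          real_inner_comm w' w]
      rw [e2] at h4
      -- ⟪w,u₀⟫ - lam⟪w,w'⟫ - σ₁ ≥ ⟪w,u₀⟫ - d₀ + lam * q > m'
      have : m' < ⟪w, u₀⟫_ℝ - lam * ⟪w, w'⟫_ℝ - σ₁ := by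
        have : lam * ⟪w, w'⟫_ℝ = lam * u - lam * q := by rw [hq]; ring
        nlinarith
      linarith
    · -- cc > 0
      have hconj : ∀ x, ((⟪x, -(cc⁻¹ • w')⟫_ℝ - (-(u / cc)) : ℝ) : EReal) ≤ φ x := by
        intro x
        rcases ereal_tricho (φ x) with h1 | h1 | ⟨t, h1⟩
        · exact absurd h1 (hp.1 x)
        · rw [h1]; exact le_top
        · rw [h1, EReal.coe_le_coe_iff]
          have h2 := hs2 x t (le_of_eq h1)
          have h3 : ⟪x, -(cc⁻¹ • w')⟫_ℝ = -(cc⁻¹ * ⟪x, w'⟫_ℝ) := by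
            rw [inner_neg_right, real_inner_smul_right]
          rw [h3]
          have h5 : (u - ⟪x, w'⟫_ℝ) / cc < t := by
            rw [div_lt_iff₀ hccpos]; nlinarith [h2]
          have h6 : -(cc⁻¹ * ⟪x, w'⟫_ℝ) - -(u / cc) = (u - ⟪x, w'⟫_ℝ) / cc := by
            field_simp
            ring
          linarith [h6 ▸ h5]
      have hcu₁ : conjFn φ (-(cc⁻¹ • w')) ≤ ((-(u / cc) : ℝ) : EReal) := conjFn_le hp.1 hconj
      obtain ⟨σ₁, hσ₁, hσ₁le⟩ := ereal_lift (hnbot _) hcu₁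
      have h4 := hterm _ σ₁ hσ₁
      have e2 : ⟪-(cc⁻¹ • w'), w⟫_ℝ = -(cc⁻¹ * ⟪w, w'⟫_ℝ) := by
        rw [inner_neg_left, real_inner_smul_left, real_inner_comm w' w]
      rw [e2] at h4
      -- but -(⟪w,w'⟫/cc) + u/cc > m' from hs1
      have h7 : m' < -(cc⁻¹ * ⟪w, w'⟫_ℝ) + u / cc := by
        have h8 : m' < (u - ⟪w, w'⟫_ℝ) / cc := by
          rw [lt_div_iff₀ hccpos]; nlinarith [hs1]
        have h9 : (u - ⟪w, w'⟫_ℝ) / cc = -(cc⁻¹ * ⟪w, w'⟫_ℝ) + u / cc := by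
          field_simp
          ring
        linarith [h9 ▸ h8]
      linarith
  -- conclude
  obtain ⟨β, hβ, hβle⟩ := ereal_lift (hp.1 w) hmain
  intro y
  have h1 := sub_conjFn_le hp.1 hδ y
  rw [hβ, ← EReal.coe_add]
  refine le_trans ?_ h1
  rw [EReal.coe_le_coe_iff]
  have e1 : ⟪y - w, v⟫_ℝ = ⟪y, v⟫_ℝ - ⟪w, v⟫_ℝ := inner_sub_left _ _ _
  rw [hm'] at hβle
  linarith

end Conj2

section Opt
variable {H : Type*} [NormedAddCommGroup H] [InnerProductSpace ℝ H] [CompleteSpace H]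
variable {G : Type*} [NormedAddCommGroup G] [InnerProductSpace ℝ G] [CompleteSpace G]

lemma primal_opt {f : H → EReal} (hf : ProperFn f) {g : G → EReal} (hg : ProperFn g)
    (L : H →L[ℝ] G) (z : H) (r : G) {xb : H} {vb : G}
    (h1 : z - ContinuousLinearMap.adjoint L vb ∈ subdiff f xb)
    (h2 : vb ∈ subdiff g (L xb - r)) :
    ∀ x' : H, f xb + g (L xb - r) - (⟪xb, z⟫_ℝ : EReal) ≤
      f x' + g (L x' - r) - (⟪x', z⟫_ℝ : EReal) := by
  obtain ⟨xf, hxf⟩ := hf.2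
  obtain ⟨xg, hxg⟩ := hg.2
  obtain ⟨α, hα⟩ := subdiff_finite hf.1 hxf h1
  obtain ⟨β, hβ⟩ := subdiff_finite hg.1 hxg h2
  intro x'
  rcases ereal_tricho (f x') with hfx | hfx | ⟨α', hfx⟩
  · exact absurd hfx (hf.1 x')
  · rw [hfx, EReal.top_add_of_ne_bot (hg.1 _), EReal.top_sub_coe]
    exact le_top
  rcases ereal_tricho (g (L x' - r)) with hgx | hgx | ⟨β', hgx⟩
  · exact absurd hgx (hg.1 _)
  · rw [hgx, EReal.add_top_of_ne_bot (hf.1 _), EReal.top_sub_coe]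
    exact le_top
  have hr1 : ⟪x' - xb, z - ContinuousLinearMap.adjoint L vb⟫_ℝ + α ≤ α' :=
    subdiff_real h1 hα hfx
  have hr2 : ⟪(L x' - r) - (L xb - r), vb⟫_ℝ + β ≤ β' := subdiff_real h2 hβ hgx
  rw [sub_sub_sub_cancel_right] at hr2
  have e1 : ⟪x' - xb, z - ContinuousLinearMap.adjoint L vb⟫_ℝ =
      ⟪x' - xb, z⟫_ℝ - ⟪x' - xb, ContinuousLinearMap.adjoint L vb⟫_ℝ :=
    inner_sub_right _ _ _
  have e2 : ⟪x' - xb, ContinuousLinearMap.adjoint L vb⟫_ℝ = ⟪L x' - L xb, vb⟫_ℝ := by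
    rw [ContinuousLinearMap.adjoint_inner_right, map_sub]
  have e3 : ⟪x' - xb, z⟫_ℝ = ⟪x', z⟫_ℝ - ⟪xb, z⟫_ℝ := inner_sub_left _ _ _
  rw [hα, hβ, hfx, hgx, ← EReal.coe_add, ← EReal.coe_add, ← EReal.coe_sub, ← EReal.coe_sub,
    EReal.coe_le_coe_iff]
  linarith

lemma dual_opt {f : H → EReal} (hf : ProperFn f) {g : G → EReal} (hg : ProperFn g)
    (L : H →L[ℝ] G) (z : H) (r : G) {xb : H} {vb : G}
    (h1 : z - ContinuousLinearMap.adjoint L vb ∈ subdiff f xb)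
    (h2 : vb ∈ subdiff g (L xb - r)) :
    ∀ v' : G, conjFn f (z - ContinuousLinearMap.adjoint L vb) + conjFn g vb +
        (⟪vb, r⟫_ℝ : EReal) ≤
      conjFn f (z - ContinuousLinearMap.adjoint L v') + conjFn g v' +
        (⟪v', r⟫_ℝ : EReal) := by
  obtain ⟨xf, hxf⟩ := hf.2
  obtain ⟨xg, hxg⟩ := hg.2
  have hαf : f xf = ((f xf).toReal : EReal) := (EReal.coe_toReal hxf (hf.1 xf)).symm
  have hαg : g xg = ((g xg).toReal : EReal) := (EReal.coe_toReal hxg (hg.1 xg)).symm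
  obtain ⟨α, hα⟩ := subdiff_finite hf.1 hxf h1
  obtain ⟨β, hβ⟩ := subdiff_finite hg.1 hxg h2
  obtain ⟨heqf, hwf⟩ := subdiff_conj_flip hα h1
  obtain ⟨heqg, hwg⟩ := subdiff_conj_flip hβ h2
  intro v'
  rcases ereal_tricho (conjFn f (z - ContinuousLinearMap.adjoint L v')) with hF | hF | ⟨F', hF⟩
  · exact absurd hF (conjFn_ne_bot hαf _)
  · rw [hF, EReal.top_add_of_ne_bot (conjFn_ne_bot hαg _),
      EReal.top_add_of_ne_bot (EReal.coe_ne_bot _)]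
    exact le_top
  rcases ereal_tricho (conjFn g v') with hG | hG | ⟨G', hG⟩
  · exact absurd hG (conjFn_ne_bot hαg _)
  · rw [hG, EReal.add_top_of_ne_bot (hF ▸ EReal.coe_ne_bot F'),
      EReal.top_add_of_ne_bot (EReal.coe_ne_bot _)]
    exact le_top
  have hr1 : ⟪(z - ContinuousLinearMap.adjoint L v') -
      (z - ContinuousLinearMap.adjoint L vb), xb⟫_ℝ + (⟪xb, z -
      ContinuousLinearMap.adjoint L vb⟫_ℝ - α) ≤ F' := subdiff_real hwf heqf hF
  have hr2 : ⟪v' - vb, L xb - r⟫_ℝ + (⟪L xb - r, vb⟫_ℝ - β) ≤ G' := subdiff_real hwg heqg hG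
  have e1 : (z - ContinuousLinearMap.adjoint L v') - (z - ContinuousLinearMap.adjoint L vb)
      = ContinuousLinearMap.adjoint L (vb - v') := by
    rw [map_sub]; abel
  rw [e1, ContinuousLinearMap.adjoint_inner_left] at hr1
  have e2 : ⟪vb - v', L xb⟫_ℝ = ⟪vb, L xb⟫_ℝ - ⟪v', L xb⟫_ℝ := inner_sub_left _ _ _
  have e3 : ⟪v' - vb, L xb - r⟫_ℝ = ⟪v', L xb⟫_ℝ - ⟪v', r⟫_ℝ - ⟪vb, L xb⟫_ℝ + ⟪vb, r⟫_ℝ := by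
    rw [inner_sub_left, inner_sub_right, inner_sub_right]; ring
  rw [heqf, heqg, hF, hG, ← EReal.coe_add, ← EReal.coe_add, ← EReal.coe_add, ← EReal.coe_add,
    EReal.coe_le_coe_iff]
  linarith

end Opt

set_option maxHeartbeats 1000000

section Abstract
variable {K : Type*} [NormedAddCommGroup K] [InnerProductSpace ℝ K] [CompleteSpace K]

lemma le_of_sq_le_sq'_s19 {a b : ℝ} (ha : 0 ≤ a) (hb : 0 ≤ b) (h : a ^ 2 ≤ b ^ 2) : a ≤ b := by
  nlinarith

theorem tseng_abstract (A : K → Set K) (hA : MonoOp A)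
    (B : K →L[ℝ] K) (hskew : ∀ q : K, ⟪q, B q⟫_ℝ = 0) {β : ℝ} (hβpos : 0 < β)
    (hB : ∀ q : K, ‖B q‖ ≤ β * ‖q‖)
    {ε : ℝ} (hε0 : 0 < ε) (hε1 : ε ≤ 1)
    {γ : ℕ → ℝ} (hγ : ∀ n, ε ≤ γ n ∧ γ n * β ≤ 1 - ε)
    {J : ℕ → K → K} (hJ : ∀ n, IsResolvent (γ n) A (J n))
    {Xb0 : K} (hXb0 : ∃ W ∈ A Xb0, W + B Xb0 = 0)
    {EA EB EC : ℕ → K} (hEA : Summable (fun n => ‖EA n‖))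
    (hEB : Summable (fun n => ‖EB n‖)) (hEC : Summable (fun n => ‖EC n‖))
    {X P : ℕ → K}
    (hP : ∀ n, P n = J n (X n - γ n • (B (X n) + EA n)) + EB n)
    (hX : ∀ n, X (n + 1) = X n - (X n - γ n • (B (X n) + EA n))
      + (P n - γ n • (B (P n) + EC n))) :
    ∃ Xb : K, (∃ W ∈ A Xb, W + B Xb = 0) ∧
      (∀ y : K, Tendsto (fun n => ⟪X n, y⟫_ℝ) atTop (𝓝 ⟪Xb, y⟫_ℝ)) ∧
      Tendsto (fun n => X n - P n) atTop (𝓝 0) := by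
  have hγpos : ∀ n, 0 < γ n := fun n => lt_of_lt_of_le hε0 (hγ n).1
  set Γ : ℝ := (1 - ε) / β with hΓ
  have hΓ0 : 0 ≤ Γ := div_nonneg (by linarith) hβpos.le
  have hγΓ : ∀ n, γ n ≤ Γ := fun n => (le_div_iff₀ hβpos).mpr (hγ n).2
  -- exact quantities
  set Yh : ℕ → K := fun n => X n - γ n • B (X n) with hYh
  set Ph : ℕ → K := fun n => J n (Yh n) with hPh
  have hres : ∀ n, ∃ u ∈ A (Ph n), Yh n = Ph n + γ n • u := fun n => hJ n (Yh n)
  choose U hU hYU using hres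
  have hXPh : ∀ n, X n - Ph n = γ n • (B (X n) + U n) := by
    intro n
    have h : X n - γ n • B (X n) = Ph n + γ n • U n := hYU n
    have h3 : (X n - γ n • B (X n)) - Ph n = γ n • U n := sub_eq_iff_eq_add'.mpr h
    have h4 : X n - Ph n = γ n • U n + γ n • B (X n) := by
      calc X n - Ph n = ((X n - γ n • B (X n)) - Ph n) + γ n • B (X n) := by abel
        _ = γ n • U n + γ n • B (X n) := by rw [h3]
    rw [h4, smul_add]
    abel
  -- error sequence
  set e : ℕ → ℝ := fun n => Γ * ‖EA n‖ + 2 * (Γ * ‖EA n‖ + ‖EB n‖) + Γ * ‖EC n‖ with he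
  have he0 : ∀ n, 0 ≤ e n := by
    intro n
    have := norm_nonneg (EA n); have := norm_nonneg (EB n); have := norm_nonneg (EC n)
    have h1 : 0 ≤ Γ * ‖EA n‖ := mul_nonneg hΓ0 (norm_nonneg _)
    have h2 : 0 ≤ Γ * ‖EC n‖ := mul_nonneg hΓ0 (norm_nonneg _)
    simp only [he]
    nlinarith
  have hesum : Summable e := by
    apply Summable.add
    apply Summable.add
    · exact hEA.mul_left Γ
    · exact ((hEA.mul_left Γ).add hEB).mul_left 2
    · exact hEC.mul_left Γ
  -- distances between exact and inexact iterates
  have hYdiff : ∀ n, ‖(X n - γ n • (B (X n) + EA n)) - Yh n‖ ≤ Γ * ‖EA n‖ := by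
    intro n
    have : (X n - γ n • (B (X n) + EA n)) - Yh n = -(γ n • EA n) := by
      simp only [hYh, smul_add]; abel
    rw [this, norm_neg, norm_smul, Real.norm_of_nonneg (hγpos n).le]
    exact mul_le_mul_of_nonneg_right (hγΓ n) (norm_nonneg _)
  have hPdiff : ∀ n, ‖P n - Ph n‖ ≤ Γ * ‖EA n‖ + ‖EB n‖ := by
    intro n
    have h1 : P n - Ph n = (J n (X n - γ n • (B (X n) + EA n)) - J n (Yh n)) + EB n := by
      rw [hP n, hPh]; abel
    rw [h1]
    refine le_trans (norm_add_le _ _) ?_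
    have h2 := resolvent_nonexpansive hA (hγpos n) (hJ n)
      (X n - γ n • (B (X n) + EA n)) (Yh n)
    exact add_le_add (le_trans h2 (hYdiff n)) le_rfl
  -- one-step discrepancy from the exact update
  set Xh' : ℕ → K := fun n => Ph n + γ n • (B (X n) - B (Ph n)) with hXh'
  have hXdiff : ∀ n, ‖X (n + 1) - Xh' n‖ ≤ e n := by
    intro n
    have h1 : X (n + 1) - Xh' n =
        γ n • EA n + ((P n - Ph n) - γ n • (B (P n) - B (Ph n))) - γ n • EC n := by
      rw [hX n, hXh']
      simp only [smul_add, smul_sub]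
      abel
    rw [h1]
    have h2 : ‖γ n • EA n‖ ≤ Γ * ‖EA n‖ := by
      rw [norm_smul, Real.norm_of_nonneg (hγpos n).le]
      exact mul_le_mul_of_nonneg_right (hγΓ n) (norm_nonneg _)
    have h3 : ‖γ n • EC n‖ ≤ Γ * ‖EC n‖ := by
      rw [norm_smul, Real.norm_of_nonneg (hγpos n).le]
      exact mul_le_mul_of_nonneg_right (hγΓ n) (norm_nonneg _)
    have h4 : ‖(P n - Ph n) - γ n • (B (P n) - B (Ph n))‖ ≤ 2 * (Γ * ‖EA n‖ + ‖EB n‖) := by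
      refine le_trans (norm_sub_le _ _) ?_
      have h5 : ‖γ n • (B (P n) - B (Ph n))‖ ≤ ‖P n - Ph n‖ := by
        rw [norm_smul, Real.norm_of_nonneg (hγpos n).le, ← map_sub]
        calc γ n * ‖B (P n - Ph n)‖ ≤ γ n * (β * ‖P n - Ph n‖) :=
              mul_le_mul_of_nonneg_left (hB _) (hγpos n).le
          _ = (γ n * β) * ‖P n - Ph n‖ := by ring
          _ ≤ 1 * ‖P n - Ph n‖ := by
              apply mul_le_mul_of_nonneg_right _ (norm_nonneg _)
              linarith [(hγ n).2]
          _ = ‖P n - Ph n‖ := one_mul _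
      have := hPdiff n
      linarith
    calc ‖γ n • EA n + ((P n - Ph n) - γ n • (B (P n) - B (Ph n))) - γ n • EC n‖
        ≤ ‖γ n • EA n + ((P n - Ph n) - γ n • (B (P n) - B (Ph n)))‖ + ‖γ n • EC n‖ :=
          norm_sub_le _ _
      _ ≤ (‖γ n • EA n‖ + ‖(P n - Ph n) - γ n • (B (P n) - B (Ph n))‖) + ‖γ n • EC n‖ := by
          have := norm_add_le (γ n • EA n) ((P n - Ph n) - γ n • (B (P n) - B (Ph n)))
          linarith
      _ ≤ e n := by simp only [he]; linarith
  -- the exact one-step contraction toward any zero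
  set δ : ℝ := 1 - (1 - ε) ^ 2 with hδdef
  have hδpos : 0 < δ := by
    have h1 : 0 ≤ 1 - ε := by linarith
    simp only [hδdef]
    nlinarith
  have hstep : ∀ (Z : K), (∃ W ∈ A Z, W + B Z = 0) → ∀ n,
      ‖Xh' n - Z‖ ^ 2 ≤ ‖X n - Z‖ ^ 2 - δ * ‖X n - Ph n‖ ^ 2 := by
    rintro Z ⟨W, hW, hWZ⟩ n
    have h1 := tseng_step hA hskew hB (hγpos n) (hU n) (hXPh n) hW hWZ
    have h2 : (γ n * β) ^ 2 ≤ (1 - ε) ^ 2 := by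
      have hγβ : 0 ≤ γ n * β := mul_nonneg (hγpos n).le hβpos.le
      nlinarith [(hγ n).2]
    have h3 : (γ n * β) ^ 2 * ‖X n - Ph n‖ ^ 2 ≤ (1 - ε) ^ 2 * ‖X n - Ph n‖ ^ 2 :=
      mul_le_mul_of_nonneg_right h2 (sq_nonneg _)
    simp only [hXh', hδdef]
    nlinarith
  have hfej : ∀ (Z : K), (∃ W ∈ A Z, W + B Z = 0) → ∀ n,
      ‖X (n + 1) - Z‖ ≤ ‖X n - Z‖ + e n := by
    intro Z hZ n
    have h1 := hstep Z hZ n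
    have h2 : ‖Xh' n - Z‖ ≤ ‖X n - Z‖ := by
      apply le_of_sq_le_sq'_s19 (norm_nonneg _) (norm_nonneg _)
      nlinarith [sq_nonneg (‖X n - Ph n‖), hδpos.le, mul_nonneg hδpos.le (sq_nonneg ‖X n - Ph n‖)]
    calc ‖X (n + 1) - Z‖ = ‖(X (n + 1) - Xh' n) + (Xh' n - Z)‖ := by congr 1; abel
      _ ≤ ‖X (n + 1) - Xh' n‖ + ‖Xh' n - Z‖ := norm_add_le _ _
      _ ≤ ‖X n - Z‖ + e n := by linarith [hXdiff n]
  -- boundedness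
  set Etot : ℝ := ∑' n, e n with hEtot
  have hEtot0 : 0 ≤ Etot := tsum_nonneg he0
  have hparte : ∀ n, ∑ k ∈ Finset.range n, e k ≤ Etot :=
    fun n => Summable.sum_le_tsum _ (fun k _ => he0 k) hesum
  set Mb : ℝ := ‖X 0 - Xb0‖ + Etot with hMb
  have hbound : ∀ n, ‖X n - Xb0‖ ≤ ‖X 0 - Xb0‖ + ∑ k ∈ Finset.range n, e k := by
    intro n
    induction n with
    | zero => simp
    | succ m ih =>
      have := hfej Xb0 hXb0 m
      rw [Finset.sum_range_succ]
      linarith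
  have hboundM : ∀ n, ‖X n - Xb0‖ ≤ Mb := fun n =>
    le_trans (hbound n) (by simp only [hMb]; linarith [hparte n])
  have hMb0 : 0 ≤ Mb := le_trans (norm_nonneg _) (hboundM 0)
  set R : ℝ := Mb + ‖Xb0‖ with hR
  have hXR : ∀ n, ‖X n‖ ≤ R := by
    intro n
    calc ‖X n‖ = ‖(X n - Xb0) + Xb0‖ := by congr 1; abel
      _ ≤ ‖X n - Xb0‖ + ‖Xb0‖ := norm_add_le _ _
      _ ≤ R := by simp only [hR]; linarith [hboundM n]
  -- the summability of ‖X n - Ph n‖²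
  set t : ℕ → ℝ := fun n => ‖X n - Ph n‖ with ht
  have ht0 : ∀ n, 0 ≤ t n := fun n => norm_nonneg _
  set et : ℕ → ℝ := fun n => e n * (2 * Mb + e n) with het
  have het0 : ∀ n, 0 ≤ et n := by
    intro n
    have h1 : e n ≤ Etot := Summable.le_tsum hesum n (fun k _ => he0 k)
    exact mul_nonneg (he0 n) (by linarith [he0 n])
  have hetbound : ∀ n, et n ≤ e n * (2 * Mb + Etot) := by
    intro n
    have h1 : e n ≤ Etot := Summable.le_tsum hesum n (fun k _ => he0 k)
    exact mul_le_mul_of_nonneg_left (by linarith) (he0 n)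
  have hkey : ∀ n, δ * t n ^ 2 ≤ ‖X n - Xb0‖ ^ 2 - ‖X (n + 1) - Xb0‖ ^ 2 + et n := by
    intro n
    have h1 := hstep Xb0 hXb0 n
    have h2 : ‖Xh' n - Xb0‖ ≤ ‖X n - Xb0‖ := by
      apply le_of_sq_le_sq'_s19 (norm_nonneg _) (norm_nonneg _)
      nlinarith [mul_nonneg hδpos.le (sq_nonneg (t n))]
    have h3 : ‖X (n + 1) - Xb0‖ ≤ ‖Xh' n - Xb0‖ + e n := by
      calc ‖X (n + 1) - Xb0‖ = ‖(X (n + 1) - Xh' n) + (Xh' n - Xb0)‖ := by congr 1; abel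
        _ ≤ ‖X (n + 1) - Xh' n‖ + ‖Xh' n - Xb0‖ := norm_add_le _ _
        _ ≤ ‖Xh' n - Xb0‖ + e n := by linarith [hXdiff n]
    have h4 : ‖X (n + 1) - Xb0‖ ^ 2 ≤ ‖Xh' n - Xb0‖ ^ 2 + e n * (2 * Mb + e n) := by
      have h5 : ‖Xh' n - Xb0‖ ≤ Mb := le_trans h2 (hboundM n)
      nlinarith [norm_nonneg (X (n + 1) - Xb0), norm_nonneg (Xh' n - Xb0), he0 n]
    simp only [het]
    nlinarith
  have hsumbound : ∀ n, ∑ k ∈ Finset.range n, δ * t k ^ 2 ≤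
      ‖X 0 - Xb0‖ ^ 2 + (2 * Mb + Etot) * Etot := by
    intro n
    have htel : ∑ k ∈ Finset.range n, δ * t k ^ 2 ≤
        ‖X 0 - Xb0‖ ^ 2 - ‖X n - Xb0‖ ^ 2 + ∑ k ∈ Finset.range n, et k := by
      induction n with
      | zero => simp
      | succ m ih =>
        rw [Finset.sum_range_succ, Finset.sum_range_succ (f := et)]
        have := hkey m
        linarith
    have h6 : ∑ k ∈ Finset.range n, et k ≤ (2 * Mb + Etot) * Etot := by
      calc ∑ k ∈ Finset.range n, et k ≤ ∑ k ∈ Finset.range n, e k * (2 * Mb + Etot) :=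
            Finset.sum_le_sum (fun k _ => hetbound k)
        _ = (∑ k ∈ Finset.range n, e k) * (2 * Mb + Etot) := by
            rw [← Finset.sum_mul]
        _ ≤ Etot * (2 * Mb + Etot) := by
            apply mul_le_mul_of_nonneg_right (hparte n)
            linarith
        _ = (2 * Mb + Etot) * Etot := by ring
    have h7 : 0 ≤ ‖X n - Xb0‖ ^ 2 := sq_nonneg _
    linarith
  have htsq : Tendsto (fun n => δ * t n ^ 2) atTop (𝓝 0) :=
    seq_sq_to_zero (fun n => mul_nonneg hδpos.le (sq_nonneg _)) hsumbound
  have ht2 : Tendsto (fun n => t n ^ 2) atTop (𝓝 0) := by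
    have := htsq.const_mul δ⁻¹
    simp only [← mul_assoc, inv_mul_cancel₀ (ne_of_gt hδpos), one_mul, mul_zero] at this
    exact this
  have htzero : Tendsto t atTop (𝓝 0) := by
    have h1 : Tendsto (fun n => Real.sqrt (t n ^ 2)) atTop (𝓝 (Real.sqrt 0)) :=
      (Real.continuous_sqrt.tendsto 0).comp ht2
    rw [Real.sqrt_zero] at h1
    have h2 : (fun n => Real.sqrt (t n ^ 2)) = t := by
      funext n; rw [Real.sqrt_sq (ht0 n)]
    rw [h2] at h1
    exact h1
  -- dp → 0
  have hdp : Tendsto (fun n => Γ * ‖EA n‖ + ‖EB n‖) atTop (𝓝 0) := by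
    have h1 := (hEA.tendsto_atTop_zero.const_mul Γ)
    have h2 := hEB.tendsto_atTop_zero
    have := h1.add h2
    simpa using this
  have hXPzero : Tendsto (fun n => X n - P n) atTop (𝓝 0) := by
    apply squeeze_zero_norm (a := fun n => t n + (Γ * ‖EA n‖ + ‖EB n‖))
    · intro n
      calc ‖X n - P n‖ = ‖(X n - Ph n) + (Ph n - P n)‖ := by congr 1; abel
        _ ≤ ‖X n - Ph n‖ + ‖Ph n - P n‖ := norm_add_le _ _
        _ ≤ t n + (Γ * ‖EA n‖ + ‖EB n‖) := by
            rw [norm_sub_rev (Ph n)]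
            exact add_le_add le_rfl (hPdiff n)
    · simpa using htzero.add hdp
  -- T n → 0
  set T : ℕ → K := fun n => U n + B (Ph n) with hT
  have hTform : ∀ n, T n = (γ n)⁻¹ • (X n - Ph n) - B (X n - Ph n) := by
    intro n
    have h1 := hXPh n
    have h2 : (γ n)⁻¹ • (X n - Ph n) = B (X n) + U n := by
      rw [h1, smul_smul, inv_mul_cancel₀ (ne_of_gt (hγpos n)), one_smul]
    rw [hT]
    simp only [map_sub]
    rw [h2]
    abel
  have hTbound : ∀ n, ‖T n‖ ≤ (ε⁻¹ + β) * t n := by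
    intro n
    rw [hTform n]
    refine le_trans (norm_sub_le _ _) ?_
    have h1 : ‖(γ n)⁻¹ • (X n - Ph n)‖ ≤ ε⁻¹ * t n := by
      rw [norm_smul, Real.norm_of_nonneg (inv_nonneg.mpr (hγpos n).le)]
      apply mul_le_mul_of_nonneg_right _ (norm_nonneg _)
      exact inv_anti₀ hε0 (hγ n).1
    have h2 : ‖B (X n - Ph n)‖ ≤ β * t n := hB _
    simp only [ht] at h1 h2 ⊢
    linarith
  have hTzero : Tendsto (fun n => ‖T n‖) atTop (𝓝 0) := by
    apply squeeze_zero (fun n => norm_nonneg _) hTbound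
    have := htzero.const_mul (ε⁻¹ + β)
    simpa using this
  -- weak cluster points are zeros
  have hPhX : ∀ n, ‖Ph n - X n‖ = t n := fun n => by rw [norm_sub_rev]
  have hcluster : ∀ V : Ultrafilter ℕ, ↑V ≤ (atTop : Filter ℕ) →
      ∃ p : K, (∃ W ∈ A p, W + B p = 0) ∧
        (∀ y : K, Tendsto (fun n => ⟪X n, y⟫_ℝ) ↑V (𝓝 ⟪p, y⟫_ℝ)) := by
    intro V hV
    obtain ⟨p, hpR, hpw⟩ := ultrafilter_weak_limit X R hXR V
    refine ⟨p, ?_, hpw⟩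
    have hPhw : ∀ y : K, Tendsto (fun n => ⟪Ph n, y⟫_ℝ) ↑V (𝓝 ⟪p, y⟫_ℝ) := by
      intro y
      have h1 : Tendsto (fun n => ⟪Ph n - X n, y⟫_ℝ) atTop (𝓝 0) := by
        apply squeeze_zero_norm (a := fun n => t n * ‖y‖)
        · intro n
          calc |⟪Ph n - X n, y⟫_ℝ| ≤ ‖Ph n - X n‖ * ‖y‖ := abs_real_inner_le_norm _ _
            _ = t n * ‖y‖ := by rw [hPhX n]
        · simpa using htzero.mul_const ‖y‖
      have h2 := (h1.mono_left hV).add (hpw y)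
      have h3 : (fun n => ⟪Ph n - X n, y⟫_ℝ + ⟪X n, y⟫_ℝ) = fun n => ⟪Ph n, y⟫_ℝ := by
        funext n; rw [← inner_add_left]; norm_num
      rw [h3, zero_add] at h2
      exact h2
    -- Minty argument
    have hmainineq : ∀ (s w : K), w ∈ A s → 0 ≤ ⟪p - s, -(w + B s)⟫_ℝ := by
      intro s w hw
      have hper : ∀ n, 0 ≤ ⟪Ph n - s, T n⟫_ℝ - ⟪Ph n, w + B s⟫_ℝ + ⟪s, w + B s⟫_ℝ := by
        intro n
        have h1 : 0 ≤ ⟪Ph n - s, (U n + B (Ph n)) - (w + B s)⟫_ℝ := by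
          have hmono := hA (hU n) hw
          have hsk : ⟪Ph n - s, B (Ph n) - B s⟫_ℝ = 0 := by
            rw [← map_sub]; exact hskew _
          have hexp : ⟪Ph n - s, (U n + B (Ph n)) - (w + B s)⟫_ℝ =
              ⟪Ph n - s, U n - w⟫_ℝ + ⟪Ph n - s, B (Ph n) - B s⟫_ℝ := by
            rw [← inner_add_right]
            congr 1
            abel
          rw [hexp, hsk, add_zero]
          exact hmono
        have h2 : ⟪Ph n - s, (U n + B (Ph n)) - (w + B s)⟫_ℝ =
            ⟪Ph n - s, T n⟫_ℝ - ⟪Ph n, w + B s⟫_ℝ + ⟪s, w + B s⟫_ℝ := by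
          simp only [show T n = U n + B (Ph n) from rfl, inner_sub_right, inner_sub_left,
            inner_add_right, inner_add_left]
          ring
        rw [h2] at h1
        exact h1
      -- limits
      have hlim1 : Tendsto (fun n => ⟪Ph n - s, T n⟫_ℝ) atTop (𝓝 0) := by
        apply squeeze_zero_norm (a := fun n => (t n + R + ‖s‖) * ‖T n‖)
        · intro n
          calc |⟪Ph n - s, T n⟫_ℝ| ≤ ‖Ph n - s‖ * ‖T n‖ := abs_real_inner_le_norm _ _
            _ ≤ (t n + R + ‖s‖) * ‖T n‖ := by
                apply mul_le_mul_of_nonneg_right _ (norm_nonneg _)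
                calc ‖Ph n - s‖ ≤ ‖Ph n - X n‖ + ‖X n - s‖ := norm_sub_le_norm_sub_add_norm_sub _ _ _
                  _ ≤ t n + (‖X n‖ + ‖s‖) := by
                      rw [hPhX n]
                      exact add_le_add le_rfl (norm_sub_le _ _)
                  _ ≤ t n + R + ‖s‖ := by linarith [hXR n]
        · have h4 : Tendsto (fun n => (t n + R + ‖s‖) * ‖T n‖) atTop (𝓝 ((0 + R + ‖s‖) * 0)) :=
            ((htzero.add_const R).add_const ‖s‖).mul hTzero
          simpa using h4
      have hlim2 : Tendsto (fun n => ⟪Ph n, w + B s⟫_ℝ) ↑V (𝓝 ⟪p, w + B s⟫_ℝ) := hPhw _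
      have hlimtot : Tendsto
          (fun n => ⟪Ph n - s, T n⟫_ℝ - ⟪Ph n, w + B s⟫_ℝ + ⟪s, w + B s⟫_ℝ) ↑V
          (𝓝 (0 - ⟪p, w + B s⟫_ℝ + ⟪s, w + B s⟫_ℝ)) :=
        ((hlim1.mono_left hV).sub hlim2).add_const _
      have h5 : 0 ≤ 0 - ⟪p, w + B s⟫_ℝ + ⟪s, w + B s⟫_ℝ :=
        ge_of_tendsto hlimtot (Filter.Eventually.of_forall hper)
      have h6 : ⟪p - s, -(w + B s)⟫_ℝ = 0 - ⟪p, w + B s⟫_ℝ + ⟪s, w + B s⟫_ℝ := by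
        rw [inner_neg_right, inner_sub_left]
        ring
      rw [h6]
      exact h5
    exact minty_sum hA (hγpos 0) (hJ 0) B hβpos.le hB
      (lt_of_le_of_lt (hγ 0).2 (by linarith)) p hmainineq
  -- Fejér convergence of distances to zeros
  have hdist : ∀ (Z : K), (∃ W ∈ A Z, W + B Z = 0) →
      ∃ l, Tendsto (fun n => ‖X n - Z‖) atTop (𝓝 l) := by
    intro Z hZ
    exact seq_converges (fun n => norm_nonneg _) he0 (hfej Z hZ) hesum
  -- Opial uniqueness
  obtain ⟨p₀, hp₀zero, hp₀w⟩ := hcluster (Ultrafilter.of atTop) (Ultrafilter.of_le _)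
  have hunique : ∀ V : Ultrafilter ℕ, ↑V ≤ (atTop : Filter ℕ) → ∀ p : K,
      (∃ W ∈ A p, W + B p = 0) →
      (∀ y : K, Tendsto (fun n => ⟪X n, y⟫_ℝ) ↑V (𝓝 ⟪p, y⟫_ℝ)) → p = p₀ := by
    intro V hV p hpzero hpw
    obtain ⟨lp, hlp⟩ := hdist p₀ hp₀zero
    obtain ⟨lq, hlq⟩ := hdist p hpzero
    have hiden : ∀ n, ⟪X n, p₀ - p⟫_ℝ =
        (‖p₀‖ ^ 2 - ‖p‖ ^ 2 - (‖X n - p₀‖ ^ 2 - ‖X n - p‖ ^ 2)) / 2 := by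
      intro n
      have h1 : ‖X n - p₀‖ ^ 2 = ‖X n‖ ^ 2 - 2 * ⟪X n, p₀⟫_ℝ + ‖p₀‖ ^ 2 :=
        norm_sub_sq_real _ _
      have h2 : ‖X n - p‖ ^ 2 = ‖X n‖ ^ 2 - 2 * ⟪X n, p⟫_ℝ + ‖p‖ ^ 2 :=
        norm_sub_sq_real _ _
      rw [inner_sub_right]
      rw [h1, h2]
      ring
    set cl : ℝ := (‖p₀‖ ^ 2 - ‖p‖ ^ 2 - (lp ^ 2 - lq ^ 2)) / 2 with hcl
    have hctend : Tendsto (fun n => ⟪X n, p₀ - p⟫_ℝ) atTop (𝓝 cl) := by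
      have h3 : Tendsto (fun n => ‖X n - p₀‖ ^ 2 - ‖X n - p‖ ^ 2) atTop
          (𝓝 (lp ^ 2 - lq ^ 2)) := by
        have := ((hlp.mul hlp).sub (hlq.mul hlq))
        simpa [pow_two] using this
      have h4 := ((tendsto_const_nhds (x := ‖p₀‖ ^ 2 - ‖p‖ ^ 2)).sub h3).div_const 2
      simp only [hcl]
      convert h4 using 2
      exact hiden _
    have he1 : ⟪p₀, p₀ - p⟫_ℝ = cl :=
      tendsto_nhds_unique (hp₀w (p₀ - p)) (hctend.mono_left (Ultrafilter.of_le _))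
    have he2 : ⟪p, p₀ - p⟫_ℝ = cl :=
      tendsto_nhds_unique (hpw (p₀ - p)) (hctend.mono_left hV)
    have h7 : ⟪p₀ - p, p₀ - p⟫_ℝ = 0 := by
      rw [inner_sub_left]
      linarith
    have h8 : p₀ - p = 0 := by
      rwa [inner_self_eq_zero] at h7
    have := sub_eq_zero.mp h8
    exact this.symm
  refine ⟨p₀, hp₀zero, ?_, hXPzero⟩
  intro y
  rw [Filter.tendsto_iff_ultrafilter]
  intro V hV
  obtain ⟨p, hpzero, hpw⟩ := hcluster V hV
  have := hunique V hV p hpzero hpw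
  rw [← this]
  exact hpw y

end Abstract

section Glue
variable {H G : Type*} [NormedAddCommGroup H] [InnerProductSpace ℝ H] [CompleteSpace H]
    [NormedAddCommGroup G] [InnerProductSpace ℝ G] [CompleteSpace G]

/-- Packaging a pair into the `ℓ²` product. -/
noncomputable def mkK (a : H) (b : G) : WithLp 2 (H × G) :=
  (WithLp.equiv 2 (H × G)).symm (a, b)

/-- The skew operator `(x,v) ↦ (L*v, -Lx)` on the product space. -/
noncomputable def BopK (L : H →L[ℝ] G) : WithLp 2 (H × G) →L[ℝ] WithLp 2 (H × G) :=
  ((WithLp.prodContinuousLinearEquiv 2 ℝ H G).symm : (H × G) →L[ℝ] WithLp 2 (H × G)).comp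
    ((((ContinuousLinearMap.adjoint L).comp (ContinuousLinearMap.snd ℝ H G)).prod
      ((-L).comp (ContinuousLinearMap.fst ℝ H G))).comp
      ((WithLp.prodContinuousLinearEquiv 2 ℝ H G) : WithLp 2 (H × G) →L[ℝ] H × G))

lemma BopK_fst (L : H →L[ℝ] G) (P : WithLp 2 (H × G)) :
    (BopK L P).fst = ContinuousLinearMap.adjoint L P.snd := rfl

lemma BopK_snd (L : H →L[ℝ] G) (P : WithLp 2 (H × G)) : (BopK L P).snd = -(L P.fst) := rfl

lemma K_norm_fst_le (P : WithLp 2 (H × G)) : ‖P.fst‖ ≤ ‖P‖ := by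
  apply le_of_sq_le_sq'_s19 (norm_nonneg _) (norm_nonneg _)
  rw [WithLp.prod_norm_sq_eq_of_L2]
  nlinarith [sq_nonneg ‖P.snd‖]

lemma K_norm_snd_le (P : WithLp 2 (H × G)) : ‖P.snd‖ ≤ ‖P‖ := by
  apply le_of_sq_le_sq'_s19 (norm_nonneg _) (norm_nonneg _)
  rw [WithLp.prod_norm_sq_eq_of_L2]
  nlinarith [sq_nonneg ‖P.fst‖]

lemma K_norm_le_add (a : H) (b : G) : ‖mkK a b‖ ≤ ‖a‖ + ‖b‖ := by
  apply le_of_sq_le_sq'_s19 (norm_nonneg _) (by positivity)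
  rw [WithLp.prod_norm_sq_eq_of_L2]
  have e1 : (mkK a b).fst = a := rfl
  have e2 : (mkK a b).snd = b := rfl
  rw [e1, e2]
  nlinarith [norm_nonneg a, norm_nonneg b, mul_nonneg (norm_nonneg a) (norm_nonneg b)]

end Glue

theorem stmt_19 {H G : Type*} [NormedAddCommGroup H] [InnerProductSpace ℝ H] [CompleteSpace H]
    [NormedAddCommGroup G] [InnerProductSpace ℝ G] [CompleteSpace G]
    (f : H → EReal) (hf : ProperFn f) (hflsc : LowerSemicontinuous f) (hfcvx : ConvexFn f)
    (g : G → EReal) (hg : ProperFn g) (hglsc : LowerSemicontinuous g) (hgcvx : ConvexFn g)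
    (L : H →L[ℝ] G) (hL : L ≠ 0) (z : H) (r : G)
    (hran : ∃ x : H, ∃ u ∈ subdiff f x, ∃ w ∈ subdiff g (L x - r),
      z = u + ContinuousLinearMap.adjoint L w)
    (a₁ b₁ c₁ : ℕ → H) (a₂ b₂ c₂ : ℕ → G)
    (ha₁ : Summable fun n => ‖a₁ n‖) (hb₁ : Summable fun n => ‖b₁ n‖)
    (hc₁ : Summable fun n => ‖c₁ n‖)
    (ha₂ : Summable fun n => ‖a₂ n‖) (hb₂ : Summable fun n => ‖b₂ n‖)
    (hc₂ : Summable fun n => ‖c₂ n‖)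
    (ε : ℝ) (hε : ε ∈ Set.Ioo (0:ℝ) (1 / (‖L‖ + 1)))
    (γ : ℕ → ℝ) (hγ : ∀ n, γ n ∈ Set.Icc ε ((1 - ε) / ‖L‖))
    (proxf : ℕ → H → H) (hproxf : ∀ n, IsResolvent (γ n) (subdiff f) (proxf n))
    (proxg : ℕ → G → G) (hproxg : ∀ n, IsResolvent (γ n) (subdiff (conjFn g)) (proxg n))
    (x y₁ p₁ q₁ : ℕ → H) (v y₂ p₂ q₂ : ℕ → G)
    (hy₁ : ∀ n, y₁ n = x n - γ n • (ContinuousLinearMap.adjoint L (v n) + a₁ n))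
    (hy₂ : ∀ n, y₂ n = v n + γ n • (L (x n) + a₂ n))
    (hp₁ : ∀ n, p₁ n = proxf n (y₁ n + γ n • z) + b₁ n)
    (hp₂ : ∀ n, p₂ n = proxg n (y₂ n - γ n • r) + b₂ n)
    (hq₁ : ∀ n, q₁ n = p₁ n - γ n • (ContinuousLinearMap.adjoint L (p₂ n) + c₁ n))
    (hq₂ : ∀ n, q₂ n = p₂ n + γ n • (L (p₁ n) + c₂ n))
    (hx : ∀ n, x (n + 1) = x n - y₁ n + q₁ n)
    (hv : ∀ n, v (n + 1) = v n - y₂ n + q₂ n) :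
    ∃ (xb : H) (vb : G),
      (∀ x' : H, f xb + g (L xb - r) - (⟪xb, z⟫_ℝ : EReal) ≤
        f x' + g (L x' - r) - (⟪x', z⟫_ℝ : EReal)) ∧
      (∀ v' : G, conjFn f (z - ContinuousLinearMap.adjoint L vb) + conjFn g vb +
          (⟪vb, r⟫_ℝ : EReal) ≤
        conjFn f (z - ContinuousLinearMap.adjoint L v') + conjFn g v' +
          (⟪v', r⟫_ℝ : EReal)) ∧
      z - ContinuousLinearMap.adjoint L vb ∈ subdiff f xb ∧
      vb ∈ subdiff g (L xb - r) ∧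
      WeakTendsto x xb ∧ WeakTendsto p₁ xb ∧ WeakTendsto v vb ∧ WeakTendsto p₂ vb ∧
      Filter.Tendsto (fun n => x n - p₁ n) Filter.atTop (nhds 0) ∧
      Filter.Tendsto (fun n => v n - p₂ n) Filter.atTop (nhds 0) := by
  have hLpos : (0:ℝ) < ‖L‖ := norm_pos_iff.mpr hL
  have hε0 : 0 < ε := hε.1
  have hε1 : ε ≤ 1 := by
    have h1 : 1 / (‖L‖ + 1) ≤ 1 := by
      rw [div_le_one (by linarith)]
      linarith
    linarith [hε.2]
  have hγ' : ∀ n, ε ≤ γ n ∧ γ n * ‖L‖ ≤ 1 - ε := by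
    intro n
    exact ⟨(hγ n).1, (le_div_iff₀ hLpos).mp (hγ n).2⟩
  have hadjnorm : ∀ w : G, ‖ContinuousLinearMap.adjoint L w‖ ≤ ‖L‖ * ‖w‖ := by
    intro w
    calc ‖ContinuousLinearMap.adjoint L w‖ ≤ ‖ContinuousLinearMap.adjoint L‖ * ‖w‖ :=
          (ContinuousLinearMap.adjoint L).le_opNorm w
      _ = ‖L‖ * ‖w‖ := by rw [LinearIsometryEquiv.norm_map]
  -- properness data
  obtain ⟨xf0, hxf0⟩ := hf.2
  have hαf : f xf0 = ((f xf0).toReal : EReal) := (EReal.coe_toReal hxf0 (hf.1 xf0)).symm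
  obtain ⟨xg0, hxg0⟩ := hg.2
  have hαg : g xg0 = ((g xg0).toReal : EReal) := (EReal.coe_toReal hxg0 (hg.1 xg0)).symm
  have hgsnb : ∀ u : G, conjFn g u ≠ ⊥ := conjFn_ne_bot hαg
  obtain ⟨u₀g, d₀g, hming⟩ := affine_minorant hg hglsc hgcvx
  have hcg : conjFn g u₀g ≤ (d₀g : EReal) := conjFn_le hg.1 hming
  have hgsnt : conjFn g u₀g ≠ ⊤ := fun h => absurd (top_le_iff.mp (h ▸ hcg)) (EReal.coe_ne_top _)
  -- the product space operator data
  set A : WithLp 2 (H × G) → Set (WithLp 2 (H × G)) := fun P =>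
    {W | W.fst + z ∈ subdiff f P.fst ∧ W.snd - r ∈ subdiff (conjFn g) P.snd} with hA
  have hAmono : MonoOp A := by
    intro P W P' W' hW hW'
    have h1 := subdiff_mono hf.1 hxf0 hW.1 hW'.1
    have h2 := subdiff_mono hgsnb hgsnt hW.2 hW'.2
    have e1 : (W.fst + z) - (W'.fst + z) = W.fst - W'.fst := by abel
    have e2 : (W.snd - r) - (W'.snd - r) = W.snd - W'.snd := by abel
    rw [e1] at h1
    rw [e2] at h2
    have hinner : ⟪P - P', W - W'⟫_ℝ = ⟪P.fst - P'.fst, W.fst - W'.fst⟫_ℝ +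
        ⟪P.snd - P'.snd, W.snd - W'.snd⟫_ℝ := WithLp.prod_inner_apply _ _
    rw [hinner]
    linarith
  have hskew : ∀ q : WithLp 2 (H × G), ⟪q, BopK L q⟫_ℝ = 0 := by
    intro q
    have h1 : ⟪q, BopK L q⟫_ℝ = ⟪q.fst, ContinuousLinearMap.adjoint L q.snd⟫_ℝ +
        ⟪q.snd, -(L q.fst)⟫_ℝ := WithLp.prod_inner_apply _ _
    rw [h1, ContinuousLinearMap.adjoint_inner_right, inner_neg_right,
      real_inner_comm (q.snd) (L q.fst)]
    ring
  have hBB : ∀ q : WithLp 2 (H × G), ‖BopK L q‖ ≤ ‖L‖ * ‖q‖ := by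
    intro q
    apply le_of_sq_le_sq'_s19 (norm_nonneg _) (mul_nonneg hLpos.le (norm_nonneg _))
    rw [WithLp.prod_norm_sq_eq_of_L2, BopK_fst, BopK_snd, norm_neg]
    have h1 := hadjnorm q.snd
    have h2 := L.le_opNorm q.fst
    have h3 : ‖q.fst‖ ^ 2 + ‖q.snd‖ ^ 2 = ‖q‖ ^ 2 := (WithLp.prod_norm_sq_eq_of_L2 _).symm
    have h4 : ‖ContinuousLinearMap.adjoint L q.snd‖ ^ 2 ≤ (‖L‖ * ‖q.snd‖) ^ 2 := by
      nlinarith [norm_nonneg (ContinuousLinearMap.adjoint L q.snd), norm_nonneg q.snd,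
        mul_nonneg hLpos.le (norm_nonneg q.snd)]
    have h5 : ‖L q.fst‖ ^ 2 ≤ (‖L‖ * ‖q.fst‖) ^ 2 := by
      nlinarith [norm_nonneg (L q.fst), norm_nonneg q.fst, mul_nonneg hLpos.le (norm_nonneg q.fst)]
    have h6 : (‖L‖ * ‖q‖) ^ 2 = ‖L‖ ^ 2 * ‖q.fst‖ ^ 2 + ‖L‖ ^ 2 * ‖q.snd‖ ^ 2 := by
      rw [mul_pow, ← h3]; ring
    have h7 : (‖L‖ * ‖q.snd‖) ^ 2 = ‖L‖ ^ 2 * ‖q.snd‖ ^ 2 := by ring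
    have h8 : (‖L‖ * ‖q.fst‖) ^ 2 = ‖L‖ ^ 2 * ‖q.fst‖ ^ 2 := by ring
    linarith
  -- resolvents
  set JK : ℕ → WithLp 2 (H × G) → WithLp 2 (H × G) := fun n Y =>
    mkK (proxf n (Y.fst + γ n • z)) (proxg n (Y.snd - γ n • r)) with hJKdef
  have hJK : ∀ n, IsResolvent (γ n) A (JK n) := by
    intro n Y
    obtain ⟨u, hu, h1⟩ := hproxf n (Y.fst + γ n • z)
    obtain ⟨w, hw, h2⟩ := hproxg n (Y.snd - γ n • r)
    refine ⟨mkK (u - z) (w + r), ⟨?_, ?_⟩, ?_⟩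
    · show (u - z) + z ∈ subdiff f (proxf n (Y.fst + γ n • z))
      rw [sub_add_cancel]
      exact hu
    · show (w + r) - r ∈ subdiff (conjFn g) (proxg n (Y.snd - γ n • r))
      rw [add_sub_cancel_right]
      exact hw
    · refine (WithLp.equiv 2 (H × G)).injective (Prod.ext ?_ ?_)
      · show Y.fst = proxf n (Y.fst + γ n • z) + γ n • (u - z)
        have h3 : Y.fst = (Y.fst + γ n • z) - γ n • z := by abel
        rw [h3]
        nth_rewrite 1 [h1]
        rw [smul_sub]
        abel
      · show Y.snd = proxg n (Y.snd - γ n • r) + γ n • (w + r)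
        have h3 : Y.snd = (Y.snd - γ n • r) + γ n • r := by abel
        rw [h3]
        nth_rewrite 1 [h2]
        rw [smul_add]
        abel
  -- a zero of A + B from the range assumption
  obtain ⟨x0, u0, hu0, w0, hw0, hz⟩ := hran
  obtain ⟨β0, hβ0⟩ := subdiff_finite hg.1 hxg0 hw0
  have hflip : L x0 - r ∈ subdiff (conjFn g) w0 := (subdiff_conj_flip hβ0 hw0).2
  have hXb0 : ∃ W ∈ A (mkK x0 w0), W + BopK L (mkK x0 w0) = 0 := by
    refine ⟨mkK (-(ContinuousLinearMap.adjoint L w0)) (L x0), ⟨?_, ?_⟩, ?_⟩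
    · show -(ContinuousLinearMap.adjoint L w0) + z ∈ subdiff f x0
      have : -(ContinuousLinearMap.adjoint L w0) + z = u0 := by rw [hz]; abel
      rw [this]
      exact hu0
    · show L x0 - r ∈ subdiff (conjFn g) w0
      exact hflip
    · refine (WithLp.equiv 2 (H × G)).injective (Prod.ext ?_ ?_)
      · show -(ContinuousLinearMap.adjoint L w0) + ContinuousLinearMap.adjoint L w0 = 0
        exact neg_add_cancel _
      · show L x0 + -(L x0) = 0
        exact add_neg_cancel _
  -- the iterates in the product space
  set XK : ℕ → WithLp 2 (H × G) := fun n => mkK (x n) (v n) with hXKdef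
  set PK : ℕ → WithLp 2 (H × G) := fun n => mkK (p₁ n) (p₂ n) with hPKdef
  set EAk : ℕ → WithLp 2 (H × G) := fun n => mkK (a₁ n) (-(a₂ n)) with hEAdef
  set EBk : ℕ → WithLp 2 (H × G) := fun n => mkK (b₁ n) (b₂ n) with hEBdef
  set ECk : ℕ → WithLp 2 (H × G) := fun n => mkK (c₁ n) (-(c₂ n)) with hECdef
  have hEAsum : Summable (fun n => ‖EAk n‖) := by
    apply Summable.of_nonneg_of_le (fun n => norm_nonneg _) _ (ha₁.add ha₂)
    intro n
    calc ‖EAk n‖ ≤ ‖a₁ n‖ + ‖-(a₂ n)‖ := K_norm_le_add _ _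
      _ = ‖a₁ n‖ + ‖a₂ n‖ := by rw [norm_neg]
  have hEBsum : Summable (fun n => ‖EBk n‖) := by
    apply Summable.of_nonneg_of_le (fun n => norm_nonneg _) _ (hb₁.add hb₂)
    exact fun n => K_norm_le_add _ _
  have hECsum : Summable (fun n => ‖ECk n‖) := by
    apply Summable.of_nonneg_of_le (fun n => norm_nonneg _) _ (hc₁.add hc₂)
    intro n
    calc ‖ECk n‖ ≤ ‖c₁ n‖ + ‖-(c₂ n)‖ := K_norm_le_add _ _
      _ = ‖c₁ n‖ + ‖c₂ n‖ := by rw [norm_neg]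
  have hPK : ∀ n, PK n = JK n (XK n - γ n • (BopK L (XK n) + EAk n)) + EBk n := by
    intro n
    refine (WithLp.equiv 2 (H × G)).injective (Prod.ext ?_ ?_)
    · show p₁ n = proxf n ((x n - γ n • (ContinuousLinearMap.adjoint L (v n) + a₁ n))
        + γ n • z) + b₁ n
      rw [hp₁ n, hy₁ n]
    · show p₂ n = proxg n ((v n - γ n • (-(L (x n)) + -(a₂ n))) - γ n • r) + b₂ n
      rw [hp₂ n, hy₂ n]
      congr 2
      module
  have hXK : ∀ n, XK (n + 1) = XK n - (XK n - γ n • (BopK L (XK n) + EAk n))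
      + (PK n - γ n • (BopK L (PK n) + ECk n)) := by
    intro n
    refine (WithLp.equiv 2 (H × G)).injective (Prod.ext ?_ ?_)
    · show x (n + 1) = x n - (x n - γ n • (ContinuousLinearMap.adjoint L (v n) + a₁ n))
        + (p₁ n - γ n • (ContinuousLinearMap.adjoint L (p₂ n) + c₁ n))
      rw [hx n, hy₁ n, hq₁ n]
    · show v (n + 1) = v n - (v n - γ n • (-(L (x n)) + -(a₂ n)))
        + (p₂ n - γ n • (-(L (p₁ n)) + -(c₂ n)))
      rw [hv n, hy₂ n, hq₂ n]
      module
  -- apply the abstract convergence theorem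
  obtain ⟨Xb, ⟨W, hWA, hWz⟩, hweak, hXPz⟩ :=
    tseng_abstract A hAmono (BopK L) hskew hLpos hBB hε0 hε1 hγ' hJK hXb0
      hEAsum hEBsum hECsum hPK hXK
  set xb : H := Xb.fst with hxbdef
  set vb : G := Xb.snd with hvbdef
  have hW1 : W.fst = -(ContinuousLinearMap.adjoint L vb) := by
    have h1 : (W + BopK L Xb).fst = (0 : WithLp 2 (H × G)).fst := congrArg WithLp.fst hWz
    have h2 : W.fst + ContinuousLinearMap.adjoint L Xb.snd = 0 := h1
    exact eq_neg_of_add_eq_zero_left h2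
  have hW2 : W.snd = L xb := by
    have h1 : (W + BopK L Xb).snd = (0 : WithLp 2 (H × G)).snd := congrArg WithLp.snd hWz
    have h2 : W.snd + -(L Xb.fst) = 0 := h1
    have := eq_neg_of_add_eq_zero_left h2
    rw [neg_neg] at this
    exact this
  have h_subf : z - ContinuousLinearMap.adjoint L vb ∈ subdiff f xb := by
    have h1 := hWA.1
    rw [hW1] at h1
    have e1 : -(ContinuousLinearMap.adjoint L vb) + z = z - ContinuousLinearMap.adjoint L vb := by
      abel
    rw [e1] at h1
    exact h1
  have h_gstar : L xb - r ∈ subdiff (conjFn g) vb := by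
    have h1 := hWA.2
    rw [hW2] at h1
    exact h1
  have h_subg : vb ∈ subdiff g (L xb - r) := mem_subdiff_of_conj hg hglsc hgcvx h_gstar
  -- inner products against test vectors
  have einner1 : ∀ (q : WithLp 2 (H × G)) (w : H), ⟪q, mkK w (0:G)⟫_ℝ = ⟪q.fst, w⟫_ℝ := by
    intro q w
    have h1 : ⟪q, mkK w (0:G)⟫_ℝ = ⟪q.fst, w⟫_ℝ + ⟪q.snd, (0:G)⟫_ℝ := WithLp.prod_inner_apply _ _
    rw [h1, inner_zero_right, add_zero]
  have einner2 : ∀ (q : WithLp 2 (H × G)) (w : G), ⟪q, mkK (0:H) w⟫_ℝ = ⟪q.snd, w⟫_ℝ := by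
    intro q w
    have h1 : ⟪q, mkK (0:H) w⟫_ℝ = ⟪q.fst, (0:H)⟫_ℝ + ⟪q.snd, w⟫_ℝ := WithLp.prod_inner_apply _ _
    rw [h1, inner_zero_right, zero_add]
  have hweakx : WeakTendsto x xb := by
    intro w
    have h := hweak (mkK w (0:G))
    have hfun : (fun n => ⟪XK n, mkK w (0:G)⟫_ℝ) = fun n => ⟪x n, w⟫_ℝ :=
      funext fun n => einner1 (XK n) w
    rw [hfun, einner1 Xb w] at h
    exact h
  have hweakv : WeakTendsto v vb := by
    intro w
    have h := hweak (mkK (0:H) w)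
    have hfun : (fun n => ⟪XK n, mkK (0:H) w⟫_ℝ) = fun n => ⟪v n, w⟫_ℝ :=
      funext fun n => einner2 (XK n) w
    rw [hfun, einner2 Xb w] at h
    exact h
  -- strong convergence of the component differences
  have hXPnorm : Tendsto (fun n => ‖XK n - PK n‖) atTop (𝓝 0) := by
    rw [← tendsto_zero_iff_norm_tendsto_zero]
    exact hXPz
  have hxp1 : Tendsto (fun n => x n - p₁ n) atTop (𝓝 0) := by
    apply squeeze_zero_norm (a := fun n => ‖XK n - PK n‖) _ hXPnorm
    intro n
    exact K_norm_fst_le (XK n - PK n)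
  have hvp2 : Tendsto (fun n => v n - p₂ n) atTop (𝓝 0) := by
    apply squeeze_zero_norm (a := fun n => ‖XK n - PK n‖) _ hXPnorm
    intro n
    exact K_norm_snd_le (XK n - PK n)
  have hweakp₁ : WeakTendsto p₁ xb := by
    intro w
    have h1 := hweakx w
    have h2 : Tendsto (fun n => ⟪x n - p₁ n, w⟫_ℝ) atTop (𝓝 0) := by
      apply squeeze_zero_norm (a := fun n => ‖x n - p₁ n‖ * ‖w‖)
      · exact fun n => abs_real_inner_le_norm _ _
      · have := ((tendsto_zero_iff_norm_tendsto_zero).mp hxp1).mul_const ‖w‖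
        simpa using this
    have h3 := h1.sub h2
    have h4 : (fun n => ⟪x n, w⟫_ℝ - ⟪x n - p₁ n, w⟫_ℝ) = fun n => ⟪p₁ n, w⟫_ℝ := by
      funext n
      rw [inner_sub_left]
      ring
    rw [h4, sub_zero] at h3
    exact h3
  have hweakp₂ : WeakTendsto p₂ vb := by
    intro w
    have h1 := hweakv w
    have h2 : Tendsto (fun n => ⟪v n - p₂ n, w⟫_ℝ) atTop (𝓝 0) := by
      apply squeeze_zero_norm (a := fun n => ‖v n - p₂ n‖ * ‖w‖)
      · exact fun n => abs_real_inner_le_norm _ _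
      · have := ((tendsto_zero_iff_norm_tendsto_zero).mp hvp2).mul_const ‖w‖
        simpa using this
    have h3 := h1.sub h2
    have h4 : (fun n => ⟪v n, w⟫_ℝ - ⟪v n - p₂ n, w⟫_ℝ) = fun n => ⟪p₂ n, w⟫_ℝ := by
      funext n
      rw [inner_sub_left]
      ring
    rw [h4, sub_zero] at h3
    exact h3
  exact ⟨xb, vb, primal_opt hf hg L z r h_subf h_subg, dual_opt hf hg L z r h_subf h_subg,
    h_subf, h_subg, hweakx, hweakp₁, hweakv, hweakp₂, hxp1, hvp2⟩
end
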